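/- arXiv:math/0611377 — 5 statements merged into one kernel-verified Lean document; each statement's English description precedes it below -/
import Mathlib

section
/- Let u ∈ G(ℝ^d), u ≠ 0, be homogeneous of degree α ∈ ℝ (i.e. for every real λ > 0, u(λx) = λ^α u(x) holds in G(ℝ^d)). Then α is a non-negative integer. -/
open Set Filter Topology MeasureTheory

noncomputable section

variable {E F : Type*} [NormedAddCommGroup E] [NormedSpace ℝ E]
  [NormedAddCommGroup F] [NormedSpace ℝ F]

/-- A net of smooth functions, indexed by `ε ∈ (0,1]`, is *moderate* on the open set `Ω`:
all iterated derivatives are `O(ε^{-N})` on compact subsets, for some `N`. -/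
def IsModerate (Ω : Set E) (u : ℝ → E → F) : Prop :=
  (∀ ε ∈ Set.Ioc (0:ℝ) 1, ContDiffOn ℝ (⊤:ℕ∞) (u ε) Ω) ∧
  ∀ K : Set E, IsCompact K → K ⊆ Ω → ∀ n : ℕ, ∃ N : ℕ, ∃ C : ℝ, ∃ ε₀ : ℝ, 0 < ε₀ ∧
    ∀ ε : ℝ, 0 < ε → ε < ε₀ → ∀ x ∈ K,
      ‖iteratedFDerivWithin ℝ n (u ε) Ω x‖ ≤ C * ε ^ (-(N:ℤ))

/-- A net of smooth functions is *negligible* on `Ω`: all iterated derivatives are `O(ε^m)`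
on compact subsets, for every `m`. -/
def IsNegligible (Ω : Set E) (u : ℝ → E → F) : Prop :=
  (∀ ε ∈ Set.Ioc (0:ℝ) 1, ContDiffOn ℝ (⊤:ℕ∞) (u ε) Ω) ∧
  ∀ K : Set E, IsCompact K → K ⊆ Ω → ∀ n : ℕ, ∀ m : ℕ, ∃ C : ℝ, ∃ ε₀ : ℝ, 0 < ε₀ ∧
    ∀ ε : ℝ, 0 < ε → ε < ε₀ → ∀ x ∈ K,
      ‖iteratedFDerivWithin ℝ n (u ε) Ω x‖ ≤ C * ε ^ m

/-- A net of numbers is *moderate*: `O(ε^{-N})` for some `N`. -/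
def NumModerate (c : ℝ → F) : Prop :=
  ∃ N : ℕ, ∃ C : ℝ, ∃ ε₀ : ℝ, 0 < ε₀ ∧ ∀ ε : ℝ, 0 < ε → ε < ε₀ → ‖c ε‖ ≤ C * ε ^ (-(N:ℤ))

/-- A net of numbers is *negligible*: `O(ε^m)` for every `m`. -/
def NumNegligible (c : ℝ → F) : Prop :=
  ∀ m : ℕ, ∃ C : ℝ, ∃ ε₀ : ℝ, 0 < ε₀ ∧ ∀ ε : ℝ, 0 < ε → ε < ε₀ → ‖c ε‖ ≤ C * ε ^ m

/-- A net of points is a representative of a *compactly supported generalized point* of `Ω`. -/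
def CompactlySupportedPoint (Ω : Set E) (a : ℝ → E) : Prop :=
  ∃ K : Set E, IsCompact K ∧ K ⊆ Ω ∧ ∃ ε₀ : ℝ, 0 < ε₀ ∧ ∀ ε : ℝ, 0 < ε → ε < ε₀ → a ε ∈ K

/-- The partial order on generalized reals, on representatives: `a ≤ b` iff `b - a` has a
representative with all terms nonnegative, i.e. `a ε + n ε ≤ b ε` for some negligible `n`. -/
def TildeLe (a b : ℝ → ℝ) : Prop :=
  ∃ n : ℝ → ℝ, NumNegligible n ∧ ∀ ε ∈ Set.Ioc (0:ℝ) 1, a ε + n ε ≤ b ε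

/-- Strict order `a << b`: `b - a` is strictly positive, i.e. `b ε - a ε > ε^m` for some `m`
and all small `ε`. -/
def TildeLt (a b : ℝ → ℝ) : Prop :=
  ∃ m : ℕ, ∃ ε₀ : ℝ, 0 < ε₀ ∧ ∀ ε : ℝ, 0 < ε → ε < ε₀ → a ε + ε ^ m < b ε


lemma aux_sub {i : ℕ} {f g : E → F} {x : E} (hf : ContDiff ℝ i f) (hg : ContDiff ℝ i g) :
    iteratedFDeriv ℝ i (fun y => f y - g y) x =
      iteratedFDeriv ℝ i f x - iteratedFDeriv ℝ i g x := by
  have h1 : (fun y => f y - g y) = (fun y => f y + (-g) y) := by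
    funext y; simp [sub_eq_add_neg]
  rw [h1, iteratedFDeriv_add_apply' hf.contDiffAt (by exact hg.neg.contDiffAt), iteratedFDeriv_neg_apply,
    sub_eq_add_neg]

lemma aux_scale {f : E → F} (hf : ContDiff ℝ (⊤:ℕ∞) f) (c : ℝ) (i : ℕ) (x : E) :
    iteratedFDeriv ℝ i (fun y => f (c • y)) x = c ^ i • iteratedFDeriv ℝ i f (c • x) := by
  have h := (c • ContinuousLinearMap.id ℝ E).iteratedFDeriv_comp_right hf x
    (i := i) (by exact_mod_cast le_top)
  have hg : (fun y => f (c • y)) = f ∘ (c • ContinuousLinearMap.id ℝ E) := by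
    funext y; simp
  rw [hg, h]
  ext m
  have := (iteratedFDeriv ℝ i f ((c • ContinuousLinearMap.id ℝ E) x)).map_smul_univ
    (fun _ : Fin i => c) m
  simp only [ContinuousMultilinearMap.compContinuousLinearMap_apply,
    ContinuousLinearMap.smul_apply, ContinuousLinearMap.id_apply,
    ContinuousMultilinearMap.smul_apply]
  simp only [ContinuousLinearMap.smul_apply, ContinuousLinearMap.id_apply] at this
  rw [this]
  simp [Finset.prod_const]

lemma aux_hom_deriv {f : E → ℂ} (hf : ContDiff ℝ (⊤:ℕ∞) f) (lam : ℝ) (c : ℂ) (j : ℕ) (x : E) :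
    iteratedFDeriv ℝ j (fun y => f (lam • y) - c * f y) x
      = lam ^ j • iteratedFDeriv ℝ j f (lam • x) - c • iteratedFDeriv ℝ j f x := by
  have h1 : ContDiff ℝ j (fun y => f (lam • y)) := by
    have := hf.comp (contDiff_id.const_smul lam : ContDiff ℝ (⊤:ℕ∞) (fun y : E => lam • y))
    exact this.of_le (by exact_mod_cast le_top)
  have h2 : ContDiff ℝ j (fun y => c * f y) :=
    contDiff_const.mul (hf.of_le (by exact_mod_cast le_top))
  rw [aux_sub h1 h2, aux_scale hf lam j x]
  congr 1
  have h3 : (fun y => c * f y) = (fun y => c • f y) := by funext y; simp [smul_eq_mul]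
  rw [h3, iteratedFDeriv_const_smul_apply' (hf.of_le (by exact_mod_cast le_top)).contDiffAt]

lemma aux_real_smul_complexF {ι : Type*} [Fintype ι] (r : ℝ)
    (M : ContinuousMultilinearMap ℝ (fun _ : ι => E) ℂ) :
    r • M = ((r : ℂ)) • M := by
  rw [show ((r:ℝ):ℂ) = r • (1:ℂ) by simp [Complex.real_smul], smul_assoc, one_smul]

lemma aux_taylor {f : E → F} (hf : ContDiff ℝ (⊤:ℕ∞) f) {ρ : ℝ} (hρ0 : 0 ≤ ρ) (hρ1 : ρ ≤ 1) :
    ∀ (p n : ℕ) (M : ℝ),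
      (∀ w ∈ Metric.closedBall (0:E) ρ, ‖iteratedFDeriv ℝ (n+p) f w‖ ≤ M) →
      ∀ z ∈ Metric.closedBall (0:E) ρ,
        ‖iteratedFDeriv ℝ n f z‖
          ≤ (∑ i ∈ Finset.range p, ‖iteratedFDeriv ℝ (n+i) f 0‖) + ρ^p * M := by
  intro p
  induction p with
  | zero =>
    intro n M hM z hz
    simpa using hM z hz
  | succ p IH =>
    intro n M hM z hz
    have h0 : (0:E) ∈ Metric.closedBall (0:E) ρ := by simp [hρ0]
    have hM' : ∀ w ∈ Metric.closedBall (0:E) ρ,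
        ‖iteratedFDeriv ℝ ((n+1)+p) f w‖ ≤ M := by
      intro w hw
      have : (n+1)+p = n+(p+1) := by omega
      rw [this]; exact hM w hw
    have hK := IH (n+1) M hM'
    set S : ℝ := ∑ i ∈ Finset.range p, ‖iteratedFDeriv ℝ ((n+1)+i) f 0‖ with hS
    have hM0 : 0 ≤ M := le_trans (norm_nonneg _) (hM 0 h0)
    have hS0 : 0 ≤ S := Finset.sum_nonneg fun _ _ => norm_nonneg _
    have hdiff : ∀ w ∈ Metric.closedBall (0:E) ρ,
        DifferentiableAt ℝ (iteratedFDeriv ℝ n f) w := fun w _ =>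
      (hf.differentiable_iteratedFDeriv (by first | exact_mod_cast WithTop.coe_lt_top (n:ℕ) | simp | exact Ne.lt_top (by simp))) w
    have hbound : ∀ w ∈ Metric.closedBall (0:E) ρ,
        ‖fderiv ℝ (iteratedFDeriv ℝ n f) w‖ ≤ S + ρ^p * M := by
      intro w hw
      rw [norm_fderiv_iteratedFDeriv]
      exact hK w hw
    have hmv := Convex.norm_image_sub_le_of_norm_fderiv_le hdiff hbound
      (convex_closedBall (0:E) ρ) h0 hz
    have hz' : ‖z‖ ≤ ρ := by simpa [Metric.mem_closedBall] using hz
    have h4 : ‖iteratedFDeriv ℝ n f z‖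
        ≤ ‖iteratedFDeriv ℝ n f 0‖ + (S + ρ^p * M) * ρ := by
      have := norm_sub_norm_le (iteratedFDeriv ℝ n f z) (iteratedFDeriv ℝ n f 0)
      have h5 : ‖z - 0‖ ≤ ρ := by simpa using hz'
      nlinarith [hmv, norm_nonneg (iteratedFDeriv ℝ n f z - iteratedFDeriv ℝ n f 0),
        mul_le_mul_of_nonneg_left h5 (by positivity : (0:ℝ) ≤ S + ρ^p * M)]
    have hsum : ∑ i ∈ Finset.range (p+1), ‖iteratedFDeriv ℝ (n+i) f 0‖
        = (∑ i ∈ Finset.range p, ‖iteratedFDeriv ℝ (n+(i+1)) f 0‖)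
          + ‖iteratedFDeriv ℝ (n+0) f 0‖ := Finset.sum_range_succ' _ p
    have hsum2 : (∑ i ∈ Finset.range p, ‖iteratedFDeriv ℝ (n+(i+1)) f 0‖) = S := by
      apply Finset.sum_congr rfl
      intro i _
      rw [show n+(i+1) = n+1+i from by omega]
    have h6 : (S + ρ^p * M) * ρ ≤ S + ρ^(p+1) * M := by
      have h7 : ρ^p * M * ρ = ρ^(p+1) * M := by ring
      nlinarith [mul_le_of_le_one_right hS0 hρ1]
    calc ‖iteratedFDeriv ℝ n f z‖ ≤ ‖iteratedFDeriv ℝ n f 0‖ + (S + ρ^p * M) * ρ := h4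
      _ ≤ ‖iteratedFDeriv ℝ n f 0‖ + (S + ρ^(p+1) * M) := by linarith
      _ = (∑ i ∈ Finset.range (p+1), ‖iteratedFDeriv ℝ (n+i) f 0‖) + ρ^(p+1) * M := by
          rw [hsum, hsum2]; simp only [Nat.add_zero]
          ring


lemma aux_iter {g : E → F} {A B R : ℝ} (hA : 1 ≤ A) (hB : 0 ≤ B) (hR : 0 ≤ R)
    (hstep : ∀ x ∈ Metric.closedBall (0:E) R, ‖g x‖ ≤ A * ‖g ((2⁻¹:ℝ) • x)‖ + B) :
    ∀ (k : ℕ) (T : ℝ), 0 ≤ T →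
      (∀ z ∈ Metric.closedBall (0:E) ((2⁻¹:ℝ)^k * R), ‖g z‖ ≤ T) →
      ∀ x ∈ Metric.closedBall (0:E) R, ‖g x‖ ≤ A^k * T + k * A^k * B := by
  intro k
  induction k with
  | zero =>
    intro T hT h x hx
    simpa using h x (by simpa using hx)
  | succ k IH =>
    intro T hT h x hx
    have hA0 : (0:ℝ) < A := lt_of_lt_of_le one_pos hA
    have hAk : (1:ℝ) ≤ A^k := one_le_pow₀ hA
    have hsub : ∀ z ∈ Metric.closedBall (0:E) ((2⁻¹:ℝ)^k * R), ‖g z‖ ≤ A * T + B := by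
      intro z hz
      have hzn : ‖z‖ ≤ (2⁻¹:ℝ)^k * R := by simpa [Metric.mem_closedBall] using hz
      have hz' : z ∈ Metric.closedBall (0:E) R := by
        have h1 : (2⁻¹:ℝ)^k ≤ 1 := pow_le_one₀ (by norm_num) (by norm_num)
        have : (2⁻¹:ℝ)^k * R ≤ R := by nlinarith
        simp only [Metric.mem_closedBall, dist_zero_right]
        linarith
      have h2 : (2⁻¹:ℝ) • z ∈ Metric.closedBall (0:E) ((2⁻¹:ℝ)^(k+1) * R) := by
        simp only [Metric.mem_closedBall, dist_zero_right, norm_smul]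
        have : ‖(2⁻¹:ℝ)‖ = (2⁻¹:ℝ) := by norm_num
        rw [this, pow_succ]
        calc (2⁻¹:ℝ) * ‖z‖ ≤ 2⁻¹ * ((2⁻¹:ℝ)^k * R) := by
              apply mul_le_mul_of_nonneg_left hzn (by norm_num)
          _ = (2⁻¹:ℝ)^k * 2⁻¹ * R := by ring
      calc ‖g z‖ ≤ A * ‖g ((2⁻¹:ℝ) • z)‖ + B := hstep z hz'
        _ ≤ A * T + B := by
            have := h _ h2
            nlinarith
    have := IH (A*T+B) (by nlinarith) hsub x hx
    have hAk' : A^k ≤ A^(k+1) := pow_le_pow_right₀ hA (Nat.le_succ k)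
    have hkk : (k:ℝ) ≥ 0 := Nat.cast_nonneg k
    calc ‖g x‖ ≤ A^k * (A*T+B) + k * A^k * B := this
      _ = A^(k+1) * T + A^k * B + k * A^k * B := by ring
      _ ≤ A^(k+1) * T + A^(k+1) * B + k * A^(k+1) * B := by
          have h1 : A^k * B ≤ A^(k+1) * B := mul_le_mul_of_nonneg_right hAk' hB
          have h2 : (k:ℝ) * A^k * B ≤ (k:ℝ) * A^(k+1) * B := by
            apply mul_le_mul_of_nonneg_right _ hB
            exact mul_le_mul_of_nonneg_left hAk' hkk
          linarith
      _ = A^(k+1) * T + (↑(k+1)) * A^(k+1) * B := by push_cast; ring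

set_option maxHeartbeats 1000000 in
lemma aux_key {E F : Type} [NormedAddCommGroup E] [NormedSpace ℝ E]
  [NormedAddCommGroup F] [NormedSpace ℝ F] {g : ℝ → E → F} {P N : ℕ} {R : ℝ} (hR : 1 ≤ R)
    (hhalf : ∀ m₁ : ℕ, ∃ C ε₀ : ℝ, 0 < ε₀ ∧ ∀ ε : ℝ, 0 < ε → ε < ε₀ →
      ∀ x ∈ Metric.closedBall (0:E) R,
        ‖g ε x‖ ≤ 2^P * ‖g ε ((2⁻¹:ℝ) • x)‖ + C * ε ^ m₁)
    (hsmall : ∀ m₂ : ℕ, ∃ C ε₀ : ℝ, 0 < ε₀ ∧ ∀ ε : ℝ, 0 < ε → ε < ε₀ →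
      ∀ ρ : ℝ, 0 < ρ → ρ ≤ 1 → ∀ z ∈ Metric.closedBall (0:E) ρ,
        ‖g ε z‖ ≤ C * ε ^ m₂ + ρ^(P+1) * (C * (ε^N)⁻¹))
    (m : ℕ) :
    ∃ C ε₀ : ℝ, 0 < ε₀ ∧ ∀ ε : ℝ, 0 < ε → ε < ε₀ →
      ∀ x ∈ Metric.closedBall (0:E) R, ‖g ε x‖ ≤ C * ε ^ m := by
  set s : ℕ := N + m + 1 with hs
  set c₀ : ℕ := ⌈R⌉₊ with hc₀
  obtain ⟨C₁, ε₁, hε₁, hH⟩ := hhalf (s*P + m + 2)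
  obtain ⟨C₂, ε₂, hε₂, hSm⟩ := hsmall (s*P + m)
  set D₁ : ℝ := max C₁ 0 with hD₁
  set D₂ : ℝ := max C₂ 0 with hD₂
  have hD₁0 : 0 ≤ D₁ := le_max_right _ _
  have hD₂0 : 0 ≤ D₂ := le_max_right _ _
  refine ⟨2^((c₀+1)*P) * (2*D₂ + (2*(s:ℝ)+1+(c₀:ℝ)) * D₁), min ε₁ (min ε₂ 1),
    lt_min hε₁ (lt_min hε₂ one_pos), ?_⟩
  intro ε hε hεlt x hx
  have hε1 : ε < 1 := lt_of_lt_of_le hεlt (le_trans (min_le_right _ _) (min_le_right _ _))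
  have hεle1 : ε ≤ 1 := hε1.le
  have hinv1 : (1:ℝ) ≤ ε⁻¹ := by
    have h1 : ε * ε⁻¹ = 1 := mul_inv_cancel₀ hε.ne'
    nlinarith [inv_pos.2 hε]
  set L : ℝ := Real.logb 2 ε⁻¹ with hL
  have hL0 : 0 ≤ L := Real.logb_nonneg one_lt_two hinv1
  have h2L : (2:ℝ) ^ L = ε⁻¹ := Real.rpow_logb two_pos (by norm_num) (by positivity)
  have hx₀0 : 0 ≤ (s:ℝ) * L := by positivity
  set k : ℕ := ⌈(s:ℝ) * L⌉₊ + c₀ with hk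
  have h2x₀ : (2:ℝ) ^ ((s:ℝ) * L) = (ε^s)⁻¹ := by
    rw [mul_comm, Real.rpow_mul (by norm_num : (0:ℝ) ≤ 2), h2L, Real.rpow_natCast, inv_pow]
  -- (b1)
  have hceil : ((2:ℝ))⁻¹ ^ (⌈(s:ℝ) * L⌉₊) ≤ ε^s := by
    have h1 : ((2:ℝ))⁻¹ ^ (⌈(s:ℝ)*L⌉₊) = (2:ℝ) ^ (-((⌈(s:ℝ)*L⌉₊ : ℕ):ℝ)) := by
      rw [Real.rpow_neg (by norm_num), Real.rpow_natCast, inv_pow]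
    have h2 : (2:ℝ) ^ (-((⌈(s:ℝ)*L⌉₊ : ℕ):ℝ)) ≤ (2:ℝ) ^ (-((s:ℝ)*L)) :=
      Real.rpow_le_rpow_of_exponent_le one_le_two (neg_le_neg (Nat.le_ceil _))
    have h3 : (2:ℝ) ^ (-((s:ℝ)*L)) = ε^s := by
      rw [Real.rpow_neg (by norm_num), h2x₀, inv_inv]
    rw [h1]; rw [h3] at h2; exact h2
  have hc₀R : ((2:ℝ))⁻¹ ^ c₀ * R ≤ 1 := by
    have h2 : R ≤ (c₀:ℝ) := Nat.le_ceil R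
    have h3 : (c₀:ℝ) ≤ (2:ℝ)^c₀ := by
      have := (Nat.lt_two_pow_self (n := c₀)).le
      exact_mod_cast this
    rw [inv_pow, inv_mul_le_iff₀ (by positivity)]
    linarith
  set ρ : ℝ := ((2:ℝ)⁻¹)^k * R with hρ
  have hρpos : 0 < ρ := by positivity
  have hρεs : ρ ≤ ε^s := by
    have h1 : ρ = ((2:ℝ)⁻¹)^(⌈(s:ℝ)*L⌉₊) * (((2:ℝ)⁻¹)^c₀ * R) := by
      rw [hρ, hk, pow_add]; ring
    rw [h1]
    calc ((2:ℝ)⁻¹)^(⌈(s:ℝ)*L⌉₊) * (((2:ℝ)⁻¹)^c₀ * R)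
        ≤ ε^s * 1 := by
          apply mul_le_mul hceil hc₀R (by positivity) (by positivity)
      _ = ε^s := mul_one _
  have hεs1 : ε^s ≤ 1 := pow_le_one₀ hε.le hεle1
  have hρ1 : ρ ≤ 1 := le_trans hρεs hεs1
  -- (b2)
  have hkle : (k:ℝ) ≤ (s:ℝ)*L + 1 + c₀ := by
    have h1 := Nat.ceil_lt_add_one hx₀0
    have h2 : (k:ℝ) = (⌈(s:ℝ)*L⌉₊ : ℝ) + (c₀:ℝ) := by rw [hk]; push_cast; ring
    linarith
  have h2k : (2:ℝ)^k ≤ 2^(c₀+1) * (ε^s)⁻¹ := by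
    have h1 : (2:ℝ)^((k:ℕ):ℝ) ≤ (2:ℝ)^((s:ℝ)*L + (1+(c₀:ℝ))) :=
      Real.rpow_le_rpow_of_exponent_le one_le_two (by linarith)
    have h2 : (2:ℝ)^((s:ℝ)*L + (1+(c₀:ℝ))) = (ε^s)⁻¹ * 2^(c₀+1) := by
      rw [Real.rpow_add two_pos, h2x₀]
      congr 1
      rw [show (1+(c₀:ℝ)) = (((c₀+1:ℕ)):ℝ) by push_cast; ring, Real.rpow_natCast]
    rw [Real.rpow_natCast] at h1
    rw [h2] at h1
    linarith
  have hF1 : ((2:ℝ)^P)^k * ε^(s*P) ≤ 2^((c₀+1)*P) := by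
    have h1 : ((2:ℝ)^P)^k = ((2:ℝ)^k)^P := by rw [← pow_mul, ← pow_mul, Nat.mul_comm]
    have h2 : ((2:ℝ)^k)^P ≤ ((2:ℝ)^(c₀+1) * (ε^s)⁻¹)^P :=
      pow_le_pow_left₀ (by positivity) h2k P
    have h3 : ((2:ℝ)^(c₀+1) * (ε^s)⁻¹)^P = 2^((c₀+1)*P) * (ε^(s*P))⁻¹ := by
      rw [mul_pow, ← pow_mul, inv_pow, ← pow_mul]
    calc ((2:ℝ)^P)^k * ε^(s*P) ≤ (2^((c₀+1)*P) * (ε^(s*P))⁻¹) * ε^(s*P) := by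
          apply mul_le_mul_of_nonneg_right _ (by positivity)
          rw [h1, ← h3]; exact h2
      _ = 2^((c₀+1)*P) := by
          field_simp
  -- (b3)
  have hlogb : L ≤ 2 * ε⁻¹ := by
    have h1 : Real.log ε⁻¹ ≤ ε⁻¹ :=
      le_trans (Real.log_le_sub_one_of_pos (by positivity)) (by linarith)
    have h2 : (0.6931471803 : ℝ) < Real.log 2 := Real.log_two_gt_d9
    rw [hL, Real.logb, div_le_iff₀ (by linarith)]
    nlinarith
  have hF3 : (k:ℝ) * ε ≤ 2*(s:ℝ)+1+(c₀:ℝ) := by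
    have h1 : (k:ℝ) ≤ (s:ℝ) * (2*ε⁻¹) + 1 + (c₀:ℝ) := by
      have h2 := mul_le_mul_of_nonneg_left hlogb (by positivity : (0:ℝ) ≤ (s:ℝ))
      linarith
    have h2 : (k:ℝ) * ε ≤ ((s:ℝ)*(2*ε⁻¹) + 1 + (c₀:ℝ)) * ε := mul_le_mul_of_nonneg_right h1 hε.le
    have h4 : ε⁻¹ * ε = 1 := inv_mul_cancel₀ hε.ne'
    have h5 : (1+(c₀:ℝ))*ε ≤ 1+(c₀:ℝ) := by nlinarith [(Nat.cast_nonneg c₀ : (0:ℝ) ≤ (c₀:ℝ))]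
    nlinarith
  -- iteration
  set A : ℝ := 2^P with hA'
  have hA : (1:ℝ) ≤ A := one_le_pow₀ one_le_two
  set B : ℝ := D₁ * ε^(s*P+m+2) with hB'
  have hB : 0 ≤ B := by positivity
  have hstep : ∀ y ∈ Metric.closedBall (0:E) R, ‖g ε y‖ ≤ A * ‖g ε ((2⁻¹:ℝ) • y)‖ + B := by
    intro y hy
    have h1 := hH ε hε (lt_of_lt_of_le hεlt (min_le_left _ _)) y hy
    have h2 : C₁ * ε^(s*P+m+2) ≤ B := by
      rw [hB']
      apply mul_le_mul_of_nonneg_right (le_max_left _ _) (by positivity)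
    linarith
  set T : ℝ := D₂ * ε^(s*P+m) + ρ^(P+1) * (D₂ * (ε^N)⁻¹) with hT'
  have hT0 : 0 ≤ T := by positivity
  have hTb : ∀ z ∈ Metric.closedBall (0:E) ((2⁻¹:ℝ)^k * R), ‖g ε z‖ ≤ T := by
    intro z hz
    have h0 := hSm ε hε (lt_of_lt_of_le hεlt (le_trans (min_le_right _ _) (min_le_left _ _)))
      ρ hρpos hρ1 z (by rw [hρ]; exact hz)
    have h1 : C₂ * ε^(s*P+m) ≤ D₂ * ε^(s*P+m) :=
      mul_le_mul_of_nonneg_right (le_max_left _ _) (by positivity)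
    have h2 : ρ^(P+1) * (C₂ * (ε^N)⁻¹) ≤ ρ^(P+1) * (D₂ * (ε^N)⁻¹) := by
      apply mul_le_mul_of_nonneg_left _ (by positivity)
      exact mul_le_mul_of_nonneg_right (le_max_left _ _) (by positivity)
    rw [hT']
    linarith
  have hmain := aux_iter hA hB (by linarith : (0:ℝ) ≤ R) hstep k T hT0 hTb x hx
  -- final numeric estimate
  have hεm1 : ε^(m+1) ≤ ε^m := pow_le_pow_of_le_one hε.le hεle1 (Nat.le_succ m)
  have e1 : A^k * (D₂ * ε^(s*P+m)) ≤ 2^((c₀+1)*P) * D₂ * ε^m := by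
    have h1 : ε^(s*P+m) = ε^(s*P) * ε^m := pow_add ε _ _
    calc A^k * (D₂ * ε^(s*P+m)) = (A^k * ε^(s*P)) * (D₂ * ε^m) := by rw [h1]; ring
      _ ≤ 2^((c₀+1)*P) * (D₂ * ε^m) := mul_le_mul_of_nonneg_right hF1 (by positivity)
      _ = 2^((c₀+1)*P) * D₂ * ε^m := by ring
  have e2 : A^k * (ρ^(P+1) * (D₂ * (ε^N)⁻¹)) ≤ 2^((c₀+1)*P) * D₂ * ε^m := by
    have hρp : ρ^(P+1) ≤ (ε^s)^(P+1) := pow_le_pow_left₀ hρpos.le hρεs (P+1)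
    have hsp : (ε^s)^(P+1) = ε^(s*P) * (ε^N * ε^(m+1)) := by
      rw [← pow_mul, show s*(P+1) = s*P + (N+(m+1)) from by rw [hs]; ring, pow_add, pow_add]
    have h1 : A^k * (ρ^(P+1) * (D₂ * (ε^N)⁻¹))
        ≤ A^k * ((ε^(s*P) * (ε^N * ε^(m+1))) * (D₂ * (ε^N)⁻¹)) := by
      apply mul_le_mul_of_nonneg_left _ (by positivity)
      apply mul_le_mul_of_nonneg_right _ (by positivity)
      exact le_trans hρp (le_of_eq hsp)
    have h2 : (ε^(s*P) * (ε^N * ε^(m+1))) * (D₂ * (ε^N)⁻¹) = ε^(s*P) * (D₂ * ε^(m+1)) := by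
      have hεN : (ε^N) ≠ 0 := by positivity
      field_simp
    have h3 : A^k * (ε^(s*P) * (D₂ * ε^(m+1))) = (A^k * ε^(s*P)) * (D₂ * ε^(m+1)) := by ring
    have h4 : (A^k * ε^(s*P)) * (D₂ * ε^(m+1)) ≤ 2^((c₀+1)*P) * (D₂ * ε^(m+1)) :=
      mul_le_mul_of_nonneg_right hF1 (by positivity)
    have h5 : 2^((c₀+1)*P) * (D₂ * ε^(m+1)) ≤ 2^((c₀+1)*P) * (D₂ * ε^m) := by
      apply mul_le_mul_of_nonneg_left _ (by positivity)
      exact mul_le_mul_of_nonneg_left hεm1 hD₂0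
    calc A^k * (ρ^(P+1) * (D₂ * (ε^N)⁻¹))
        ≤ A^k * ((ε^(s*P) * (ε^N * ε^(m+1))) * (D₂ * (ε^N)⁻¹)) := h1
      _ = (A^k * ε^(s*P)) * (D₂ * ε^(m+1)) := by rw [h2]; ring
      _ ≤ 2^((c₀+1)*P) * (D₂ * ε^(m+1)) := h4
      _ ≤ 2^((c₀+1)*P) * (D₂ * ε^m) := h5
      _ = 2^((c₀+1)*P) * D₂ * ε^m := by ring
  have e3 : (k:ℝ) * A^k * B ≤ 2^((c₀+1)*P) * ((2*(s:ℝ)+1+(c₀:ℝ)) * D₁) * ε^m := by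
    have h1 : ε^(s*P+m+2) = ε * (ε^(s*P) * ε^(m+1)) := by
      rw [show s*P+m+2 = 1 + (s*P + (m+1)) from by omega, pow_add, pow_add, pow_one]
    have h2 : (k:ℝ) * A^k * B = ((k:ℝ)*ε) * ((A^k * ε^(s*P)) * (D₁ * ε^(m+1))) := by
      rw [hB', h1]; ring
    rw [h2]
    have h3 : (A^k * ε^(s*P)) * (D₁ * ε^(m+1)) ≤ 2^((c₀+1)*P) * (D₁ * ε^m) := by
      calc (A^k * ε^(s*P)) * (D₁ * ε^(m+1)) ≤ 2^((c₀+1)*P) * (D₁ * ε^(m+1)) :=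
            mul_le_mul_of_nonneg_right hF1 (by positivity)
        _ ≤ 2^((c₀+1)*P) * (D₁ * ε^m) := by
            apply mul_le_mul_of_nonneg_left _ (by positivity)
            exact mul_le_mul_of_nonneg_left hεm1 hD₁0
    calc ((k:ℝ)*ε) * ((A^k * ε^(s*P)) * (D₁ * ε^(m+1)))
        ≤ (2*(s:ℝ)+1+(c₀:ℝ)) * (2^((c₀+1)*P) * (D₁ * ε^m)) := by
          apply mul_le_mul hF3 h3 (by positivity) (by positivity)
      _ = 2^((c₀+1)*P) * ((2*(s:ℝ)+1+(c₀:ℝ)) * D₁) * ε^m := by ring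
  have hexp : A^k * T + (k:ℝ) * A^k * B
      = A^k * (D₂ * ε^(s*P+m)) + A^k * (ρ^(P+1) * (D₂ * (ε^N)⁻¹)) + (k:ℝ) * A^k * B := by
    rw [hT']; ring
  have hfinal : 2^((c₀+1)*P) * D₂ * ε^m + 2^((c₀+1)*P) * D₂ * ε^m
      + 2^((c₀+1)*P) * ((2*(s:ℝ)+1+(c₀:ℝ)) * D₁) * ε^m
      = 2^((c₀+1)*P) * (2*D₂ + (2*(s:ℝ)+1+(c₀:ℝ)) * D₁) * ε^m := by ring
  calc ‖g ε x‖ ≤ A^k * T + (k:ℝ) * A^k * B := hmain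
    _ = _ := hexp
    _ ≤ _ := by rw [← hfinal] at *; exact add_le_add (add_le_add e1 e2) e3

set_option maxHeartbeats 2000000 in
/-- if a nonzero generalized function on ℝ^d is homogeneous of degree `α`,
then `α` is a non-negative integer. -/
theorem statement_9
    (d : ℕ) (α : ℝ) (u : ℝ → EuclideanSpace ℝ (Fin d) → ℂ)
    (hu : IsModerate (Set.univ : Set (EuclideanSpace ℝ (Fin d))) u)
    (hne : ¬ IsNegligible (Set.univ : Set (EuclideanSpace ℝ (Fin d))) u)
    (hhom : ∀ lam : ℝ, 0 < lam →
      IsNegligible (Set.univ : Set (EuclideanSpace ℝ (Fin d)))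
        (fun ε x => u ε (lam • x) - ((lam ^ α : ℝ) : ℂ) * u ε x)) :
    ∃ k : ℕ, α = (k : ℝ) := by
  by_contra hcon
  push_neg at hcon
  apply hne
  refine ⟨hu.1, ?_⟩
  intro K hK _ n m
  have hsm : ∀ ε : ℝ, 0 < ε → ε ≤ 1 → ContDiff ℝ (⊤:ℕ∞) (u ε) := by
    intro ε h1 h2
    have := hu.1 ε ⟨h1, h2⟩
    rwa [contDiffOn_univ] at this
  obtain ⟨r, hr⟩ := hK.isBounded.subset_closedBall 0
  set R : ℝ := max r 1 with hR'
  have hR1 : 1 ≤ R := le_max_right _ _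
  have hKR : K ⊆ Metric.closedBall 0 R :=
    hr.trans (Metric.closedBall_subset_closedBall (le_max_left _ _))
  set P : ℕ := ⌈|α|⌉₊ with hP'
  -- point values at 0 are negligible
  have hpt : ∀ j m' : ℕ, ∃ C ε₀ : ℝ, 0 < ε₀ ∧ ∀ ε : ℝ, 0 < ε → ε < ε₀ →
      ‖iteratedFDeriv ℝ j (u ε) 0‖ ≤ C * ε ^ m' := by
    intro j m'
    obtain ⟨C, ε₀, hε₀, hbd⟩ := (hhom 2 two_pos).2 {0} isCompact_singleton
      (Set.subset_univ _) j m'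
    set δ : ℝ := 2^j - (2:ℝ)^α with hδ'
    have hδ : δ ≠ 0 := by
      intro h
      have h0 : (2:ℝ)^j = (2:ℝ)^α := by
        have := sub_eq_zero.1 h
        linarith [this]
      have h1 : (2:ℝ)^((j:ℕ):ℝ) = (2:ℝ)^α := by
        rw [Real.rpow_natCast]; exact h0
      have h2 : ((j:ℕ):ℝ) = α := by
        have hle1 := (Real.rpow_le_rpow_left_iff one_lt_two).1 h1.le
        have hle2 := (Real.rpow_le_rpow_left_iff one_lt_two).1 h1.ge
        linarith
      exact hcon j h2.symm
    refine ⟨C / |δ|, min ε₀ 1, lt_min hε₀ one_pos, ?_⟩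
    intro ε hε hεlt
    have hε1 : ε ≤ 1 := le_of_lt (lt_of_lt_of_le hεlt (min_le_right _ _))
    have hb := hbd ε hε (lt_of_lt_of_le hεlt (min_le_left _ _)) 0 rfl
    simp only [iteratedFDerivWithin_univ] at hb
    have hid := aux_hom_deriv (hsm ε hε hε1) 2 (((2:ℝ) ^ α : ℝ) : ℂ) j
      (0 : EuclideanSpace ℝ (Fin d))
    rw [smul_zero] at hid
    rw [hid] at hb
    set G := iteratedFDeriv ℝ j (u ε) (0 : EuclideanSpace ℝ (Fin d)) with hG'
    have hcast : (2:ℝ)^j • G - (((2:ℝ)^α : ℝ):ℂ) • G = ((δ : ℝ):ℂ) • G := by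
      rw [aux_real_smul_complexF ((2:ℝ)^j) G, ← sub_smul]
      congr 1
      rw [hδ']
      push_cast
      ring
    rw [hcast, norm_smul, Complex.norm_real, Real.norm_eq_abs] at hb
    have hδpos : 0 < |δ| := abs_pos.2 hδ
    rw [div_mul_eq_mul_div, le_div_iff₀ hδpos, mul_comm]
    exact hb
  -- halving estimate
  have hhalfK : ∀ m₁ : ℕ, ∃ C ε₀ : ℝ, 0 < ε₀ ∧ ∀ ε : ℝ, 0 < ε → ε < ε₀ →
      ∀ x ∈ Metric.closedBall (0 : EuclideanSpace ℝ (Fin d)) R,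
        ‖iteratedFDeriv ℝ n (u ε) x‖
          ≤ 2^P * ‖iteratedFDeriv ℝ n (u ε) ((2⁻¹:ℝ) • x)‖ + C * ε ^ m₁ := by
    intro m₁
    obtain ⟨C, ε₀, hε₀, hbd⟩ := (hhom 2⁻¹ (by norm_num)).2 (Metric.closedBall 0 R)
      (isCompact_closedBall _ _) (Set.subset_univ _) n m₁
    refine ⟨2^P * max C 0, min ε₀ 1, lt_min hε₀ one_pos, ?_⟩
    intro ε hε hεlt x hx
    have hε1 : ε ≤ 1 := le_of_lt (lt_of_lt_of_le hεlt (min_le_right _ _))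
    have hb := hbd ε hε (lt_of_lt_of_le hεlt (min_le_left _ _)) x hx
    simp only [iteratedFDerivWithin_univ] at hb
    rw [aux_hom_deriv (hsm ε hε hε1) 2⁻¹ ((((2:ℝ)⁻¹) ^ α : ℝ) : ℂ) n x] at hb
    set G1 := iteratedFDeriv ℝ n (u ε) ((2⁻¹:ℝ) • x) with hG1
    set G2 := iteratedFDeriv ℝ n (u ε) x with hG2
    set h : ℝ := ((2:ℝ)⁻¹)^α with hh'
    have hhpos : 0 < h := Real.rpow_pos_of_pos (by norm_num) α
    have hCm : C * ε ^ m₁ ≤ max C 0 * ε ^ m₁ :=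
      mul_le_mul_of_nonneg_right (le_max_left _ _) (by positivity)
    have hf1 : h * ‖G2‖ ≤ ‖G1‖ + max C 0 * ε ^ m₁ := by
      have t1 : ‖((h : ℝ):ℂ) • G2‖ = h * ‖G2‖ := by
        rw [norm_smul, Complex.norm_real, Real.norm_eq_abs, abs_of_pos hhpos]
      have t2 : ‖(2⁻¹:ℝ)^n • G1‖ ≤ ‖G1‖ := by
        rw [norm_smul, Real.norm_eq_abs]
        have habs : |(2⁻¹:ℝ)^n| ≤ 1 := by
          rw [abs_of_nonneg (by positivity)]
          exact pow_le_one₀ (by norm_num) (by norm_num)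
        nlinarith [norm_nonneg G1]
      have t3 := norm_sub_le ((2⁻¹:ℝ)^n • G1) (((2⁻¹:ℝ)^n • G1) - ((h : ℝ):ℂ) • G2)
      rw [sub_sub_cancel] at t3
      rw [t1] at t3
      linarith
    have hinveq : h⁻¹ = (2:ℝ)^α := by
      rw [hh', Real.inv_rpow (by norm_num : (0:ℝ) ≤ 2), inv_inv]
    have hinv : h⁻¹ ≤ (2:ℝ)^P := by
      rw [hinveq, ← Real.rpow_natCast 2 P]
      apply Real.rpow_le_rpow_of_exponent_le one_le_two
      exact le_trans (le_abs_self α) (Nat.le_ceil |α|)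
    have k1 : ‖G2‖ = h⁻¹ * (h * ‖G2‖) := by field_simp
    calc ‖G2‖ = h⁻¹ * (h * ‖G2‖) := k1
      _ ≤ h⁻¹ * (‖G1‖ + max C 0 * ε ^ m₁) := by
          apply mul_le_mul_of_nonneg_left hf1 (by positivity)
      _ ≤ 2^P * (‖G1‖ + max C 0 * ε ^ m₁) := by
          apply mul_le_mul_of_nonneg_right hinv (by positivity)
      _ = 2^P * ‖G1‖ + (2^P * max C 0) * ε ^ m₁ := by ring
  -- moderateness at order n + (P+1)
  obtain ⟨N, C₂, ε₂, hε₂, hmodbd⟩ := hu.2 (Metric.closedBall 0 R) (isCompact_closedBall _ _)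
    (Set.subset_univ _) (n + (P+1))
  simp only [iteratedFDerivWithin_univ] at hmodbd
  choose Cpt εpt hεpt hptbd using hpt
  have hsmallK : ∀ m₂ : ℕ, ∃ C ε₀ : ℝ, 0 < ε₀ ∧ ∀ ε : ℝ, 0 < ε → ε < ε₀ →
      ∀ ρ : ℝ, 0 < ρ → ρ ≤ 1 → ∀ z ∈ Metric.closedBall (0:EuclideanSpace ℝ (Fin d)) ρ,
        ‖iteratedFDeriv ℝ n (u ε) z‖ ≤ C * ε ^ m₂ + ρ^(P+1) * (C * (ε^N)⁻¹) := by
    intro m₂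
    have hne' : (Finset.range (P+1)).Nonempty := Finset.nonempty_range_iff.2 (Nat.succ_ne_zero P)
    set εinf : ℝ := (Finset.range (P+1)).inf' hne' (fun i => εpt (n+i) m₂) with hεinf'
    have hεinf : 0 < εinf := by
      rw [hεinf', Finset.lt_inf'_iff]
      intro i _
      exact hεpt (n+i) m₂
    set Csum : ℝ := ∑ i ∈ Finset.range (P+1), max (Cpt (n+i) m₂) 0 with hCsum'
    set Cfin : ℝ := max Csum (max C₂ 0) with hCfin'
    refine ⟨Cfin, min ε₂ (min εinf 1), lt_min hε₂ (lt_min hεinf one_pos), ?_⟩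
    intro ε hε hεlt ρ hρ0 hρ1 z hz
    have hε1 : ε ≤ 1 :=
      le_of_lt (lt_of_lt_of_le hεlt (le_trans (min_le_right _ _) (min_le_right _ _)))
    have hM : ∀ w ∈ Metric.closedBall (0:EuclideanSpace ℝ (Fin d)) ρ,
        ‖iteratedFDeriv ℝ (n+(P+1)) (u ε) w‖ ≤ max C₂ 0 * (ε^N)⁻¹ := by
      intro w hw
      have hw' : w ∈ Metric.closedBall (0:EuclideanSpace ℝ (Fin d)) R :=
        Metric.closedBall_subset_closedBall (le_trans hρ1 hR1) hw
      have h1 := hmodbd ε hε (lt_of_lt_of_le hεlt (min_le_left _ _)) w hw'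
      have h2 : ε ^ (-(N:ℤ)) = (ε^N)⁻¹ := by
        rw [zpow_neg, zpow_natCast]
      rw [h2] at h1
      calc ‖iteratedFDeriv ℝ (n+(P+1)) (u ε) w‖ ≤ C₂ * (ε^N)⁻¹ := h1
        _ ≤ max C₂ 0 * (ε^N)⁻¹ :=
            mul_le_mul_of_nonneg_right (le_max_left _ _) (by positivity)
    have htay := aux_taylor (hsm ε hε hε1) hρ0.le hρ1 (P+1) n (max C₂ 0 * (ε^N)⁻¹) hM z hz
    have hsum : ∑ i ∈ Finset.range (P+1), ‖iteratedFDeriv ℝ (n+i) (u ε) 0‖ ≤ Csum * ε^m₂ := by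
      rw [hCsum', Finset.sum_mul]
      apply Finset.sum_le_sum
      intro i hi
      have hεlt' : ε < εpt (n+i) m₂ :=
        lt_of_lt_of_le hεlt (le_trans (le_trans (min_le_right _ _) (min_le_left _ _))
          (Finset.inf'_le _ hi))
      calc ‖iteratedFDeriv ℝ (n+i) (u ε) 0‖ ≤ Cpt (n+i) m₂ * ε^m₂ := hptbd (n+i) m₂ ε hε hεlt'
        _ ≤ max (Cpt (n+i) m₂) 0 * ε^m₂ :=
            mul_le_mul_of_nonneg_right (le_max_left _ _) (by positivity)
    have hfin1 : Csum * ε^m₂ ≤ Cfin * ε^m₂ :=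
      mul_le_mul_of_nonneg_right (le_max_left _ _) (by positivity)
    have hfin2 : ρ^(P+1) * (max C₂ 0 * (ε^N)⁻¹) ≤ ρ^(P+1) * (Cfin * (ε^N)⁻¹) := by
      apply mul_le_mul_of_nonneg_left _ (by positivity)
      exact mul_le_mul_of_nonneg_right (le_max_right _ _) (by positivity)
    linarith [htay]
  obtain ⟨C, ε₀, hε₀, hbd⟩ := aux_key (g := fun ε => iteratedFDeriv ℝ n (u ε)) hR1 hhalfK hsmallK m
  refine ⟨C, ε₀, hε₀, ?_⟩
  intro ε hε hεlt x hxK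
  rw [iteratedFDerivWithin_univ]
  exact hbd ε hε hεlt x (hKR hxK)
end
end

section
/- For each k ∈ ℕ₀, the generalized function x ↦ x^k is not a zero divisor in G(ℝ): for every u ∈ G(ℝ), if x^k·u = 0 in G(ℝ) (i.e. the net (x^k u_ε(x))_ε is negligible), then u = 0 in G(ℝ). -/
open Set Filter Topology MeasureTheory

noncomputable section

variable {E F : Type*} [NormedAddCommGroup E] [NormedSpace ℝ E]
  [NormedAddCommGroup F] [NormedSpace ℝ F]

/- smoothness of iterated derivatives -/
lemma my_smooth_iteratedDeriv {f : ℝ → ℂ} (hf : ContDiff ℝ (⊤:ℕ∞) f) (n : ℕ) :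
    ContDiff ℝ (⊤:ℕ∞) (iteratedDeriv n f) := by
  rw [iteratedDeriv_eq_iterate]
  exact ContDiff.iterate_deriv n hf

lemma my_hasDerivAt_iteratedDeriv {f : ℝ → ℂ} (hf : ContDiff ℝ (⊤:ℕ∞) f) (n : ℕ) (x : ℝ) :
    HasDerivAt (iteratedDeriv n f) (iteratedDeriv (n + 1) f x) x := by
  have h := ((my_smooth_iteratedDeriv hf n).differentiable (by simp)).differentiableAt
    (x := x) |>.hasDerivAt
  rw [iteratedDeriv_succ]
  exact h

/- Leibniz-type identity for multiplication by x -/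
lemma my_iteratedDeriv_mul_x {v : ℝ → ℂ} (hv : ContDiff ℝ (⊤:ℕ∞) v) (n : ℕ) :
    iteratedDeriv n (fun y : ℝ => (y:ℂ) * v y)
      = fun x : ℝ => (x:ℂ) * iteratedDeriv n v x + n * iteratedDeriv (n - 1) v x := by
  induction n with
  | zero => funext x; simp
  | succ n ih =>
    rw [iteratedDeriv_succ, ih]
    funext x
    have hx : HasDerivAt (fun y : ℝ => (y:ℂ)) 1 x := by
      exact Complex.ofRealCLM.hasDerivAt (x := x)
    have h1 : HasDerivAt (fun y : ℝ => (y:ℂ) * iteratedDeriv n v y)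
        (1 * iteratedDeriv n v x + (x:ℂ) * iteratedDeriv (n+1) v x) x :=
      hx.mul (my_hasDerivAt_iteratedDeriv hv n x)
    have h2 : HasDerivAt (fun y : ℝ => (n:ℂ) * iteratedDeriv (n-1) v y)
        ((n:ℂ) * iteratedDeriv (n-1+1) v x) x :=
      (my_hasDerivAt_iteratedDeriv hv (n-1) x).const_mul _
    have h3 : deriv (fun y : ℝ => (y:ℂ) * iteratedDeriv n v y + (n:ℂ) * iteratedDeriv (n-1) v y) x = _ :=
      (h1.add h2).deriv
    rw [h3]
    rcases Nat.eq_zero_or_pos n with hn | hn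
    · subst hn; simp; ring
    · rw [Nat.succ_sub_one, Nat.sub_add_cancel hn]
      push_cast
      ring

/- the key division estimate -/
lemma my_div_step {g : ℝ → ℂ} (hg : Differentiable ℝ g) {R δ A B : ℝ}
    (hR : 0 ≤ R) (hδ0 : 0 < δ) (hδ1 : δ ≤ 1)
    (hA : ∀ x ∈ Set.Icc (-(R+1)) (R+1), ‖deriv g x‖ ≤ A)
    (hB : ∀ x ∈ Set.Icc (-(R+1)) (R+1), ‖(x:ℂ) * g x‖ ≤ B) :
    ∀ x ∈ Set.Icc (-R) R, ‖g x‖ ≤ B / δ + A * δ := by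
  have hA0 : 0 ≤ A := le_trans (norm_nonneg _) (hA 0 (by constructor <;> nlinarith))
  have key : ∀ z ∈ Set.Icc (-(R+1)) (R+1), δ ≤ |z| → ‖g z‖ ≤ B / δ := by
    intro z hz hδz
    have hz0 : 0 < |z| := lt_of_lt_of_le hδ0 hδz
    have h1 : |z| * ‖g z‖ ≤ B := by
      have := hB z hz
      rwa [norm_mul, Complex.norm_real, Real.norm_eq_abs] at this
    rw [le_div_iff₀ hδ0]
    calc ‖g z‖ * δ ≤ ‖g z‖ * |z| := by
          exact mul_le_mul_of_nonneg_left hδz (norm_nonneg _)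
      _ = |z| * ‖g z‖ := mul_comm _ _
      _ ≤ B := h1
  intro x hx
  have hx' : x ∈ Set.Icc (-(R+1)) (R+1) := by
    constructor <;> [linarith [hx.1]; linarith [hx.2]]
  by_cases hbig : δ ≤ |x|
  · have := key x hx' hbig
    have hδA : 0 ≤ A * δ := mul_nonneg hA0 hδ0.le
    linarith
  · push_neg at hbig
    set y := if 0 ≤ x then x + δ else x - δ with hy
    have hxabs : |x| ≤ R := abs_le.mpr hx
    have hyI : y ∈ Set.Icc (-(R+1)) (R+1) := by
      rcases le_or_gt 0 x with h0 | h0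
      · simp only [hy, if_pos h0]
        constructor <;> [linarith [hx.1]; linarith [hx.2]]
      · simp only [hy, if_neg (not_le.2 h0)]
        constructor <;> [linarith [hx.1]; linarith [hx.2]]
    have hyδ : δ ≤ |y| := by
      rcases le_or_gt 0 x with h0 | h0
      · simp only [hy, if_pos h0]
        rw [abs_of_nonneg (by linarith)]; linarith
      · simp only [hy, if_neg (not_le.2 h0)]
        rw [abs_of_nonpos (by linarith)]; linarith
    have hgy := key y hyI hyδ
    have hmv : ‖g x - g y‖ ≤ A * δ := by
      have := (convex_Icc (-(R+1)) (R+1)).norm_image_sub_le_of_norm_deriv_le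
        (fun z _ => hg.differentiableAt) hA hyI hx'
      have hxy : ‖x - y‖ = δ := by
        rcases le_or_gt 0 x with h0 | h0
        · rw [hy, if_pos h0, Real.norm_eq_abs, show x - (x + δ) = -δ by ring, abs_neg,
            abs_of_pos hδ0]
        · rw [hy, if_neg (not_le.mpr h0), Real.norm_eq_abs, show x - (x - δ) = δ by ring,
            abs_of_pos hδ0]
      rw [hxy] at this
      exact this
    calc ‖g x‖ = ‖g y + (g x - g y)‖ := by ring_nf
    _ ≤ ‖g y‖ + ‖g x - g y‖ := norm_add_le _ _
    _ ≤ B / δ + A * δ := add_le_add hgy hmv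

lemma my_e1 {ε : ℝ} (hε : ε ≠ 0) (m N : ℕ) : ε ^ (-(N:ℤ)) * ε ^ (m + N) = ε ^ m := by
  calc ε ^ (-(N:ℤ)) * ε ^ (m + N) = ε ^ (m + N) * (ε ^ N)⁻¹ := by
        rw [zpow_neg, zpow_natCast, mul_comm]
    _ = ε ^ (m + N - N) := (pow_sub₀ ε hε (by omega)).symm
    _ = ε ^ m := by rw [Nat.add_sub_cancel]

lemma my_e2 {ε : ℝ} (hε : ε ≠ 0) (a b : ℕ) (h : b ≤ a) : ε ^ a / ε ^ b = ε ^ (a - b) := by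
  rw [pow_sub₀ ε hε h, div_eq_mul_inv]

lemma my_mod_bound {v : ℝ → ℝ → ℂ} (hv : IsModerate (Set.univ : Set ℝ) v) (R : ℝ) (n : ℕ) :
    ∃ N : ℕ, ∃ C : ℝ, ∃ ε₀ : ℝ, 0 < ε₀ ∧ 0 ≤ C ∧ ∀ ε, 0 < ε → ε < ε₀ →
      ∀ x ∈ Set.Icc (-R) R, ‖iteratedDeriv n (v ε) x‖ ≤ C * ε ^ (-(N:ℤ)) := by
  obtain ⟨N, C, ε₀, hε₀, hb⟩ := hv.2 (Set.Icc (-R) R) isCompact_Icc (Set.subset_univ _) n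
  refine ⟨N, max C 0, ε₀, hε₀, le_max_right _ _, fun ε hε hε' x hx => ?_⟩
  have h2 := hb ε hε hε' x hx
  rw [iteratedFDerivWithin_univ, norm_iteratedFDeriv_eq_norm_iteratedDeriv] at h2
  exact h2.trans (mul_le_mul_of_nonneg_right (le_max_left _ _) (zpow_nonneg hε.le _))

lemma my_neg_bound {v : ℝ → ℝ → ℂ} (hv : IsNegligible (Set.univ : Set ℝ) v) (R : ℝ) (n m : ℕ) :
    ∃ C : ℝ, ∃ ε₀ : ℝ, 0 < ε₀ ∧ 0 ≤ C ∧ ∀ ε, 0 < ε → ε < ε₀ →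
      ∀ x ∈ Set.Icc (-R) R, ‖iteratedDeriv n (v ε) x‖ ≤ C * ε ^ m := by
  obtain ⟨C, ε₀, hε₀, hb⟩ := hv.2 (Set.Icc (-R) R) isCompact_Icc (Set.subset_univ _) n m
  refine ⟨max C 0, ε₀, hε₀, le_max_right _ _, fun ε hε hε' x hx => ?_⟩
  have h2 := hb ε hε hε' x hx
  rw [iteratedFDerivWithin_univ, norm_iteratedFDeriv_eq_norm_iteratedDeriv] at h2
  exact h2.trans (mul_le_mul_of_nonneg_right (le_max_left _ _) (pow_nonneg hε.le _))

lemma my_core {g : ℝ → ℂ} (hg : Differentiable ℝ g) {R : ℝ} (hR : 0 ≤ R) {ε : ℝ}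
    (hε : 0 < ε) (hε1 : ε < 1) (N m : ℕ) {C₁ C₂ : ℝ}
    (hA : ∀ x ∈ Set.Icc (-(R+1)) (R+1), ‖deriv g x‖ ≤ C₁ * ε ^ (-(N:ℤ)))
    (hB : ∀ x ∈ Set.Icc (-(R+1)) (R+1), ‖(x:ℂ) * g x‖ ≤ C₂ * ε ^ (m + (m + N))) :
    ∀ x ∈ Set.Icc (-R) R, ‖g x‖ ≤ (C₂ + C₁) * ε ^ m := by
  have hne : ε ≠ 0 := hε.ne'
  have hδ0 : 0 < ε ^ (m + N) := pow_pos hε _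
  have hδ1 : ε ^ (m + N) ≤ 1 := pow_le_one₀ hε.le hε1.le
  have h := my_div_step hg hR hδ0 hδ1 hA hB
  intro x hx
  refine (h x hx).trans_eq ?_
  have e2 : C₂ * ε ^ (m + (m + N)) / ε ^ (m + N) = C₂ * ε ^ m := by
    rw [mul_div_assoc, my_e2 hne _ _ (by omega), show m + (m + N) - (m + N) = m from by omega]
  have e1 : C₁ * ε ^ (-(N:ℤ)) * ε ^ (m + N) = C₁ * ε ^ m := by
    rw [mul_assoc, my_e1 hne]
  rw [e2, e1, add_mul]

lemma my_radius {K : Set ℝ} (hK : IsCompact K) :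
    ∃ R : ℝ, 0 ≤ R ∧ K ⊆ Set.Icc (-R) R := by
  obtain ⟨r, hr⟩ := hK.isBounded.subset_closedBall 0
  refine ⟨max r 0, le_max_right _ _, fun x hx => ?_⟩
  have h2 := hr hx
  rw [Metric.mem_closedBall, Real.dist_eq, sub_zero] at h2
  exact Set.mem_Icc.mpr (abs_le.mp (h2.trans (le_max_left _ _)))

lemma my_step1 {v : ℝ → ℝ → ℂ} (hv : IsModerate (Set.univ : Set ℝ) v)
    (hw : IsNegligible (Set.univ : Set ℝ) (fun (ε : ℝ) (x : ℝ) => (x:ℂ) * v ε x)) :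
    IsNegligible (Set.univ : Set ℝ) v := by
  have hsm : ∀ ε : ℝ, 0 < ε → ε ≤ 1 → ContDiff ℝ (⊤:ℕ∞) (v ε) :=
    fun ε h1 h2 => contDiffOn_univ.mp (hv.1 ε ⟨h1, h2⟩)
  have claim : ∀ n : ℕ, ∀ R : ℝ, 0 ≤ R → ∀ m : ℕ, ∃ C ε₀ : ℝ, 0 < ε₀ ∧ ε₀ ≤ 1 ∧
      ∀ ε, 0 < ε → ε < ε₀ → ∀ x ∈ Set.Icc (-R) R,
        ‖iteratedDeriv n (v ε) x‖ ≤ C * ε ^ m := by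
    intro n
    induction n with
    | zero =>
      intro R hR m
      obtain ⟨N, C₁, ε₁, hε₁, hC₁, hb₁⟩ := my_mod_bound hv (R+1) 1
      obtain ⟨C₂, ε₂, hε₂, hC₂, hb₂⟩ := my_neg_bound hw (R+1) 0 (m + (m + N))
      refine ⟨C₂ + C₁, min ε₁ (min ε₂ 1), lt_min hε₁ (lt_min hε₂ one_pos),
        (min_le_right _ _).trans (min_le_right _ _), fun ε hε hε' x hx => ?_⟩
      have hεlt1 : ε < 1 := lt_of_lt_of_le hε' ((min_le_right _ _).trans (min_le_right _ _))
      have hd : Differentiable ℝ (v ε) := (hsm ε hε hεlt1.le).differentiable (by simp)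
      have hA : ∀ y ∈ Set.Icc (-(R+1)) (R+1), ‖deriv (v ε) y‖ ≤ C₁ * ε ^ (-(N:ℤ)) := by
        intro y hy
        have h2 := hb₁ ε hε (hε'.trans_le (min_le_left _ _)) y hy
        rwa [iteratedDeriv_one] at h2
      have hB : ∀ y ∈ Set.Icc (-(R+1)) (R+1),
          ‖(y:ℂ) * v ε y‖ ≤ C₂ * ε ^ (m + (m + N)) := by
        intro y hy
        have h2 := hb₂ ε hε (hε'.trans_le ((min_le_right _ _).trans (min_le_left _ _))) y hy
        simpa using h2
      have h3 := my_core hd hR hε hεlt1 N m hA hB x hx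
      simpa using h3
    | succ n ih =>
      intro R hR m
      obtain ⟨N, C₁, ε₁, hε₁, hC₁, hb₁⟩ := my_mod_bound hv (R+1) (n+2)
      obtain ⟨C₂, ε₂, hε₂, hC₂, hb₂⟩ := my_neg_bound hw (R+1) (n+1) (m + (m + N))
      obtain ⟨C₃, ε₃, hε₃, hε₃1, hb₃⟩ := ih (R+1) (by linarith) (m + (m + N))
      refine ⟨(C₂ + (n+1) * C₃) + C₁, min ε₁ (min ε₂ ε₃), lt_min hε₁ (lt_min hε₂ hε₃),
        (min_le_right _ _).trans ((min_le_right _ _).trans hε₃1), fun ε hε hε' x hx => ?_⟩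
      have hεlt1 : ε < 1 :=
        lt_of_lt_of_le hε' ((min_le_right _ _).trans ((min_le_right _ _).trans hε₃1))
      have hsmv := hsm ε hε hεlt1.le
      have hd : Differentiable ℝ (iteratedDeriv (n+1) (v ε)) :=
        (my_smooth_iteratedDeriv hsmv (n+1)).differentiable (by simp)
      have hA : ∀ y ∈ Set.Icc (-(R+1)) (R+1),
          ‖deriv (iteratedDeriv (n+1) (v ε)) y‖ ≤ C₁ * ε ^ (-(N:ℤ)) := by
        intro y hy
        have h2 := hb₁ ε hε (hε'.trans_le (min_le_left _ _)) y hy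
        rw [← iteratedDeriv_succ]
        exact h2
      have hB : ∀ y ∈ Set.Icc (-(R+1)) (R+1),
          ‖(y:ℂ) * iteratedDeriv (n+1) (v ε) y‖ ≤ (C₂ + (n+1) * C₃) * ε ^ (m + (m + N)) := by
        intro y hy
        have hid := congrFun (my_iteratedDeriv_mul_x hsmv (n+1)) y
        simp only [Nat.add_sub_cancel] at hid
        have h2 := hb₂ ε hε (hε'.trans_le ((min_le_right _ _).trans (min_le_left _ _))) y hy
        have h3 := hb₃ ε hε (hε'.trans_le ((min_le_right _ _).trans (min_le_right _ _))) y hy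
        have heq : (y:ℂ) * iteratedDeriv (n+1) (v ε) y
            = iteratedDeriv (n+1) (fun z : ℝ => (z:ℂ) * v ε z) y
              - ((n+1 : ℕ) : ℂ) * iteratedDeriv n (v ε) y := by
          rw [hid]; push_cast; ring
        rw [heq]
        have hn1 : ‖((n+1 : ℕ) : ℂ) * iteratedDeriv n (v ε) y‖
            = ((n : ℝ) + 1) * ‖iteratedDeriv n (v ε) y‖ := by
          rw [norm_mul, Complex.norm_natCast]; push_cast; ring
        calc ‖_ - _‖ ≤ ‖iteratedDeriv (n+1) (fun z : ℝ => (z:ℂ) * v ε z) y‖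
              + ‖((n+1 : ℕ) : ℂ) * iteratedDeriv n (v ε) y‖ := norm_sub_le _ _
          _ ≤ C₂ * ε ^ (m + (m + N)) + ((n : ℝ) + 1) * (C₃ * ε ^ (m + (m + N))) := by
              rw [hn1]
              exact add_le_add (by simpa using h2)
                (mul_le_mul_of_nonneg_left h3 (by positivity))
          _ = (C₂ + (n+1) * C₃) * ε ^ (m + (m + N)) := by push_cast; ring
      exact my_core hd hR hε hεlt1 N m hA hB x hx
  refine ⟨hv.1, fun K hK _ n m => ?_⟩
  obtain ⟨R, hR, hKR⟩ := my_radius hK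
  obtain ⟨C, ε₀, hε₀, _, hb⟩ := claim n R hR m
  refine ⟨C, ε₀, hε₀, fun ε hε hε' x hx => ?_⟩
  rw [iteratedFDerivWithin_univ, norm_iteratedFDeriv_eq_norm_iteratedDeriv]
  exact hb ε hε hε' x (hKR hx)

lemma my_mulx_moderate {v : ℝ → ℝ → ℂ} (hv : IsModerate (Set.univ : Set ℝ) v) :
    IsModerate (Set.univ : Set ℝ) (fun (ε : ℝ) (x : ℝ) => (x:ℂ) * v ε x) := by
  refine ⟨fun ε hε => (Complex.ofRealCLM.contDiff.mul
      (contDiffOn_univ.mp (hv.1 ε hε))).contDiffOn, fun K hK _ n => ?_⟩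
  obtain ⟨R, hR, hKR⟩ := my_radius hK
  obtain ⟨N₁, C₁, ε₁, hε₁, hC₁, hb₁⟩ := my_mod_bound hv R n
  obtain ⟨N₂, C₂, ε₂, hε₂, hC₂, hb₂⟩ := my_mod_bound hv R (n-1)
  refine ⟨N₁ + N₂, R * C₁ + n * C₂, min ε₁ (min ε₂ 1),
    lt_min hε₁ (lt_min hε₂ one_pos), fun ε hε hε' x hx => ?_⟩
  have hεlt1 : ε < 1 := lt_of_lt_of_le hε' ((min_le_right _ _).trans (min_le_right _ _))
  have hx' := hKR hx
  have hsmv := contDiffOn_univ.mp (hv.1 ε ⟨hε, hεlt1.le⟩)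
  rw [iteratedFDerivWithin_univ, norm_iteratedFDeriv_eq_norm_iteratedDeriv]
  have hid := congrFun (my_iteratedDeriv_mul_x hsmv n) x
  have hzle : ∀ M : ℕ, M ≤ N₁ + N₂ → ε ^ (-(M:ℤ)) ≤ ε ^ (-((N₁+N₂ : ℕ):ℤ)) := by
    intro M hM
    exact zpow_le_zpow_right_of_le_one₀ hε hεlt1.le (by push_cast; omega)
  have hxR : |x| ≤ R := abs_le.mpr hx'
  have h1 := hb₁ ε hε (hε'.trans_le (min_le_left _ _)) x hx'
  have h2 := hb₂ ε hε (hε'.trans_le ((min_le_right _ _).trans (min_le_left _ _))) x hx'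
  calc ‖iteratedDeriv n ((fun (ε : ℝ) (x : ℝ) => (x:ℂ) * v ε x) ε) x‖
      = ‖(x:ℂ) * iteratedDeriv n (v ε) x + (n:ℂ) * iteratedDeriv (n-1) (v ε) x‖ := by
        rw [show ((fun (ε : ℝ) (x : ℝ) => (x:ℂ) * v ε x) ε) = fun y : ℝ => (y:ℂ) * v ε y from rfl, hid]
    _ ≤ ‖(x:ℂ) * iteratedDeriv n (v ε) x‖ + ‖(n:ℂ) * iteratedDeriv (n-1) (v ε) x‖ :=
        norm_add_le _ _
    _ = |x| * ‖iteratedDeriv n (v ε) x‖ + (n:ℝ) * ‖iteratedDeriv (n-1) (v ε) x‖ := by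
        rw [norm_mul, norm_mul, Complex.norm_real, Real.norm_eq_abs, Complex.norm_natCast]
    _ ≤ R * (C₁ * ε ^ (-(N₁:ℤ))) + (n:ℝ) * (C₂ * ε ^ (-(N₂:ℤ))) := by
        exact add_le_add (mul_le_mul hxR h1 (norm_nonneg _) hR)
          (mul_le_mul_of_nonneg_left h2 (Nat.cast_nonneg n))
    _ ≤ R * (C₁ * ε ^ (-((N₁+N₂:ℕ):ℤ))) + (n:ℝ) * (C₂ * ε ^ (-((N₁+N₂:ℕ):ℤ))) := by
        exact add_le_add
          (mul_le_mul_of_nonneg_left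
            (mul_le_mul_of_nonneg_left (hzle N₁ (by omega)) hC₁) hR)
          (mul_le_mul_of_nonneg_left
            (mul_le_mul_of_nonneg_left (hzle N₂ (by omega)) hC₂) (Nat.cast_nonneg n))
    _ = (R * C₁ + n * C₂) * ε ^ (-((N₁+N₂:ℕ):ℤ)) := by ring


/-- for every `k ∈ ℕ₀`, `x^k` is not a zero divisor in `G(ℝ)`. -/
theorem statement_12
    (k : ℕ) (u : ℝ → ℝ → ℂ)
    (hu : IsModerate (Set.univ : Set ℝ) u)
    (h : IsNegligible (Set.univ : Set ℝ) (fun ε x => (x : ℂ) ^ k * u ε x)) :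
    IsNegligible (Set.univ : Set ℝ) u := by
  induction k generalizing u with
  | zero =>
    have heq : (fun (ε : ℝ) (x : ℝ) => (x:ℂ) ^ 0 * u ε x) = u := by funext ε x; simp
    rwa [heq] at h
  | succ k ih =>
    have hv : IsModerate (Set.univ : Set ℝ) (fun (ε : ℝ) (x : ℝ) => (x:ℂ) * u ε x) :=
      my_mulx_moderate hu
    have heq : (fun (ε : ℝ) (x : ℝ) => (x:ℂ) ^ (k+1) * u ε x)
        = fun (ε : ℝ) (x : ℝ) => (x:ℂ) ^ k * ((x:ℂ) * u ε x) := by funext ε x; ring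
    rw [heq] at h
    exact my_step1 hu (ih _ hv h)
end
end

section
/- Let u ∈ G(ℝ^d∖{0}), u ≠ 0, be homogeneous of degree α ∈ ℝ. If û ∈ G(ℝ^d) is homogeneous of degree β ∈ ℝ and its restriction satisfies û|_{ℝ^d∖{0}} = u in G(ℝ^d∖{0}), then α = β. -/
open Set Filter Topology MeasureTheory

noncomputable section

variable {E F : Type*} [NormedAddCommGroup E] [NormedSpace ℝ E]
  [NormedAddCommGroup F] [NormedSpace ℝ F]

set_option maxHeartbeats 1000000 in
/-- if a nonzero `u ∈ G(ℝ^d∖{0})` homogeneous of degree `α` is the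
restriction of some `û ∈ G(ℝ^d)` homogeneous of degree `β`, then `α = β`. -/
theorem statement_14
    (d : ℕ) (α β : ℝ)
    (u : ℝ → EuclideanSpace ℝ (Fin d) → ℂ)
    (hu : IsModerate ({0}ᶜ : Set (EuclideanSpace ℝ (Fin d))) u)
    (hne : ¬ IsNegligible ({0}ᶜ : Set (EuclideanSpace ℝ (Fin d))) u)
    (hhom : ∀ lam : ℝ, 0 < lam →
      IsNegligible ({0}ᶜ : Set (EuclideanSpace ℝ (Fin d)))
        (fun ε x => u ε (lam • x) - ((lam ^ α : ℝ) : ℂ) * u ε x))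
    (uh : ℝ → EuclideanSpace ℝ (Fin d) → ℂ)
    (huh : IsModerate (Set.univ : Set (EuclideanSpace ℝ (Fin d))) uh)
    (huhhom : ∀ lam : ℝ, 0 < lam →
      IsNegligible (Set.univ : Set (EuclideanSpace ℝ (Fin d)))
        (fun ε x => uh ε (lam • x) - ((lam ^ β : ℝ) : ℂ) * uh ε x))
    (hrestr : IsNegligible ({0}ᶜ : Set (EuclideanSpace ℝ (Fin d)))
        (fun ε x => uh ε x - u ε x)) :
    α = β := by
  by_contra hab
  have h2 : (1:ℝ) < 2 := one_lt_two
  have hcR : (2:ℝ) ^ β - (2:ℝ) ^ α ≠ 0 := by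
    rcases Ne.lt_or_gt hab with h | h
    · exact sub_ne_zero.2 (ne_of_gt ((Real.rpow_lt_rpow_left_iff h2).2 h))
    · exact sub_ne_zero.2 (ne_of_lt ((Real.rpow_lt_rpow_left_iff h2).2 h))
  set c : ℂ := (((2:ℝ) ^ β : ℝ) : ℂ) - (((2:ℝ) ^ α : ℝ) : ℂ) with hc_def
  have hc : c ≠ 0 := by
    rw [hc_def, ← Complex.ofReal_sub]
    exact Complex.ofReal_ne_zero.2 hcR
  have hcn : (0:ℝ) < ‖c‖ := norm_pos_iff.2 hc
  set s : Set (EuclideanSpace ℝ (Fin d)) := {0}ᶜ with hs_def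
  have hsopen : IsOpen s := isOpen_compl_singleton
  have hsud : UniqueDiffOn ℝ s := hsopen.uniqueDiffOn
  set L : EuclideanSpace ℝ (Fin d) →L[ℝ] EuclideanSpace ℝ (Fin d) :=
    (2:ℝ) • ContinuousLinearMap.id ℝ _ with hL_def
  have hLapp : ∀ y, L y = (2:ℝ) • y := fun y => rfl
  have hLpre : L ⁻¹' s = s := by
    ext y
    simp only [Set.mem_preimage, hs_def, Set.mem_compl_iff, Set.mem_singleton_iff, hLapp,
      smul_eq_zero]
    constructor
    · intro h h'; exact h (Or.inr h')
    · rintro h (h' | h')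
      · norm_num at h'
      · exact h h'
  have hLnorm : ‖L‖ ≤ 2 := by
    refine L.opNorm_le_bound (by norm_num) (fun y => ?_)
    rw [hLapp, norm_smul]
    simp [Real.norm_eq_abs]
  have hA := hhom 2 two_pos
  have hB := huhhom 2 two_pos
  apply hne
  refine ⟨hu.1, ?_⟩
  intro K hK hKs n m
  set K2 : Set (EuclideanSpace ℝ (Fin d)) := (fun y => (2:ℝ) • y) '' K with hK2_def
  have hK2 : IsCompact K2 := hK.image (continuous_const_smul 2)
  have hK2s : K2 ⊆ s := by
    rintro z ⟨y, hy, rfl⟩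
    have hy0 : y ≠ 0 := hKs hy
    simp only [hs_def, Set.mem_compl_iff, Set.mem_singleton_iff]
    exact smul_ne_zero two_ne_zero hy0
  obtain ⟨CA, εA, hεA, hAb⟩ := hA.2 K hK hKs n m
  obtain ⟨CB, εB, hεB, hBb⟩ := hB.2 K hK (Set.subset_univ K) n m
  obtain ⟨Cr, εr, hεr, hrb⟩ := hrestr.2 K hK hKs n m
  obtain ⟨Cr2, εr2, hεr2, hr2b⟩ := hrestr.2 K2 hK2 hK2s n m
  refine ⟨‖c‖⁻¹ * (CA + CB + (2 ^ n * Cr2 + (2:ℝ) ^ β * Cr)),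
    min (min εA εB) (min εr (min εr2 1)),
    lt_min (lt_min hεA hεB) (lt_min hεr (lt_min hεr2 one_pos)), ?_⟩
  intro ε hε hε' x hx
  have hεA' : ε < εA := lt_of_lt_of_le hε' ((min_le_left _ _).trans (min_le_left _ _))
  have hεB' : ε < εB := lt_of_lt_of_le hε' ((min_le_left _ _).trans (min_le_right _ _))
  have hεr' : ε < εr := lt_of_lt_of_le hε' ((min_le_right _ _).trans (min_le_left _ _))
  have hεr2' : ε < εr2 :=
    lt_of_lt_of_le hε' ((min_le_right _ _).trans ((min_le_right _ _).trans (min_le_left _ _)))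
  have hε1 : ε ∈ Set.Ioc (0:ℝ) 1 :=
    ⟨hε, le_of_lt (lt_of_lt_of_le hε'
      ((min_le_right _ _).trans ((min_le_right _ _).trans (min_le_right _ _))))⟩
  have hxs : x ∈ s := hKs hx
  have hx2K : (2:ℝ) • x ∈ K2 := ⟨x, hx, rfl⟩
  have hx2s : (2:ℝ) • x ∈ s := hK2s hx2K
  -- smoothness
  have cu : ContDiffOn ℝ (⊤:ℕ∞) (u ε) s := hu.1 ε hε1
  have cA : ContDiffOn ℝ (⊤:ℕ∞)
      (fun y => u ε ((2:ℝ) • y) - (((2:ℝ) ^ α : ℝ) : ℂ) * u ε y) s := hA.1 ε hε1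
  have cB : ContDiffOn ℝ (⊤:ℕ∞)
      (fun y => uh ε ((2:ℝ) • y) - (((2:ℝ) ^ β : ℝ) : ℂ) * uh ε y) s :=
    (hB.1 ε hε1).mono (Set.subset_univ _)
  have cR : ContDiffOn ℝ (⊤:ℕ∞) (fun y => uh ε y - u ε y) s := hrestr.1 ε hε1
  have cR2 : ContDiffOn ℝ (⊤:ℕ∞)
      (fun y => uh ε ((2:ℝ) • y) - u ε ((2:ℝ) • y)) s := by
    have h := cR.comp_continuousLinearMap L
    rw [hLpre] at h
    exact h
  -- pointwise identity
  have hid : (fun y => c * u ε y)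
      = fun y => ((u ε ((2:ℝ) • y) - (((2:ℝ) ^ α : ℝ) : ℂ) * u ε y)
          + -(uh ε ((2:ℝ) • y) - (((2:ℝ) ^ β : ℝ) : ℂ) * uh ε y))
        + ((uh ε ((2:ℝ) • y) - u ε ((2:ℝ) • y))
          + (-((((2:ℝ) ^ β : ℝ) : ℂ))) * (uh ε y - u ε y)) := by
    funext y
    simp only [hc_def]
    ring
  -- iterated derivative computations
  have e0 : iteratedFDerivWithin ℝ n (fun y => c * u ε y) s x
      = c • iteratedFDerivWithin ℝ n (u ε) s x := by
    have h : (fun y => c * u ε y) = c • (u ε) := by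
      funext y; simp [smul_eq_mul]
    rw [h]
    exact iteratedFDerivWithin_const_smul_apply ((cu.of_le (m := (n : WithTop ℕ∞)) (by exact_mod_cast le_top)) x hxs) hsud hxs
  have split1 : iteratedFDerivWithin ℝ n (fun y => c * u ε y) s x
      = iteratedFDerivWithin ℝ n
          (fun y => (u ε ((2:ℝ) • y) - (((2:ℝ) ^ α : ℝ) : ℂ) * u ε y)
            + -(uh ε ((2:ℝ) • y) - (((2:ℝ) ^ β : ℝ) : ℂ) * uh ε y)) s x
        + iteratedFDerivWithin ℝ n
          (fun y => (uh ε ((2:ℝ) • y) - u ε ((2:ℝ) • y))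
            + (-((((2:ℝ) ^ β : ℝ) : ℂ))) * (uh ε y - u ε y)) s x := by
    rw [hid]
    refine iteratedFDerivWithin_add_apply' ?_ ?_ hsud hxs
    · exact ((cA.of_le (m := (n : WithTop ℕ∞)) (by exact_mod_cast le_top)).add (cB.of_le (m := (n : WithTop ℕ∞)) (by exact_mod_cast le_top)).neg) x hxs
    · have hc4 : ContDiffOn ℝ (n:ℕ∞) (fun y => (-((((2:ℝ) ^ β : ℝ) : ℂ))) * (uh ε y - u ε y)) s :=
        (cR.of_le (by exact_mod_cast le_top)).const_smul (-((((2:ℝ) ^ β : ℝ) : ℂ)))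
      exact ((cR2.of_le (by exact_mod_cast le_top)).add hc4) x hxs
  have split2 : iteratedFDerivWithin ℝ n
        (fun y => (u ε ((2:ℝ) • y) - (((2:ℝ) ^ α : ℝ) : ℂ) * u ε y)
          + -(uh ε ((2:ℝ) • y) - (((2:ℝ) ^ β : ℝ) : ℂ) * uh ε y)) s x
      = iteratedFDerivWithin ℝ n
          (fun y => u ε ((2:ℝ) • y) - (((2:ℝ) ^ α : ℝ) : ℂ) * u ε y) s x
        + iteratedFDerivWithin ℝ n
          (fun y => -(uh ε ((2:ℝ) • y) - (((2:ℝ) ^ β : ℝ) : ℂ) * uh ε y)) s x :=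
    iteratedFDerivWithin_add_apply' ((cA.of_le (m := (n : WithTop ℕ∞)) (by exact_mod_cast le_top)) x hxs) ((cB.of_le (m := (n : WithTop ℕ∞)) (by exact_mod_cast le_top)).neg x hxs) hsud hxs
  have split3 : iteratedFDerivWithin ℝ n
        (fun y => (uh ε ((2:ℝ) • y) - u ε ((2:ℝ) • y))
          + (-((((2:ℝ) ^ β : ℝ) : ℂ))) * (uh ε y - u ε y)) s x
      = iteratedFDerivWithin ℝ n
          (fun y => uh ε ((2:ℝ) • y) - u ε ((2:ℝ) • y)) s x
        + iteratedFDerivWithin ℝ n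
          (fun y => (-((((2:ℝ) ^ β : ℝ) : ℂ))) * (uh ε y - u ε y)) s x :=
    iteratedFDerivWithin_add_apply' ((cR2.of_le (m := (n : WithTop ℕ∞)) (by exact_mod_cast le_top)) x hxs)
      (((cR.of_le (m := (n : WithTop ℕ∞)) (by exact_mod_cast le_top)).const_smul (-((((2:ℝ) ^ β : ℝ) : ℂ)))) x hxs) hsud hxs
  -- bounds on individual terms
  have bA : ‖iteratedFDerivWithin ℝ n
      (fun y => u ε ((2:ℝ) • y) - (((2:ℝ) ^ α : ℝ) : ℂ) * u ε y) s x‖ ≤ CA * ε ^ m :=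
    hAb ε hε hεA' x hx
  have bB : ‖iteratedFDerivWithin ℝ n
      (fun y => -(uh ε ((2:ℝ) • y) - (((2:ℝ) ^ β : ℝ) : ℂ) * uh ε y)) s x‖ ≤ CB * ε ^ m := by
    have eN : iteratedFDerivWithin ℝ n
        (fun y => -(uh ε ((2:ℝ) • y) - (((2:ℝ) ^ β : ℝ) : ℂ) * uh ε y)) s x
        = - iteratedFDerivWithin ℝ n
            (fun y => uh ε ((2:ℝ) • y) - (((2:ℝ) ^ β : ℝ) : ℂ) * uh ε y) s x :=
      iteratedFDerivWithin_neg_apply hsud hxs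
    have eU : iteratedFDerivWithin ℝ n
        (fun y => uh ε ((2:ℝ) • y) - (((2:ℝ) ^ β : ℝ) : ℂ) * uh ε y) s x
        = iteratedFDerivWithin ℝ n
            (fun y => uh ε ((2:ℝ) • y) - (((2:ℝ) ^ β : ℝ) : ℂ) * uh ε y) Set.univ x := by
      rw [iteratedFDerivWithin_univ]
      exact iteratedFDerivWithin_of_isOpen n hsopen hxs
    rw [eN, norm_neg, eU]
    exact hBb ε hε hεB' x hx
  have bR2 : ‖iteratedFDerivWithin ℝ n
      (fun y => uh ε ((2:ℝ) • y) - u ε ((2:ℝ) • y)) s x‖ ≤ 2 ^ n * (Cr2 * ε ^ m) := by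
    have eC : iteratedFDerivWithin ℝ n
        (fun y => uh ε ((2:ℝ) • y) - u ε ((2:ℝ) • y)) s x
        = (iteratedFDerivWithin ℝ n (fun y => uh ε y - u ε y) s
            ((2:ℝ) • x)).compContinuousLinearMap (fun _ => L) := by
      have h := L.iteratedFDerivWithin_comp_right (f := fun y => uh ε y - u ε y) cR hsud
        (by rw [hLpre]; exact hsud) (x := x) hx2s (i := n) (by exact_mod_cast le_top)
      rw [hLpre] at h
      exact h
    rw [eC]
    have hb := hr2b ε hε hεr2' ((2:ℝ) • x) hx2K
    calc ‖(iteratedFDerivWithin ℝ n (fun y => uh ε y - u ε y) s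
            ((2:ℝ) • x)).compContinuousLinearMap (fun _ => L)‖
        ≤ ‖iteratedFDerivWithin ℝ n (fun y => uh ε y - u ε y) s ((2:ℝ) • x)‖
            * ∏ _i : Fin n, ‖L‖ :=
          ContinuousMultilinearMap.norm_compContinuousLinearMap_le _ _
      _ ≤ (Cr2 * ε ^ m) * 2 ^ n := by
          have hp : (∏ _i : Fin n, ‖L‖) ≤ 2 ^ n := by
            rw [Finset.prod_const, Finset.card_univ, Fintype.card_fin]
            exact pow_le_pow_left₀ (norm_nonneg _) hLnorm n
          exact mul_le_mul hb hp (Finset.prod_nonneg fun _ _ => norm_nonneg _)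
            (le_trans (norm_nonneg _) hb)
      _ = 2 ^ n * (Cr2 * ε ^ m) := by ring
  have bS : ‖iteratedFDerivWithin ℝ n
      (fun y => (-((((2:ℝ) ^ β : ℝ) : ℂ))) * (uh ε y - u ε y)) s x‖
      ≤ (2:ℝ) ^ β * (Cr * ε ^ m) := by
    have eS : (fun y => (-((((2:ℝ) ^ β : ℝ) : ℂ))) * (uh ε y - u ε y))
        = (-((((2:ℝ) ^ β : ℝ) : ℂ))) • (fun y => uh ε y - u ε y) := by
      funext y; simp [smul_eq_mul]
    rw [eS, iteratedFDerivWithin_const_smul_apply ((cR.of_le (m := (n : WithTop ℕ∞)) (by exact_mod_cast le_top)) x hxs) hsud hxs, norm_smul]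
    have hnc : ‖-((((2:ℝ) ^ β : ℝ) : ℂ))‖ = (2:ℝ) ^ β := by
      rw [norm_neg, Complex.norm_real, Real.norm_eq_abs,
        abs_of_pos (Real.rpow_pos_of_pos two_pos β)]
    rw [hnc]
    exact mul_le_mul_of_nonneg_left (hrb ε hε hεr' x hx)
      (le_of_lt (Real.rpow_pos_of_pos two_pos β))
  -- combine
  have main : ‖c‖ * ‖iteratedFDerivWithin ℝ n (u ε) s x‖
      ≤ (CA + CB + (2 ^ n * Cr2 + (2:ℝ) ^ β * Cr)) * ε ^ m := by
    have e0' : ‖c‖ * ‖iteratedFDerivWithin ℝ n (u ε) s x‖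
        = ‖iteratedFDerivWithin ℝ n (fun y => c * u ε y) s x‖ := by
      rw [e0, norm_smul]
    rw [e0', split1, split2, split3]
    calc ‖(iteratedFDerivWithin ℝ n
            (fun y => u ε ((2:ℝ) • y) - (((2:ℝ) ^ α : ℝ) : ℂ) * u ε y) s x
          + iteratedFDerivWithin ℝ n
            (fun y => -(uh ε ((2:ℝ) • y) - (((2:ℝ) ^ β : ℝ) : ℂ) * uh ε y)) s x)
          + (iteratedFDerivWithin ℝ n
              (fun y => uh ε ((2:ℝ) • y) - u ε ((2:ℝ) • y)) s x
            + iteratedFDerivWithin ℝ n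
              (fun y => (-((((2:ℝ) ^ β : ℝ) : ℂ))) * (uh ε y - u ε y)) s x)‖
        ≤ (‖iteratedFDerivWithin ℝ n
            (fun y => u ε ((2:ℝ) • y) - (((2:ℝ) ^ α : ℝ) : ℂ) * u ε y) s x‖
          + ‖iteratedFDerivWithin ℝ n
            (fun y => -(uh ε ((2:ℝ) • y) - (((2:ℝ) ^ β : ℝ) : ℂ) * uh ε y)) s x‖)
          + (‖iteratedFDerivWithin ℝ n
              (fun y => uh ε ((2:ℝ) • y) - u ε ((2:ℝ) • y)) s x‖
            + ‖iteratedFDerivWithin ℝ n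
              (fun y => (-((((2:ℝ) ^ β : ℝ) : ℂ))) * (uh ε y - u ε y)) s x‖) :=
          le_trans (norm_add_le _ _) (add_le_add (norm_add_le _ _) (norm_add_le _ _))
      _ ≤ (CA * ε ^ m + CB * ε ^ m) + (2 ^ n * (Cr2 * ε ^ m) + (2:ℝ) ^ β * (Cr * ε ^ m)) :=
          add_le_add (add_le_add bA bB) (add_le_add bR2 bS)
      _ = (CA + CB + (2 ^ n * Cr2 + (2:ℝ) ^ β * Cr)) * ε ^ m := by ring
  calc ‖iteratedFDerivWithin ℝ n (u ε) s x‖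
      = ‖c‖⁻¹ * (‖c‖ * ‖iteratedFDerivWithin ℝ n (u ε) s x‖) := by
        rw [← mul_assoc, inv_mul_cancel₀ (ne_of_gt hcn), one_mul]
    _ ≤ ‖c‖⁻¹ * ((CA + CB + (2 ^ n * Cr2 + (2:ℝ) ^ β * Cr)) * ε ^ m) :=
        mul_le_mul_of_nonneg_left main (inv_nonneg.2 (norm_nonneg _))
    _ = ‖c‖⁻¹ * (CA + CB + (2 ^ n * Cr2 + (2:ℝ) ^ β * Cr)) * ε ^ m := by ring
end
end

section
/- Let u ∈ G(ℝ^d∖{0}), u ≠ 0, be homogeneous of degree α ∈ ℝ. Then u is extendable: there exists û ∈ G(ℝ^d) such that û|_{ℝ^d∖{0}} = u in G(ℝ^d∖{0}). -/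
open Set Filter Topology MeasureTheory

noncomputable section

variable {E F : Type*} [NormedAddCommGroup E] [NormedSpace ℝ E]
  [NormedAddCommGroup F] [NormedSpace ℝ F]

lemma st15_invpow {ε : ℝ} (hε : 0 < ε) (N : ℕ) : ε ^ (-(N:ℤ)) = (ε⁻¹) ^ N := by
  rw [zpow_neg, zpow_natCast, inv_pow]

lemma st15_iteratedFDeriv_zero_of_eqOn {f : E → F} {s : Set E} (hs : IsOpen s) {x : E}
    (hx : x ∈ s) (h : ∀ y ∈ s, f y = 0) (n : ℕ) : iteratedFDeriv ℝ n f x = 0 := by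
  have h1 : iteratedFDeriv ℝ n f x = iteratedFDeriv ℝ n (fun _ : E => (0:F)) x := by
    rw [← iteratedFDerivWithin_univ, ← iteratedFDerivWithin_univ]
    refine Filter.EventuallyEq.iteratedFDerivWithin_eq ?_ (h x hx) n
    rw [nhdsWithin_univ]
    exact Filter.eventuallyEq_of_mem (hs.mem_nhds hx) h
  rw [h1, iteratedFDeriv_zero_fun]
  rfl

lemma st15_iteratedFDeriv_congr {f g : E → F} {s : Set E} (hs : IsOpen s) {x : E}
    (hx : x ∈ s) (h : ∀ y ∈ s, f y = g y) (n : ℕ) :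
    iteratedFDeriv ℝ n f x = iteratedFDeriv ℝ n g x := by
  rw [← iteratedFDerivWithin_univ, ← iteratedFDerivWithin_univ]
  refine Filter.EventuallyEq.iteratedFDerivWithin_eq ?_ (h x hx) n
  rw [nhdsWithin_univ]
  exact Filter.eventuallyEq_of_mem (hs.mem_nhds hx) h

lemma st15_scale_smooth {f : E → F} (hf : ContDiff ℝ (⊤:ℕ∞) f) (c : ℝ) :
    ContDiff ℝ (⊤:ℕ∞) (fun y : E => f (c • y)) :=
  hf.comp (contDiff_const_smul c)

lemma st15_norm_iteratedFDeriv_scale {f : E → F} (hf : ContDiff ℝ (⊤:ℕ∞) f) (c : ℝ) (n : ℕ)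
    (x : E) : ‖iteratedFDeriv ℝ n (fun y : E => f (c • y)) x‖
      ≤ |c| ^ n * ‖iteratedFDeriv ℝ n f (c • x)‖ := by
  set L : E →L[ℝ] E := c • (ContinuousLinearMap.id ℝ E) with hL
  have hfun : (fun y : E => f (c • y)) = f ∘ L := by
    funext y; simp [hL]
  have hcomp := L.iteratedFDeriv_comp_right (f := f) hf x (i := n) (by exact_mod_cast le_top)
  rw [hfun, hcomp]
  have hLx : L x = c • x := by simp [hL]
  rw [hLx]
  refine le_trans (ContinuousMultilinearMap.norm_compContinuousLinearMap_le _ _) ?_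
  have h1 : ∏ _i : Fin n, ‖L‖ = ‖L‖ ^ n := by simp [Finset.prod_const]
  have hLn : ‖L‖ ≤ |c| := by
    refine le_trans (norm_smul_le c (ContinuousLinearMap.id ℝ E)) ?_
    rw [Real.norm_eq_abs]
    calc |c| * ‖ContinuousLinearMap.id ℝ E‖ ≤ |c| * 1 := by
          gcongr; exact ContinuousLinearMap.norm_id_le
      _ = |c| := mul_one _
  calc ‖iteratedFDeriv ℝ n f (c • x)‖ * ∏ _i : Fin n, ‖L‖
      ≤ ‖iteratedFDeriv ℝ n f (c • x)‖ * |c| ^ n := by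
        rw [h1]
        exact mul_le_mul_of_nonneg_left (pow_le_pow_left₀ (norm_nonneg _) hLn n) (norm_nonneg _)
    _ = |c| ^ n * ‖iteratedFDeriv ℝ n f (c • x)‖ := mul_comm _ _


/-- Smoothness of a truncated product `b • g` where `b` vanishes near `0` and `g` is smooth
away from `0`. -/
lemma st15_trunc_smooth {b : E → ℝ} {g : E → F} (hb : ContDiff ℝ (⊤:ℕ∞) b)
    (hg : ContDiffOn ℝ (⊤:ℕ∞) g ({0}ᶜ : Set E)) {δ : ℝ} (hδ : 0 < δ)
    (h0 : ∀ y : E, ‖y‖ < δ → b y = 0) : ContDiff ℝ (⊤:ℕ∞) (fun y : E => b y • g y) := by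
  rw [← contDiffOn_univ]
  intro x _
  rcases lt_or_ge ‖x‖ δ with hx | hx
  · apply ContDiffWithinAt.congr_of_eventuallyEq (f := fun _ : E => (0:F))
    · exact contDiffWithinAt_const
    · have hmem : {y : E | ‖y‖ < δ} ∈ 𝓝[univ] x := by
        rw [nhdsWithin_univ]
        have hopen : IsOpen {y : E | ‖y‖ < δ} := isOpen_lt continuous_norm continuous_const
        exact hopen.mem_nhds hx
      filter_upwards [hmem] with y hy
      simp [h0 y hy]
    · simp [h0 x hx]
  · have hx0 : x ≠ 0 := by
      intro h; rw [h] at hx; simp at hx; exact absurd hx (not_le.mpr hδ)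
    have hgx : ContDiffAt ℝ (⊤:ℕ∞) g x := by
      have : ({0}ᶜ : Set E) ∈ 𝓝 x := (isOpen_compl_singleton).mem_nhds (by simpa using hx0)
      exact (hg x (by simpa using hx0)).contDiffAt this
    exact ((hb.contDiffAt.smul hgx)).contDiffWithinAt

lemma st15_trunc_zero {b : E → ℝ} {g : E → F} {δ : ℝ} (hδ : 0 < δ)
    (h0 : ∀ y : E, ‖y‖ < δ → b y = 0) {x : E} (hx : ‖x‖ < δ) (n : ℕ) :
    iteratedFDeriv ℝ n (fun y : E => b y • g y) x = 0 := by
  refine st15_iteratedFDeriv_zero_of_eqOn (Metric.isOpen_ball (x := (0:E)) (ε := δ)) ?_ ?_ n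
  · simpa [Metric.mem_ball, dist_zero_right] using hx
  · intro y hy
    rw [Metric.mem_ball, dist_zero_right] at hy
    simp [h0 y hy]

lemma st15_trunc_zero' {b : E → ℝ} {g : E → F} {δ : ℝ}
    (h0 : ∀ y : E, δ < ‖y‖ → b y = 0) {x : E} (hx : δ < ‖x‖) (n : ℕ) :
    iteratedFDeriv ℝ n (fun y : E => b y • g y) x = 0 := by
  have hopen : IsOpen {y : E | δ < ‖y‖} := isOpen_lt continuous_const continuous_norm
  refine st15_iteratedFDeriv_zero_of_eqOn hopen hx ?_ n
  intro y hy
  simp [h0 y hy]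

lemma st15_trunc_bound {b : E → ℝ} {g : E → F} (hb : ContDiff ℝ (⊤:ℕ∞) b)
    (hg : ContDiffOn ℝ (⊤:ℕ∞) g ({0}ᶜ : Set E)) {x : E} (hx : x ≠ 0) (n : ℕ) :
    ‖iteratedFDeriv ℝ n (fun y : E => b y • g y) x‖ ≤
      ∑ i ∈ Finset.range (n + 1), (n.choose i : ℝ) * ‖iteratedFDeriv ℝ i b x‖ *
        ‖iteratedFDerivWithin ℝ (n - i) g ({0}ᶜ : Set E) x‖ := by
  have hΩ : IsOpen ({0}ᶜ : Set E) := isOpen_compl_singleton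
  have hxΩ : x ∈ ({0}ᶜ : Set E) := by simpa using hx
  rw [← iteratedFDerivWithin_of_isOpen n hΩ hxΩ]
  refine le_trans (norm_iteratedFDerivWithin_smul_le hb.contDiffOn hg hΩ.uniqueDiffOn hxΩ
    (n := n) (by exact_mod_cast le_top)) ?_
  refine Finset.sum_le_sum (fun i _ => ?_)
  rw [iteratedFDerivWithin_of_isOpen i hΩ hxΩ]

/-- Combining finitely many asymptotic bounds. -/
lemma st15_combine {p : ℕ → ℝ → ℝ → Prop}
    (mono : ∀ {k C C' ε}, 0 < ε → p k C ε → C ≤ C' → p k C' ε) :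
    ∀ k₁ : ℕ, (∀ k, k < k₁ → ∃ C ε₀, 0 ≤ C ∧ 0 < ε₀ ∧ ∀ ε, 0 < ε → ε < ε₀ → p k C ε) →
      ∃ C ε₀, 0 ≤ C ∧ 0 < ε₀ ∧ ∀ ε, 0 < ε → ε < ε₀ → ∀ k, k < k₁ → p k C ε := by
  intro k₁
  induction k₁ with
  | zero => exact fun _ => ⟨0, 1, le_refl _, one_pos, fun ε _ _ k hk => absurd hk (Nat.not_lt_zero k)⟩
  | succ k₁ ih =>
    intro h
    obtain ⟨C₁, ε₁, hC₁, hε₁, h₁⟩ := ih (fun k hk => h k (hk.trans (Nat.lt_succ_self k₁)))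
    obtain ⟨C₂, ε₂, hC₂, hε₂, h₂⟩ := h k₁ (Nat.lt_succ_self k₁)
    refine ⟨max C₁ C₂, min ε₁ ε₂, le_trans hC₁ (le_max_left _ _), lt_min hε₁ hε₂, ?_⟩
    intro ε hε hε' k hk
    rcases Nat.lt_succ_iff_lt_or_eq.mp hk with hk' | hk'
    · exact mono hε (h₁ ε hε (hε'.trans_le (min_le_left _ _)) k hk') (le_max_left _ _)
    · subst hk'
      exact mono hε (h₂ ε hε (hε'.trans_le (min_le_right _ _))) (le_max_right _ _)


lemma st15_one_le_inv {ε : ℝ} (hε : 0 < ε) (hε1 : ε ≤ 1) : 1 ≤ ε⁻¹ := by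
  rw [← inv_one]
  exact inv_anti₀ hε hε1

lemma st15_moderate_unif {Ω : Set E} {u : ℝ → E → F} (hu : IsModerate Ω u) {K : Set E}
    (hK : IsCompact K) (hKΩ : K ⊆ Ω) (n : ℕ) :
    ∃ N : ℕ, ∃ C ε₀ : ℝ, 0 < ε₀ ∧ ε₀ ≤ 1 ∧ 0 ≤ C ∧ ∀ ε, 0 < ε → ε < ε₀ →
      ∀ i ≤ n, ∀ x ∈ K, ‖iteratedFDerivWithin ℝ i (u ε) Ω x‖ ≤ C * (ε⁻¹) ^ N := by
  induction n with
  | zero =>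
    obtain ⟨N, C, ε₀, hε₀, h⟩ := hu.2 K hK hKΩ 0
    refine ⟨N, max C 0, min ε₀ 1, lt_min hε₀ one_pos, min_le_right _ _, le_max_right _ _, ?_⟩
    intro ε hε hε' i hi x hx
    interval_cases i
    calc ‖iteratedFDerivWithin ℝ 0 (u ε) Ω x‖ ≤ C * ε ^ (-(N:ℤ)) :=
          h ε hε (hε'.trans_le (min_le_left _ _)) x hx
      _ = C * (ε⁻¹) ^ N := by rw [st15_invpow hε]
      _ ≤ max C 0 * (ε⁻¹) ^ N := by
          apply mul_le_mul_of_nonneg_right (le_max_left _ _) (by positivity)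
  | succ n ih =>
    obtain ⟨N₁, C₁, ε₁, hε₁, hε₁1, hC₁, h₁⟩ := ih
    obtain ⟨N₂, C₂, ε₂, hε₂, h₂⟩ := hu.2 K hK hKΩ (n+1)
    refine ⟨max N₁ N₂, C₁ + max C₂ 0, min ε₁ ε₂, lt_min hε₁ hε₂,
      (min_le_left _ _).trans hε₁1, by positivity, ?_⟩
    intro ε hε hε' i hi x hx
    have hεle1 : ε ≤ 1 := le_of_lt (lt_of_lt_of_le hε' ((min_le_left _ _).trans hε₁1))
    have h1ε : 1 ≤ ε⁻¹ := st15_one_le_inv hε hεle1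
    have hεpow : ∀ M M' : ℕ, M ≤ M' → (ε⁻¹) ^ M ≤ (ε⁻¹) ^ M' :=
      fun M M' h => pow_le_pow_right₀ h1ε h
    rcases Nat.lt_succ_iff_lt_or_eq.mp (Nat.lt_succ_of_le hi) with hi' | hi'
    · calc ‖iteratedFDerivWithin ℝ i (u ε) Ω x‖ ≤ C₁ * (ε⁻¹) ^ N₁ :=
            h₁ ε hε (hε'.trans_le (min_le_left _ _)) i (Nat.lt_succ_iff.mp hi') x hx
        _ ≤ (C₁ + max C₂ 0) * (ε⁻¹) ^ (max N₁ N₂) := by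
            apply mul_le_mul (by linarith [le_max_left C₂ (0:ℝ), le_max_right C₂ (0:ℝ)]) (hεpow _ _ (le_max_left _ _)) (by positivity) (by positivity)
    · subst hi'
      calc ‖iteratedFDerivWithin ℝ (n+1) (u ε) Ω x‖ ≤ C₂ * ε ^ (-(N₂:ℤ)) :=
            h₂ ε hε (hε'.trans_le (min_le_right _ _)) x hx
        _ = C₂ * (ε⁻¹) ^ N₂ := by rw [st15_invpow hε]
        _ ≤ (C₁ + max C₂ 0) * (ε⁻¹) ^ (max N₁ N₂) := by
            apply mul_le_mul (by linarith [le_max_left C₂ (0:ℝ)]) (hεpow _ _ (le_max_right _ _)) (by positivity) (by positivity)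

lemma st15_negligible_unif {Ω : Set E} {u : ℝ → E → F} (hu : IsNegligible Ω u) {K : Set E}
    (hK : IsCompact K) (hKΩ : K ⊆ Ω) (n m : ℕ) :
    ∃ C ε₀ : ℝ, 0 ≤ C ∧ 0 < ε₀ ∧ ∀ ε, 0 < ε → ε < ε₀ →
      ∀ i ≤ n, ∀ x ∈ K, ‖iteratedFDerivWithin ℝ i (u ε) Ω x‖ ≤ C * ε ^ m := by
  induction n with
  | zero =>
    obtain ⟨C, ε₀, hε₀, h⟩ := hu.2 K hK hKΩ 0 m
    refine ⟨max C 0, ε₀, le_max_right _ _, hε₀, ?_⟩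
    intro ε hε hε' i hi x hx
    interval_cases i
    exact (h ε hε hε' x hx).trans
      (mul_le_mul_of_nonneg_right (le_max_left _ _) (by positivity))
  | succ n ih =>
    obtain ⟨C₁, ε₁, hC₁, hε₁, h₁⟩ := ih
    obtain ⟨C₂, ε₂, hε₂, h₂⟩ := hu.2 K hK hKΩ (n+1) m
    refine ⟨C₁ + max C₂ 0, min ε₁ ε₂, by positivity, lt_min hε₁ hε₂, ?_⟩
    intro ε hε hε' i hi x hx
    rcases Nat.lt_succ_iff_lt_or_eq.mp (Nat.lt_succ_of_le hi) with hi' | hi'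
    · exact (h₁ ε hε (hε'.trans_le (min_le_left _ _)) i (Nat.lt_succ_iff.mp hi') x hx).trans
        (mul_le_mul_of_nonneg_right (by linarith [le_max_right C₂ (0:ℝ)]) (by positivity))
    · subst hi'
      exact (h₂ ε hε (hε'.trans_le (min_le_right _ _)) x hx).trans
        (mul_le_mul_of_nonneg_right (by linarith [le_max_left C₂ (0:ℝ)]) (by positivity))


/-! ### The construction -/

def st15_B (d : ℕ) : ContDiffBump (0 : EuclideanSpace ℝ (Fin d)) := ⟨1, 2, one_pos, one_lt_two⟩

def st15_eta (d : ℕ) (x : EuclideanSpace ℝ (Fin d)) : ℝ := st15_B d x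

def st15_phi (d : ℕ) (x : EuclideanSpace ℝ (Fin d)) : ℝ :=
  st15_eta d x - st15_eta d ((2:ℝ) • x)

def st15_c (α : ℝ) (k : ℕ) : ℝ := ((2:ℝ) ^ k) ^ α

def st15_bphi (d : ℕ) (α : ℝ) (k : ℕ) (z : EuclideanSpace ℝ (Fin d)) : ℝ :=
  (st15_c α k)⁻¹ * st15_phi d z

def st15_Kf (ε : ℝ) : ℕ := ⌈Real.logb 2 ε⁻¹⌉₊

def st15_uh (d : ℕ) (α : ℝ) (u : ℝ → EuclideanSpace ℝ (Fin d) → ℂ) (ε : ℝ)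
    (x : EuclideanSpace ℝ (Fin d)) : ℂ :=
  (∑ k ∈ Finset.range (st15_Kf ε + 1),
    st15_bphi d α k ((2:ℝ)^k • x) • u ε ((2:ℝ)^k • x)) + (1 - st15_eta d x) • u ε x

variable {d : ℕ}

lemma st15_eta_smooth : ContDiff ℝ (⊤:ℕ∞) (st15_eta d) := (st15_B d).contDiff

lemma st15_phi_smooth : ContDiff ℝ (⊤:ℕ∞) (st15_phi d) :=
  st15_eta_smooth.sub (st15_eta_smooth.comp (contDiff_const_smul (2:ℝ)))

lemma st15_eta_one {x : EuclideanSpace ℝ (Fin d)} (hx : ‖x‖ ≤ 1) : st15_eta d x = 1 := by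
  refine (st15_B d).one_of_mem_closedBall ?_
  simpa [st15_B, Metric.mem_closedBall, dist_zero_right] using hx

lemma st15_eta_zero {x : EuclideanSpace ℝ (Fin d)} (hx : 2 ≤ ‖x‖) : st15_eta d x = 0 := by
  refine (st15_B d).zero_of_le_dist ?_
  simpa [st15_B, dist_zero_right] using hx

lemma st15_phi_lo {z : EuclideanSpace ℝ (Fin d)} (hz : ‖z‖ ≤ 1/2) : st15_phi d z = 0 := by
  have h1 : st15_eta d z = 1 := st15_eta_one (by linarith)
  have h2 : st15_eta d ((2:ℝ) • z) = 1 := by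
    refine st15_eta_one ?_
    rw [norm_smul]
    simp only [Real.norm_ofNat]
    linarith
  simp [st15_phi, h1, h2]

lemma st15_phi_hi {z : EuclideanSpace ℝ (Fin d)} (hz : 2 ≤ ‖z‖) : st15_phi d z = 0 := by
  have h1 : st15_eta d z = 0 := st15_eta_zero hz
  have h2 : st15_eta d ((2:ℝ) • z) = 0 := by
    refine st15_eta_zero ?_
    rw [norm_smul]
    simp only [Real.norm_ofNat]
    linarith
  simp [st15_phi, h1, h2]

lemma st15_telescope (y : EuclideanSpace ℝ (Fin d)) (j : ℕ) :
    ∑ k ∈ Finset.range j, st15_phi d ((2:ℝ)^k • y)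
      = st15_eta d y - st15_eta d ((2:ℝ)^j • y) := by
  have h : ∀ k : ℕ, st15_phi d ((2:ℝ)^k • y)
      = st15_eta d ((2:ℝ)^k • y) - st15_eta d ((2:ℝ)^(k+1) • y) := by
    intro k
    have : (2:ℝ) • ((2:ℝ)^k • y) = (2:ℝ)^(k+1) • y := by
      rw [smul_smul, ← pow_succ']
    rw [st15_phi, this]
  calc ∑ k ∈ Finset.range j, st15_phi d ((2:ℝ)^k • y)
      = ∑ k ∈ Finset.range j,
          (st15_eta d ((2:ℝ)^k • y) - st15_eta d ((2:ℝ)^(k+1) • y)) := by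
        exact Finset.sum_congr rfl (fun k _ => h k)
    _ = st15_eta d ((2:ℝ)^0 • y) - st15_eta d ((2:ℝ)^j • y) :=
        Finset.sum_range_sub' (fun k => st15_eta d ((2:ℝ)^k • y)) j
    _ = st15_eta d y - st15_eta d ((2:ℝ)^j • y) := by rw [pow_zero, one_smul]

lemma st15_c_pos (α : ℝ) (k : ℕ) : 0 < st15_c α k :=
  Real.rpow_pos_of_pos (by positivity) α

lemma st15_c_inv_le (α : ℝ) (k : ℕ) : (st15_c α k)⁻¹ ≤ (2:ℝ) ^ (k * ⌈|α|⌉₊) := by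
  have h2k : (1:ℝ) ≤ (2:ℝ)^k := one_le_pow₀ (by norm_num)
  have h1 : (st15_c α k)⁻¹ = ((2:ℝ)^k) ^ (-α) := by
    rw [st15_c, ← Real.rpow_neg (by positivity)]
  rw [h1]
  have h2 : -α ≤ (⌈|α|⌉₊ : ℝ) := le_trans (neg_le_abs α) (Nat.le_ceil _)
  calc ((2:ℝ)^k) ^ (-α) ≤ ((2:ℝ)^k) ^ ((⌈|α|⌉₊ : ℕ) : ℝ) :=
        Real.rpow_le_rpow_of_exponent_le h2k h2
    _ = ((2:ℝ)^k) ^ (⌈|α|⌉₊ : ℕ) := Real.rpow_natCast _ _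
    _ = (2:ℝ) ^ (k * ⌈|α|⌉₊) := by rw [← pow_mul]

lemma st15_Kf_pow_le {ε : ℝ} (hε : 0 < ε) (hε1 : ε ≤ 1) :
    (2:ℝ) ^ (st15_Kf ε) ≤ 2 * ε⁻¹ := by
  have hεinv : (1:ℝ) ≤ ε⁻¹ := st15_one_le_inv hε hε1
  have hlog : 0 ≤ Real.logb 2 ε⁻¹ := Real.logb_nonneg one_lt_two hεinv
  have hceil : (st15_Kf ε : ℝ) < Real.logb 2 ε⁻¹ + 1 := Nat.ceil_lt_add_one hlog
  calc (2:ℝ) ^ (st15_Kf ε) = (2:ℝ) ^ ((st15_Kf ε : ℕ) : ℝ) := (Real.rpow_natCast _ _).symm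
    _ ≤ (2:ℝ) ^ (Real.logb 2 ε⁻¹ + 1) :=
        Real.rpow_le_rpow_of_exponent_le one_le_two hceil.le
    _ = (2:ℝ) ^ (Real.logb 2 ε⁻¹) * 2 := by
        rw [Real.rpow_add (by norm_num), Real.rpow_one]
    _ = ε⁻¹ * 2 := by rw [Real.rpow_logb (by norm_num) (by norm_num) (by positivity)]
    _ = 2 * ε⁻¹ := mul_comm _ _

lemma st15_Kf_ge {ε : ℝ} (hε : 0 < ε) {k₁ : ℕ} (hk : ε < ((2:ℝ)^k₁)⁻¹) :
    k₁ ≤ st15_Kf ε := by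
  have h2k : (0:ℝ) < (2:ℝ)^k₁ := by positivity
  have hεinv : (2:ℝ)^k₁ < ε⁻¹ := by
    rw [← inv_inv ((2:ℝ)^k₁)]
    exact inv_strictAnti₀ hε hk
  have hlog : (k₁ : ℝ) ≤ Real.logb 2 ε⁻¹ := by
    calc (k₁ : ℝ) = Real.logb 2 ((2:ℝ)^k₁) := by
          rw [Real.logb_pow]
          simp [Real.logb_self_eq_one one_lt_two]
    _ ≤ Real.logb 2 ε⁻¹ := Real.logb_le_logb_of_le one_lt_two h2k hεinv.le
  exact_mod_cast hlog.trans (Nat.le_ceil _)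

lemma st15_Kf_card_le {ε : ℝ} (hε : 0 < ε) (hε1 : ε ≤ 1) :
    ((st15_Kf ε + 1 : ℕ) : ℝ) ≤ 4 * ε⁻¹ := by
  have h1 : (st15_Kf ε + 1 : ℕ) ≤ 2 ^ (st15_Kf ε + 1) := (Nat.lt_two_pow_self (n := st15_Kf ε + 1)).le.trans (by
    exact Nat.pow_le_pow_right (by norm_num) (le_refl _)) |>.trans (le_refl _)
  have h2 : ((st15_Kf ε + 1 : ℕ) : ℝ) ≤ (2:ℝ) ^ (st15_Kf ε + 1) := by
    calc ((st15_Kf ε + 1 : ℕ) : ℝ) ≤ ((2 ^ (st15_Kf ε + 1) : ℕ) : ℝ) := by exact_mod_cast h1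
      _ = (2:ℝ) ^ (st15_Kf ε + 1) := by push_cast; ring
  calc ((st15_Kf ε + 1 : ℕ) : ℝ) ≤ (2:ℝ) ^ (st15_Kf ε + 1) := h2
    _ = 2 * (2:ℝ) ^ (st15_Kf ε) := by ring
    _ ≤ 2 * (2 * ε⁻¹) := by
        have := st15_Kf_pow_le hε hε1
        linarith
    _ = 4 * ε⁻¹ := by ring


lemma st15_sup_bounds {f : E → F} (hf : ContDiff ℝ (⊤:ℕ∞) f) {K : Set E} (hK : IsCompact K)
    (n : ℕ) : ∃ C : ℝ, 0 ≤ C ∧ ∀ i ≤ n, ∀ x ∈ K, ‖iteratedFDeriv ℝ i f x‖ ≤ C := by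
  induction n with
  | zero =>
    obtain ⟨C, hC⟩ := hK.exists_bound_of_continuousOn
      ((hf.continuous_iteratedFDeriv (m := 0) (by exact_mod_cast le_top)).continuousOn)
    exact ⟨max C 0, le_max_right _ _, fun i hi x hx => by
      interval_cases i; exact (hC x hx).trans (le_max_left _ _)⟩
  | succ n ih =>
    obtain ⟨C₁, hC₁, h₁⟩ := ih
    obtain ⟨C₂, hC₂⟩ := hK.exists_bound_of_continuousOn
      ((hf.continuous_iteratedFDeriv (m := n+1) (by exact_mod_cast le_top)).continuousOn)
    refine ⟨C₁ + max C₂ 0, by positivity, fun i hi x hx => ?_⟩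
    rcases Nat.lt_succ_iff_lt_or_eq.mp (Nat.lt_succ_of_le hi) with hi' | hi'
    · exact (h₁ i (Nat.lt_succ_iff.mp hi') x hx).trans (by linarith [le_max_right C₂ (0:ℝ)])
    · subst hi'
      exact (hC₂ x hx).trans (by linarith [le_max_left C₂ (0:ℝ)])

variable {α : ℝ} {u : ℝ → EuclideanSpace ℝ (Fin d) → ℂ}

lemma st15_bphi_smooth (k : ℕ) : ContDiff ℝ (⊤:ℕ∞) (st15_bphi d α k) :=
  contDiff_const.mul st15_phi_smooth

lemma st15_bphi_lo (k : ℕ) {z : EuclideanSpace ℝ (Fin d)} (hz : ‖z‖ < 1/2) :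
    st15_bphi d α k z = 0 := by
  simp [st15_bphi, st15_phi_lo hz.le]

lemma st15_bphi_hi (k : ℕ) {z : EuclideanSpace ℝ (Fin d)} (hz : 2 ≤ ‖z‖) :
    st15_bphi d α k z = 0 := by
  simp [st15_bphi, st15_phi_hi hz]

lemma st15_uh_smooth (ε : ℝ) (hu : ContDiffOn ℝ (⊤:ℕ∞) (u ε) ({0}ᶜ)) :
    ContDiff ℝ (⊤:ℕ∞) (st15_uh d α u ε) := by
  refine ContDiff.add ?_ ?_
  · refine ContDiff.sum (fun k _ => ?_)
    have h1 : ContDiff ℝ (⊤:ℕ∞)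
        (fun z : EuclideanSpace ℝ (Fin d) => st15_bphi d α k z • u ε z) :=
      st15_trunc_smooth (st15_bphi_smooth k) hu (by norm_num : (0:ℝ) < 1/2)
        (fun y hy => st15_bphi_lo k hy)
    exact st15_scale_smooth h1 ((2:ℝ)^k)
  · exact st15_trunc_smooth (contDiff_const.sub st15_eta_smooth) hu one_pos
      (fun y hy => by simp [st15_eta_one hy.le])


lemma st15_of_top {f : E → F} (hf : ContDiff ℝ (⊤:ℕ∞) f) (i : ℕ) : ContDiff ℝ i f :=
  hf.of_le (by exact_mod_cast le_top)

lemma st15_uh_moderate (hu : IsModerate ({0}ᶜ : Set (EuclideanSpace ℝ (Fin d))) u)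
    {K : Set (EuclideanSpace ℝ (Fin d))} (hK : IsCompact K) (n : ℕ) :
    ∃ N : ℕ, ∃ C ε₀ : ℝ, 0 < ε₀ ∧ ε₀ ≤ 1 ∧ 0 ≤ C ∧ ∀ ε, 0 < ε → ε < ε₀ → ∀ x ∈ K,
      ‖iteratedFDeriv ℝ n (st15_uh d α u ε) x‖ ≤ C * (ε⁻¹) ^ N := by
  classical
  have hA2c : IsCompact (Metric.closedBall (0:EuclideanSpace ℝ (Fin d)) 2
      \ Metric.ball 0 (1/2)) := (isCompact_closedBall _ _).diff Metric.isOpen_ball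
  have hA2mem : ∀ z : EuclideanSpace ℝ (Fin d), 1/2 ≤ ‖z‖ → ‖z‖ ≤ 2 →
      z ∈ Metric.closedBall (0:EuclideanSpace ℝ (Fin d)) 2 \ Metric.ball 0 (1/2) := by
    intro z h1 h2
    constructor
    · simpa [Metric.mem_closedBall, dist_zero_right] using h2
    · simp only [Metric.mem_ball, dist_zero_right, not_lt]
      exact h1
  have hA2Ω : (Metric.closedBall (0:EuclideanSpace ℝ (Fin d)) 2 \ Metric.ball 0 (1/2))
      ⊆ ({0}ᶜ : Set (EuclideanSpace ℝ (Fin d))) := by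
    intro z hz
    have h1 : ¬ (‖z‖ < 1/2) := by
      simpa [Metric.mem_ball, dist_zero_right] using hz.2
    simp only [mem_compl_iff, mem_singleton_iff]
    intro h; rw [h] at h1; simp at h1
  obtain ⟨N₁, C₁, ε₁, hε₁pos, hε₁le1, hC₁, hb₁⟩ := st15_moderate_unif hu hA2c hA2Ω n
  have hK₁c : IsCompact (K \ Metric.ball 0 1) := hK.diff Metric.isOpen_ball
  have hK₁Ω : (K \ Metric.ball 0 1) ⊆ ({0}ᶜ : Set (EuclideanSpace ℝ (Fin d))) := by
    intro z hz
    have h1 : ¬ (‖z‖ < 1) := by simpa [Metric.mem_ball, dist_zero_right] using hz.2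
    simp only [mem_compl_iff, mem_singleton_iff]
    intro h; rw [h] at h1; simp at h1
  obtain ⟨N₂, C₂, ε₂, hε₂pos, hε₂le1, hC₂, hb₂⟩ := st15_moderate_unif hu hK₁c hK₁Ω n
  obtain ⟨Cφ, hCφ0, hCφ⟩ := st15_sup_bounds (st15_phi_smooth (d := d)) hA2c n
  obtain ⟨Cη, hCη0, hCη⟩ := st15_sup_bounds
    ((contDiff_const (c := (1:ℝ))).sub (st15_eta_smooth (d := d))) hK n
  -- pointwise bound for derivatives of `st15_bphi`
  have hbphi : ∀ k : ℕ, ∀ i ≤ n, ∀ z : EuclideanSpace ℝ (Fin d),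
      ‖iteratedFDeriv ℝ i (st15_bphi d α k) z‖ ≤ (2:ℝ)^(k*⌈|α|⌉₊) * Cφ := by
    intro k i hi z
    have heq : (st15_bphi d α k) = (st15_c α k)⁻¹ • (st15_phi d) := by
      funext w; simp [st15_bphi, smul_eq_mul]
    have hder : ‖iteratedFDeriv ℝ i (st15_bphi d α k) z‖
        = (st15_c α k)⁻¹ * ‖iteratedFDeriv ℝ i (st15_phi d) z‖ := by
      rw [heq, iteratedFDeriv_const_smul_apply (st15_of_top st15_phi_smooth i).contDiffAt, norm_smul,
        Real.norm_eq_abs, abs_of_pos (inv_pos.mpr (st15_c_pos α k))]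
    rw [hder]
    rcases lt_or_ge ‖z‖ (1/2) with hz | hz
    · have hzero : iteratedFDeriv ℝ i (st15_phi d) z = 0 := by
        refine st15_iteratedFDeriv_zero_of_eqOn
          (s := {y : EuclideanSpace ℝ (Fin d) | ‖y‖ < 1/2})
          (isOpen_lt continuous_norm continuous_const) hz ?_ i
        exact fun y hy => st15_phi_lo (le_of_lt hy)
      rw [hzero]
      simp only [norm_zero, mul_zero]
      positivity
    · rcases lt_or_ge 2 ‖z‖ with hz2 | hz2
      · have hzero : iteratedFDeriv ℝ i (st15_phi d) z = 0 := by
          refine st15_iteratedFDeriv_zero_of_eqOn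
            (s := {y : EuclideanSpace ℝ (Fin d) | 2 < ‖y‖})
            (isOpen_lt continuous_const continuous_norm) hz2 ?_ i
          exact fun y hy => st15_phi_hi (le_of_lt hy)
        rw [hzero]
        simp only [norm_zero, mul_zero]
        positivity
      · exact mul_le_mul (st15_c_inv_le α k) (hCφ i hi z (hA2mem z hz hz2))
          (norm_nonneg _) (by positivity)
  have hεle1' : ∀ {ε : ℝ}, ε < ε₁ → ε ≤ 1 := fun h => (h.trans_le hε₁le1).le
  -- bound for the rescale-truncated pieces
  have hψ : ∀ k : ℕ, ∀ ε : ℝ, 0 < ε → ε < ε₁ → ∀ z : EuclideanSpace ℝ (Fin d),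
      ‖iteratedFDeriv ℝ n (fun w => st15_bphi d α k w • u ε w) z‖
        ≤ (2:ℝ)^(k*⌈|α|⌉₊) * ((2:ℝ)^n * Cφ * C₁) * (ε⁻¹)^N₁ := by
    intro k ε hε hεlt z
    have hu_ε : ContDiffOn ℝ (⊤:ℕ∞) (u ε) ({0}ᶜ) := hu.1 ε ⟨hε, hεle1' hεlt⟩
    rcases lt_or_ge ‖z‖ (1/2) with hz | hz
    · rw [st15_trunc_zero (by norm_num : (0:ℝ) < 1/2) (fun y hy => st15_bphi_lo k hy) hz n]
      simp only [norm_zero]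
      positivity
    · rcases lt_or_ge 2 ‖z‖ with hz2 | hz2
      · rw [st15_trunc_zero' (fun y hy => st15_bphi_hi k hy.le) hz2 n]
        simp only [norm_zero]
        positivity
      · have hzne : z ≠ 0 := by
          intro h; rw [h] at hz; simp at hz; linarith
        refine le_trans (st15_trunc_bound (st15_bphi_smooth k) hu_ε hzne n) ?_
        have hstep : ∀ i ∈ Finset.range (n+1),
            (n.choose i : ℝ) * ‖iteratedFDeriv ℝ i (st15_bphi d α k) z‖ *
              ‖iteratedFDerivWithin ℝ (n-i) (u ε) ({0}ᶜ) z‖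
            ≤ (n.choose i : ℝ) * (((2:ℝ)^(k*⌈|α|⌉₊) * Cφ) * (C₁ * (ε⁻¹)^N₁)) := by
          intro i hi
          rw [mul_assoc]
          refine mul_le_mul_of_nonneg_left ?_ (by positivity)
          exact mul_le_mul (hbphi k i (Nat.lt_succ_iff.mp (Finset.mem_range.mp hi)) z)
            (hb₁ ε hε hεlt (n-i) (Nat.sub_le n i) z (hA2mem z hz hz2))
            (norm_nonneg _) (by positivity)
        refine le_trans (Finset.sum_le_sum hstep) (le_of_eq ?_)
        rw [← Finset.sum_mul]
        have hchoose : (∑ i ∈ Finset.range (n+1), (n.choose i : ℝ)) = (2:ℝ)^n := by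
          rw [← Nat.cast_sum, Nat.sum_range_choose]
          push_cast; ring
        rw [hchoose]
        ring
  -- smoothness of the individual pieces
  have hTsmooth : ∀ k : ℕ, ∀ ε : ℝ, 0 < ε → ε ≤ 1 → ContDiff ℝ (⊤:ℕ∞)
      (fun w : EuclideanSpace ℝ (Fin d) =>
        st15_bphi d α k ((2:ℝ)^k • w) • u ε ((2:ℝ)^k • w)) := by
    intro k ε hε hε1
    exact st15_scale_smooth (st15_trunc_smooth (st15_bphi_smooth k) (hu.1 ε ⟨hε, hε1⟩)
      (by norm_num : (0:ℝ) < 1/2) (fun y hy => st15_bphi_lo k hy)) ((2:ℝ)^k)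
  -- bound for each summand in the series
  have hterm : ∀ ε : ℝ, 0 < ε → ε < ε₁ → ∀ k ≤ st15_Kf ε, ∀ x : EuclideanSpace ℝ (Fin d),
      ‖iteratedFDeriv ℝ n (fun w =>
          st15_bphi d α k ((2:ℝ)^k • w) • u ε ((2:ℝ)^k • w)) x‖
        ≤ (2*ε⁻¹)^(n + ⌈|α|⌉₊) * (((2:ℝ)^n * Cφ * C₁) * (ε⁻¹)^N₁) := by
    intro ε hε hεlt k hk x
    have hsm : ContDiff ℝ (⊤:ℕ∞)
        (fun w : EuclideanSpace ℝ (Fin d) => st15_bphi d α k w • u ε w) :=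
      st15_trunc_smooth (st15_bphi_smooth k) (hu.1 ε ⟨hε, hεle1' hεlt⟩)
        (by norm_num : (0:ℝ) < 1/2) (fun y hy => st15_bphi_lo k hy)
    calc ‖iteratedFDeriv ℝ n (fun w =>
            st15_bphi d α k ((2:ℝ)^k • w) • u ε ((2:ℝ)^k • w)) x‖
        ≤ |(2:ℝ)^k|^n * ‖iteratedFDeriv ℝ n
            (fun w => st15_bphi d α k w • u ε w) ((2:ℝ)^k • x)‖ :=
          st15_norm_iteratedFDeriv_scale hsm ((2:ℝ)^k) n x
      _ ≤ ((2:ℝ)^k)^n * ((2:ℝ)^(k*⌈|α|⌉₊) * ((2:ℝ)^n * Cφ * C₁) * (ε⁻¹)^N₁) := by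
          rw [abs_of_pos (by positivity : (0:ℝ) < (2:ℝ)^k)]
          exact mul_le_mul_of_nonneg_left (hψ k ε hε hεlt _) (by positivity)
      _ = ((2:ℝ)^k)^(n + ⌈|α|⌉₊) * (((2:ℝ)^n * Cφ * C₁) * (ε⁻¹)^N₁) := by
          rw [pow_add, pow_mul]; ring
      _ ≤ (2*ε⁻¹)^(n + ⌈|α|⌉₊) * (((2:ℝ)^n * Cφ * C₁) * (ε⁻¹)^N₁) := by
          refine mul_le_mul_of_nonneg_right ?_ (by positivity)
          refine pow_le_pow_left₀ (by positivity) ?_ _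
          calc (2:ℝ)^k ≤ (2:ℝ)^(st15_Kf ε) := pow_le_pow_right₀ one_le_two hk
            _ ≤ 2*ε⁻¹ := st15_Kf_pow_le hε (hεle1' hεlt)
  -- bound for the full series
  have hsum : ∀ ε : ℝ, 0 < ε → ε < ε₁ → ∀ x : EuclideanSpace ℝ (Fin d),
      ‖iteratedFDeriv ℝ n (fun w => ∑ k ∈ Finset.range (st15_Kf ε + 1),
          st15_bphi d α k ((2:ℝ)^k • w) • u ε ((2:ℝ)^k • w)) x‖
        ≤ (4*ε⁻¹) * ((2*ε⁻¹)^(n + ⌈|α|⌉₊) * (((2:ℝ)^n * Cφ * C₁) * (ε⁻¹)^N₁)) := by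
    intro ε hε hεlt x
    have hcd : ∀ k ∈ Finset.range (st15_Kf ε + 1), ContDiff ℝ n
        (fun w : EuclideanSpace ℝ (Fin d) =>
          st15_bphi d α k ((2:ℝ)^k • w) • u ε ((2:ℝ)^k • w)) :=
      fun k _ => st15_of_top (hTsmooth k ε hε (hεle1' hεlt)) n
    have heq := iteratedFDeriv_sum (𝕜 := ℝ) hcd
    have heqx := congrFun heq x
    rw [Finset.sum_apply] at heqx
    calc ‖iteratedFDeriv ℝ n (fun w => ∑ k ∈ Finset.range (st15_Kf ε + 1),
            st15_bphi d α k ((2:ℝ)^k • w) • u ε ((2:ℝ)^k • w)) x‖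
        = ‖∑ k ∈ Finset.range (st15_Kf ε + 1), iteratedFDeriv ℝ n
            (fun w => st15_bphi d α k ((2:ℝ)^k • w) • u ε ((2:ℝ)^k • w)) x‖ := by
          rw [heqx]
      _ ≤ ∑ k ∈ Finset.range (st15_Kf ε + 1), ‖iteratedFDeriv ℝ n
            (fun w => st15_bphi d α k ((2:ℝ)^k • w) • u ε ((2:ℝ)^k • w)) x‖ :=
          norm_sum_le _ _
      _ ≤ ∑ _k ∈ Finset.range (st15_Kf ε + 1),
            (2*ε⁻¹)^(n + ⌈|α|⌉₊) * (((2:ℝ)^n * Cφ * C₁) * (ε⁻¹)^N₁) :=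
          Finset.sum_le_sum (fun k hk =>
            hterm ε hε hεlt k (Nat.lt_succ_iff.mp (Finset.mem_range.mp hk)) x)
      _ = ((st15_Kf ε + 1 : ℕ) : ℝ) *
            ((2*ε⁻¹)^(n + ⌈|α|⌉₊) * (((2:ℝ)^n * Cφ * C₁) * (ε⁻¹)^N₁)) := by
          rw [Finset.sum_const, Finset.card_range, nsmul_eq_mul]
      _ ≤ (4*ε⁻¹) * ((2*ε⁻¹)^(n + ⌈|α|⌉₊) * (((2:ℝ)^n * Cφ * C₁) * (ε⁻¹)^N₁)) := by
          exact mul_le_mul_of_nonneg_right (st15_Kf_card_le hε (hεle1' hεlt)) (by positivity)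
  -- bound for the outer term
  have hG : ∀ ε : ℝ, 0 < ε → ε < ε₂ → ∀ x ∈ K,
      ‖iteratedFDeriv ℝ n (fun w => (1 - st15_eta d w) • u ε w) x‖
        ≤ (2:ℝ)^n * (Cη * (C₂ * (ε⁻¹)^N₂)) := by
    intro ε hε hεlt x hx
    have hu_ε : ContDiffOn ℝ (⊤:ℕ∞) (u ε) ({0}ᶜ) := hu.1 ε ⟨hε, (hεlt.trans_le hε₂le1).le⟩
    rcases lt_or_ge ‖x‖ 1 with h1 | h1
    · rw [st15_trunc_zero one_pos (fun y hy => by simp [st15_eta_one hy.le]) h1 n]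
      simp only [norm_zero]
      positivity
    · have hxne : x ≠ 0 := by intro h; rw [h] at h1; norm_num at h1
      have hxK₁ : x ∈ K \ Metric.ball 0 1 := by
        refine ⟨hx, ?_⟩
        simp only [Metric.mem_ball, dist_zero_right, not_lt]
        exact h1
      refine le_trans (st15_trunc_bound (b := fun w => 1 - st15_eta d w)
        (contDiff_const.sub st15_eta_smooth) hu_ε hxne n) ?_
      have hstep : ∀ i ∈ Finset.range (n+1),
          (n.choose i : ℝ) * ‖iteratedFDeriv ℝ i (fun w => 1 - st15_eta d w) x‖ *
            ‖iteratedFDerivWithin ℝ (n-i) (u ε) ({0}ᶜ) x‖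
          ≤ (n.choose i : ℝ) * (Cη * (C₂ * (ε⁻¹)^N₂)) := by
        intro i hi
        rw [mul_assoc]
        refine mul_le_mul_of_nonneg_left ?_ (by positivity)
        exact mul_le_mul (hCη i (Nat.lt_succ_iff.mp (Finset.mem_range.mp hi)) x hx)
          (hb₂ ε hε hεlt (n-i) (Nat.sub_le n i) x hxK₁) (norm_nonneg _) hCη0
      refine le_trans (Finset.sum_le_sum hstep) (le_of_eq ?_)
      rw [← Finset.sum_mul, ← Nat.cast_sum, Nat.sum_range_choose]
      push_cast; ring
  -- assemble
  refine ⟨1 + (n + ⌈|α|⌉₊) + N₁ + N₂,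
    4 * 2^(n + ⌈|α|⌉₊) * ((2:ℝ)^n * Cφ * C₁) + (2:ℝ)^n * (Cη * C₂),
    min ε₁ ε₂, lt_min hε₁pos hε₂pos, (min_le_left _ _).trans hε₁le1, by positivity, ?_⟩
  intro ε hε hεlt x hx
  have hεlt₁ : ε < ε₁ := lt_of_lt_of_le hεlt (min_le_left _ _)
  have hεlt₂ : ε < ε₂ := lt_of_lt_of_le hεlt (min_le_right _ _)
  have h1ε : 1 ≤ ε⁻¹ := st15_one_le_inv hε (hεle1' hεlt₁)
  have hSsm : ContDiff ℝ (⊤:ℕ∞) (fun w : EuclideanSpace ℝ (Fin d) =>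
      ∑ k ∈ Finset.range (st15_Kf ε + 1),
        st15_bphi d α k ((2:ℝ)^k • w) • u ε ((2:ℝ)^k • w)) :=
    ContDiff.sum (fun k _ => hTsmooth k ε hε (hεle1' hεlt₁))
  have hGsm : ContDiff ℝ (⊤:ℕ∞) (fun w : EuclideanSpace ℝ (Fin d) =>
      (1 - st15_eta d w) • u ε w) :=
    st15_trunc_smooth (contDiff_const.sub st15_eta_smooth) (hu.1 ε ⟨hε, hεle1' hεlt₁⟩)
      one_pos (fun y hy => by simp [st15_eta_one hy.le])
  have hadd : iteratedFDeriv ℝ n (st15_uh d α u ε) x =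
      iteratedFDeriv ℝ n (fun w => ∑ k ∈ Finset.range (st15_Kf ε + 1),
        st15_bphi d α k ((2:ℝ)^k • w) • u ε ((2:ℝ)^k • w)) x +
      iteratedFDeriv ℝ n (fun w => (1 - st15_eta d w) • u ε w) x := by
    exact iteratedFDeriv_add_apply' (st15_of_top hSsm n).contDiffAt (st15_of_top hGsm n).contDiffAt
  rw [hadd]
  have e1 : (4*ε⁻¹) * ((2*ε⁻¹)^(n + ⌈|α|⌉₊) * (((2:ℝ)^n * Cφ * C₁) * (ε⁻¹)^N₁))
      = (4 * 2^(n + ⌈|α|⌉₊) * ((2:ℝ)^n * Cφ * C₁)) * (ε⁻¹)^(1 + (n + ⌈|α|⌉₊) + N₁) := by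
    ring
  calc ‖iteratedFDeriv ℝ n (fun w => ∑ k ∈ Finset.range (st15_Kf ε + 1),
          st15_bphi d α k ((2:ℝ)^k • w) • u ε ((2:ℝ)^k • w)) x +
        iteratedFDeriv ℝ n (fun w => (1 - st15_eta d w) • u ε w) x‖
      ≤ ‖iteratedFDeriv ℝ n (fun w => ∑ k ∈ Finset.range (st15_Kf ε + 1),
          st15_bphi d α k ((2:ℝ)^k • w) • u ε ((2:ℝ)^k • w)) x‖ +
        ‖iteratedFDeriv ℝ n (fun w => (1 - st15_eta d w) • u ε w) x‖ := norm_add_le _ _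
    _ ≤ (4*ε⁻¹) * ((2*ε⁻¹)^(n + ⌈|α|⌉₊) * (((2:ℝ)^n * Cφ * C₁) * (ε⁻¹)^N₁)) +
        (2:ℝ)^n * (Cη * (C₂ * (ε⁻¹)^N₂)) :=
      add_le_add (hsum ε hε hεlt₁ x) (hG ε hε hεlt₂ x hx)
    _ ≤ (4 * 2^(n + ⌈|α|⌉₊) * ((2:ℝ)^n * Cφ * C₁)) * (ε⁻¹)^(1 + (n + ⌈|α|⌉₊) + N₁ + N₂) +
        ((2:ℝ)^n * (Cη * C₂)) * (ε⁻¹)^(1 + (n + ⌈|α|⌉₊) + N₁ + N₂) := by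
      refine add_le_add ?_ ?_
      · rw [e1]
        exact mul_le_mul_of_nonneg_left
          (pow_le_pow_right₀ h1ε (by omega)) (by positivity)
      · calc (2:ℝ)^n * (Cη * (C₂ * (ε⁻¹)^N₂))
            = ((2:ℝ)^n * (Cη * C₂)) * (ε⁻¹)^N₂ := by ring
          _ ≤ ((2:ℝ)^n * (Cη * C₂)) * (ε⁻¹)^(1 + (n + ⌈|α|⌉₊) + N₁ + N₂) :=
            mul_le_mul_of_nonneg_left (pow_le_pow_right₀ h1ε (by omega)) (by positivity)
    _ = (4 * 2^(n + ⌈|α|⌉₊) * ((2:ℝ)^n * Cφ * C₁) + (2:ℝ)^n * (Cη * C₂)) *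
          (ε⁻¹)^(1 + (n + ⌈|α|⌉₊) + N₁ + N₂) := by ring



lemma st15_bphi_deriv (n : ℕ) : ∃ Cφ : ℝ, 0 ≤ Cφ ∧ ∀ k : ℕ, ∀ i ≤ n,
    ∀ z : EuclideanSpace ℝ (Fin d),
    ‖iteratedFDeriv ℝ i (st15_bphi d α k) z‖ ≤ (2:ℝ)^(k*⌈|α|⌉₊) * Cφ := by
  have hA2c : IsCompact (Metric.closedBall (0:EuclideanSpace ℝ (Fin d)) 2
      \ Metric.ball 0 (1/2)) := (isCompact_closedBall _ _).diff Metric.isOpen_ball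
  obtain ⟨Cφ, hCφ0, hCφ⟩ := st15_sup_bounds (st15_phi_smooth (d := d)) hA2c n
  refine ⟨Cφ, hCφ0, ?_⟩
  intro k i hi z
  have heq : (st15_bphi d α k) = (st15_c α k)⁻¹ • (st15_phi d) := by
    funext w; simp [st15_bphi, smul_eq_mul]
  have hder : ‖iteratedFDeriv ℝ i (st15_bphi d α k) z‖
      = (st15_c α k)⁻¹ * ‖iteratedFDeriv ℝ i (st15_phi d) z‖ := by
    rw [heq, iteratedFDeriv_const_smul_apply (st15_of_top st15_phi_smooth i).contDiffAt, norm_smul,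
      Real.norm_eq_abs, abs_of_pos (inv_pos.mpr (st15_c_pos α k))]
  rw [hder]
  rcases lt_or_ge ‖z‖ (1/2) with hz | hz
  · have hzero : iteratedFDeriv ℝ i (st15_phi d) z = 0 := by
      refine st15_iteratedFDeriv_zero_of_eqOn
        (s := {y : EuclideanSpace ℝ (Fin d) | ‖y‖ < 1/2})
        (isOpen_lt continuous_norm continuous_const) hz ?_ i
      exact fun y hy => st15_phi_lo (le_of_lt hy)
    rw [hzero]
    simp only [norm_zero, mul_zero]
    positivity
  · rcases lt_or_ge 2 ‖z‖ with hz2 | hz2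
    · have hzero : iteratedFDeriv ℝ i (st15_phi d) z = 0 := by
        refine st15_iteratedFDeriv_zero_of_eqOn
          (s := {y : EuclideanSpace ℝ (Fin d) | 2 < ‖y‖})
          (isOpen_lt continuous_const continuous_norm) hz2 ?_ i
        exact fun y hy => st15_phi_hi (le_of_lt hy)
      rw [hzero]
      simp only [norm_zero, mul_zero]
      positivity
    · refine mul_le_mul (st15_c_inv_le α k) (hCφ i hi z ?_) (norm_nonneg _) (by positivity)
      constructor
      · simpa [Metric.mem_closedBall, dist_zero_right] using hz2
      · simp only [Metric.mem_ball, dist_zero_right, not_lt]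
        exact hz

lemma st15_uh_diff_negligible
    (hu : IsModerate ({0}ᶜ : Set (EuclideanSpace ℝ (Fin d))) u)
    (hhom : ∀ lam : ℝ, 0 < lam →
      IsNegligible ({0}ᶜ : Set (EuclideanSpace ℝ (Fin d)))
        (fun ε x => u ε (lam • x) - ((lam ^ α : ℝ) : ℂ) * u ε x))
    {K : Set (EuclideanSpace ℝ (Fin d))} (hK : IsCompact K)
    (hKΩ : K ⊆ ({0}ᶜ : Set (EuclideanSpace ℝ (Fin d)))) (n m : ℕ) :
    ∃ C ε₀ : ℝ, 0 < ε₀ ∧ ∀ ε, 0 < ε → ε < ε₀ → ∀ x ∈ K,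
      ‖iteratedFDerivWithin ℝ n (fun y => st15_uh d α u ε y - u ε y) ({0}ᶜ) x‖
        ≤ C * ε ^ m := by
  classical
  have hΩo : IsOpen ({0}ᶜ : Set (EuclideanSpace ℝ (Fin d))) := isOpen_compl_singleton
  -- a positive lower bound for the norm on K
  obtain ⟨r₀, hr₀pos, hr₀⟩ : ∃ r₀ : ℝ, 0 < r₀ ∧ ∀ x ∈ K, r₀ ≤ ‖x‖ := by
    rcases K.eq_empty_or_nonempty with hKe | hKne
    · exact ⟨1, one_pos, fun x hx => absurd hx (by simp [hKe])⟩
    · obtain ⟨x₀, hx₀K, hmin⟩ := hK.exists_isMinOn hKne continuous_norm.continuousOn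
      have hx₀ne : x₀ ≠ 0 := by
        have := hKΩ hx₀K
        simpa [mem_compl_iff, mem_singleton_iff] using this
      exact ⟨‖x₀‖, norm_pos_iff.mpr hx₀ne, fun x hx => isMinOn_iff.mp hmin x hx⟩
  obtain ⟨k₁, hk₁⟩ : ∃ k₁ : ℕ, 4/r₀ < (2:ℝ)^k₁ := pow_unbounded_of_one_lt (4/r₀) one_lt_two
  -- outside scale: points `2^k • y` with `k₁ ≤ k` are far away
  have hfar : ∀ y : EuclideanSpace ℝ (Fin d), r₀/2 < ‖y‖ → ∀ k : ℕ, k₁ ≤ k →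
      2 ≤ ‖(2:ℝ)^k • y‖ := by
    intro y hy k hk
    rw [norm_smul, Real.norm_eq_abs, abs_of_pos (by positivity : (0:ℝ) < (2:ℝ)^k)]
    have h2k : (2:ℝ)^k₁ ≤ (2:ℝ)^k := pow_le_pow_right₀ one_le_two hk
    have h4r : 4/r₀ * (r₀/2) = 2 := by field_simp; ring
    calc (2:ℝ) = 4/r₀ * (r₀/2) := h4r.symm
      _ ≤ (2:ℝ)^k * ‖y‖ := by
          apply mul_le_mul (hk₁.le.trans h2k) hy.le (by positivity) (by positivity)
  -- uniform negligibility of the finitely many homogeneity errors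
  obtain ⟨Ch, εh, hCh0, hεhpos, hCh⟩ := st15_combine
    (p := fun k C ε => ∀ i ≤ n, ∀ x ∈ K,
      ‖iteratedFDerivWithin ℝ i
        (fun y => u ε ((2:ℝ)^k • y) - ((((2:ℝ)^k) ^ α : ℝ) : ℂ) * u ε y) ({0}ᶜ) x‖
          ≤ C * ε ^ m)
    (by
      intro k C C' ε hε hp hle i hi x hx
      exact (hp i hi x hx).trans (mul_le_mul_of_nonneg_right hle (by positivity)))
    k₁
    (by
      intro k _
      obtain ⟨C, ε₀, hC0, hε₀, h⟩ :=
        st15_negligible_unif (hhom ((2:ℝ)^k) (by positivity)) hK hKΩ n m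
      exact ⟨C, ε₀, hC0, hε₀, fun ε hε hε' i hi x hx => h ε hε hε' i hi x hx⟩)
  -- bound for the derivatives of the rescaled cutoffs
  obtain ⟨Cφ, hCφ0, hCφ⟩ := st15_bphi_deriv (d := d) (α := α) n
  set CB : ℝ := ((2:ℝ)^k₁)^n * ((2:ℝ)^(k₁*⌈|α|⌉₊) * Cφ) with hCBdef
  have hCB0 : 0 ≤ CB := by positivity
  have hB : ∀ k ≤ k₁, ∀ j ≤ n, ∀ x : EuclideanSpace ℝ (Fin d),
      ‖iteratedFDeriv ℝ j (fun y => st15_bphi d α k ((2:ℝ)^k • y)) x‖ ≤ CB := by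
    intro k hk j hj x
    calc ‖iteratedFDeriv ℝ j (fun y => st15_bphi d α k ((2:ℝ)^k • y)) x‖
        ≤ |(2:ℝ)^k|^j * ‖iteratedFDeriv ℝ j (st15_bphi d α k) ((2:ℝ)^k • x)‖ :=
          st15_norm_iteratedFDeriv_scale (st15_bphi_smooth k) ((2:ℝ)^k) j x
      _ ≤ ((2:ℝ)^k₁)^n * ((2:ℝ)^(k₁*⌈|α|⌉₊) * Cφ) := by
          refine mul_le_mul ?_ ?_ (norm_nonneg _) (by positivity)
          · rw [abs_of_pos (by positivity : (0:ℝ) < (2:ℝ)^k)]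
            calc ((2:ℝ)^k)^j ≤ ((2:ℝ)^k)^n :=
                  pow_le_pow_right₀ (one_le_pow₀ one_le_two) hj
              _ ≤ ((2:ℝ)^k₁)^n :=
                  pow_le_pow_left₀ (by positivity) (pow_le_pow_right₀ one_le_two hk) n
          · refine (hCφ k j hj _).trans ?_
            refine mul_le_mul_of_nonneg_right ?_ hCφ0
            exact pow_le_pow_right₀ one_le_two (Nat.mul_le_mul_right _ hk)
  -- the pointwise identity on a neighborhood of K
  have hident : ∀ ε : ℝ, 0 < ε → ε < ((2:ℝ)^k₁)⁻¹ →
      ∀ y : EuclideanSpace ℝ (Fin d), r₀/2 < ‖y‖ →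
      st15_uh d α u ε y - u ε y = ∑ k ∈ Finset.range k₁,
        st15_bphi d α k ((2:ℝ)^k • y) •
          (u ε ((2:ℝ)^k • y) - ((((2:ℝ)^k) ^ α : ℝ) : ℂ) * u ε y) := by
    intro ε hε hεlt y hy
    have hk₁Kf : k₁ ≤ st15_Kf ε := st15_Kf_ge hε hεlt
    have hsub : Finset.range k₁ ⊆ Finset.range (st15_Kf ε + 1) :=
      Finset.range_subset_range.mpr (by omega)
    -- terms with k ≥ k₁ vanish
    have htrunc : ∑ k ∈ Finset.range (st15_Kf ε + 1),
        st15_bphi d α k ((2:ℝ)^k • y) • u ε ((2:ℝ)^k • y)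
        = ∑ k ∈ Finset.range k₁, st15_bphi d α k ((2:ℝ)^k • y) • u ε ((2:ℝ)^k • y) := by
      refine (Finset.sum_subset hsub ?_).symm
      intro k _ hk
      have hk' : k₁ ≤ k := by
        by_contra h
        exact hk (Finset.mem_range.mpr (by omega))
      rw [st15_bphi_hi k (hfar y hy k hk'), zero_smul]
    -- expand the right-hand side
    have hexp : ∀ k : ℕ,
        st15_bphi d α k ((2:ℝ)^k • y) •
          (u ε ((2:ℝ)^k • y) - ((((2:ℝ)^k) ^ α : ℝ) : ℂ) * u ε y)
        = st15_bphi d α k ((2:ℝ)^k • y) • u ε ((2:ℝ)^k • y)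
          - st15_phi d ((2:ℝ)^k • y) • u ε y := by
      intro k
      rw [smul_sub]
      congr 1
      have h1 : ((((2:ℝ)^k) ^ α : ℝ) : ℂ) * u ε y = st15_c α k • u ε y := by
        rw [Complex.real_smul]; rfl
      rw [h1, smul_smul]
      congr 1
      rw [st15_bphi, mul_comm ((st15_c α k)⁻¹) (st15_phi d ((2:ℝ)^k • y)), mul_assoc,
        inv_mul_cancel₀ (ne_of_gt (st15_c_pos α k)), mul_one]
    have htel : ∑ k ∈ Finset.range k₁, st15_phi d ((2:ℝ)^k • y) • u ε y
        = st15_eta d y • u ε y := by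
      rw [← Finset.sum_smul, st15_telescope y k₁,
        st15_eta_zero (hfar y hy k₁ le_rfl), sub_zero]
    calc st15_uh d α u ε y - u ε y
        = (∑ k ∈ Finset.range (st15_Kf ε + 1),
            st15_bphi d α k ((2:ℝ)^k • y) • u ε ((2:ℝ)^k • y))
          + (1 - st15_eta d y) • u ε y - u ε y := rfl
      _ = (∑ k ∈ Finset.range k₁, st15_bphi d α k ((2:ℝ)^k • y) • u ε ((2:ℝ)^k • y))
          - st15_eta d y • u ε y := by
          rw [htrunc, sub_smul, one_smul]
          ring
      _ = ∑ k ∈ Finset.range k₁, (st15_bphi d α k ((2:ℝ)^k • y) • u ε ((2:ℝ)^k • y)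
            - st15_phi d ((2:ℝ)^k • y) • u ε y) := by
          rw [Finset.sum_sub_distrib, htel]
      _ = ∑ k ∈ Finset.range k₁,
            st15_bphi d α k ((2:ℝ)^k • y) •
              (u ε ((2:ℝ)^k • y) - ((((2:ℝ)^k) ^ α : ℝ) : ℂ) * u ε y) := by
          exact (Finset.sum_congr rfl (fun k _ => (hexp k))).symm
  -- final estimate
  refine ⟨(k₁:ℝ) * ((2:ℝ)^n * (CB * Ch)), min εh (min ((2:ℝ)^k₁)⁻¹ 1),
    lt_min hεhpos (lt_min (by positivity) one_pos), ?_⟩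
  intro ε hε hεlt x hx
  have hεh' : ε < εh := lt_of_lt_of_le hεlt (min_le_left _ _)
  have hεk : ε < ((2:ℝ)^k₁)⁻¹ :=
    lt_of_lt_of_le hεlt ((min_le_right _ _).trans (min_le_left _ _))
  have hε1 : ε ≤ 1 := le_of_lt (lt_of_lt_of_le hεlt ((min_le_right _ _).trans (min_le_right _ _)))
  have hxΩ : x ∈ ({0}ᶜ : Set (EuclideanSpace ℝ (Fin d))) := hKΩ hx
  have hxV : r₀/2 < ‖x‖ := lt_of_lt_of_le (by linarith) (hr₀ x hx)
  have hHk : ∀ k : ℕ, ContDiffOn ℝ (⊤:ℕ∞)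
      (fun y => u ε ((2:ℝ)^k • y) - ((((2:ℝ)^k) ^ α : ℝ) : ℂ) * u ε y) ({0}ᶜ) :=
    fun k => (hhom ((2:ℝ)^k) (by positivity)).1 ε ⟨hε, hε1⟩
  have hbsm : ∀ k : ℕ, ContDiff ℝ (⊤:ℕ∞)
      (fun y : EuclideanSpace ℝ (Fin d) => st15_bphi d α k ((2:ℝ)^k • y)) :=
    fun k => (st15_bphi_smooth k).comp (contDiff_const_smul _)
  have hterm_cd : ∀ k ∈ Finset.range k₁, ContDiffOn ℝ (n:ℕ)
      (fun y => st15_bphi d α k ((2:ℝ)^k • y) •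
        (u ε ((2:ℝ)^k • y) - ((((2:ℝ)^k) ^ α : ℝ) : ℂ) * u ε y)) ({0}ᶜ) :=
    fun k _ => (((hbsm k).contDiffOn).smul (hHk k)).of_le (by exact_mod_cast le_top)
  have e0 : iteratedFDerivWithin ℝ n (fun y => st15_uh d α u ε y - u ε y) ({0}ᶜ) x
      = iteratedFDeriv ℝ n (fun y => st15_uh d α u ε y - u ε y) x :=
    iteratedFDerivWithin_of_isOpen n hΩo hxΩ
  have e1 : iteratedFDeriv ℝ n (fun y => st15_uh d α u ε y - u ε y) x
      = iteratedFDeriv ℝ n (fun y => ∑ k ∈ Finset.range k₁,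
          st15_bphi d α k ((2:ℝ)^k • y) •
            (u ε ((2:ℝ)^k • y) - ((((2:ℝ)^k) ^ α : ℝ) : ℂ) * u ε y)) x := by
    refine st15_iteratedFDeriv_congr (s := {y : EuclideanSpace ℝ (Fin d) | r₀/2 < ‖y‖})
      (isOpen_lt continuous_const continuous_norm) hxV ?_ n
    exact fun y hy => hident ε hε hεk y hy
  have e2 : iteratedFDeriv ℝ n (fun y => ∑ k ∈ Finset.range k₁,
        st15_bphi d α k ((2:ℝ)^k • y) •
          (u ε ((2:ℝ)^k • y) - ((((2:ℝ)^k) ^ α : ℝ) : ℂ) * u ε y)) x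
      = iteratedFDerivWithin ℝ n (fun y => ∑ k ∈ Finset.range k₁,
        st15_bphi d α k ((2:ℝ)^k • y) •
          (u ε ((2:ℝ)^k • y) - ((((2:ℝ)^k) ^ α : ℝ) : ℂ) * u ε y)) ({0}ᶜ) x :=
    (iteratedFDerivWithin_of_isOpen n hΩo hxΩ).symm
  have hs := iteratedFDerivWithin_sum_apply (u := Finset.range k₁) (f := fun k y =>
    st15_bphi d α k ((2:ℝ)^k • y) •
      (u ε ((2:ℝ)^k • y) - ((((2:ℝ)^k) ^ α : ℝ) : ℂ) * u ε y)) hΩo.uniqueDiffOn hxΩ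
    (fun k hk => hterm_cd k hk x hxΩ)
  simp only [Finset.sum_fn] at hs
  rw [e0, e1, e2, hs]
  have hper : ∀ k ∈ Finset.range k₁,
      ‖iteratedFDerivWithin ℝ n (fun y => st15_bphi d α k ((2:ℝ)^k • y) •
        (u ε ((2:ℝ)^k • y) - ((((2:ℝ)^k) ^ α : ℝ) : ℂ) * u ε y)) ({0}ᶜ) x‖
      ≤ (2:ℝ)^n * (CB * (Ch * ε^m)) := by
    intro k hk
    have hkk₁ : k < k₁ := Finset.mem_range.mp hk
    refine le_trans (norm_iteratedFDerivWithin_smul_le ((hbsm k).contDiffOn) (hHk k)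
      hΩo.uniqueDiffOn hxΩ (n := n) (by exact_mod_cast le_top)) ?_
    have hstep : ∀ j ∈ Finset.range (n+1),
        (n.choose j : ℝ) * ‖iteratedFDerivWithin ℝ j
            (fun y => st15_bphi d α k ((2:ℝ)^k • y)) ({0}ᶜ) x‖ *
          ‖iteratedFDerivWithin ℝ (n-j)
            (fun y => u ε ((2:ℝ)^k • y) - ((((2:ℝ)^k) ^ α : ℝ) : ℂ) * u ε y) ({0}ᶜ) x‖
        ≤ (n.choose j : ℝ) * (CB * (Ch * ε^m)) := by
      intro j hj
      rw [mul_assoc]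
      refine mul_le_mul_of_nonneg_left ?_ (by positivity)
      refine mul_le_mul ?_ ?_ (norm_nonneg _) hCB0
      · rw [iteratedFDerivWithin_of_isOpen j hΩo hxΩ]
        exact hB k hkk₁.le j (Nat.lt_succ_iff.mp (Finset.mem_range.mp hj)) x
      · exact hCh ε hε hεh' k hkk₁ (n-j) (Nat.sub_le n j) x hx
    refine le_trans (Finset.sum_le_sum hstep) (le_of_eq ?_)
    rw [← Finset.sum_mul, ← Nat.cast_sum, Nat.sum_range_choose]
    push_cast; ring
  calc ‖∑ k ∈ Finset.range k₁, iteratedFDerivWithin ℝ n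
          (fun y => st15_bphi d α k ((2:ℝ)^k • y) •
            (u ε ((2:ℝ)^k • y) - ((((2:ℝ)^k) ^ α : ℝ) : ℂ) * u ε y)) ({0}ᶜ) x‖
      ≤ ∑ k ∈ Finset.range k₁, ‖iteratedFDerivWithin ℝ n
          (fun y => st15_bphi d α k ((2:ℝ)^k • y) •
            (u ε ((2:ℝ)^k • y) - ((((2:ℝ)^k) ^ α : ℝ) : ℂ) * u ε y)) ({0}ᶜ) x‖ :=
        norm_sum_le _ _
    _ ≤ ∑ _k ∈ Finset.range k₁, (2:ℝ)^n * (CB * (Ch * ε^m)) := Finset.sum_le_sum hper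
    _ = (k₁:ℝ) * ((2:ℝ)^n * (CB * (Ch * ε^m))) := by
        rw [Finset.sum_const, Finset.card_range, nsmul_eq_mul]
    _ = (k₁:ℝ) * ((2:ℝ)^n * (CB * Ch)) * ε^m := by ring


/-- a nonzero `u ∈ G(ℝ^d∖{0})` homogeneous of degree `α` is extendable to
an element of `G(ℝ^d)`. -/
theorem statement_15
    (d : ℕ) (α : ℝ)
    (u : ℝ → EuclideanSpace ℝ (Fin d) → ℂ)
    (hu : IsModerate ({0}ᶜ : Set (EuclideanSpace ℝ (Fin d))) u)
    (hne : ¬ IsNegligible ({0}ᶜ : Set (EuclideanSpace ℝ (Fin d))) u)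
    (hhom : ∀ lam : ℝ, 0 < lam →
      IsNegligible ({0}ᶜ : Set (EuclideanSpace ℝ (Fin d)))
        (fun ε x => u ε (lam • x) - ((lam ^ α : ℝ) : ℂ) * u ε x)) :
    ∃ uh : ℝ → EuclideanSpace ℝ (Fin d) → ℂ,
      IsModerate (Set.univ : Set (EuclideanSpace ℝ (Fin d))) uh ∧
      IsNegligible ({0}ᶜ : Set (EuclideanSpace ℝ (Fin d)))
        (fun ε x => uh ε x - u ε x) := by
  refine ⟨st15_uh d α u, ⟨?_, ?_⟩, ?_, ?_⟩
  · intro ε hε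
    exact (st15_uh_smooth ε (hu.1 ε hε)).contDiffOn
  · intro K hK _ n
    obtain ⟨N, C, ε₀, hε₀pos, _, _, h⟩ := st15_uh_moderate hu hK n
    refine ⟨N, C, ε₀, hε₀pos, ?_⟩
    intro ε hε hε' x hx
    rw [iteratedFDerivWithin_univ, st15_invpow hε]
    exact h ε hε hε' x hx
  · intro ε hε
    exact ((st15_uh_smooth ε (hu.1 ε hε)).contDiffOn).sub (hu.1 ε hε)
  · intro K hK hKΩ n m
    obtain ⟨C, ε₀, hε₀pos, h⟩ := st15_uh_diff_negligible hu hhom hK hKΩ n m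
    exact ⟨C, ε₀, hε₀pos, h⟩
end
end

section
/- Let u ∈ G(ℝ^d∖{0}) be homogeneous of degree α ∈ ℝ. Then there exists v ∈ G_τ(ℝ^d) such that K(v)|_{ℝ^d∖{0}} = u in G(ℝ^d∖{0}); equivalently, there is a tempered moderate net (v_ε) on ℝ^d whose restriction to ℝ^d∖{0} differs from a representative of u by a negligible net on ℝ^d∖{0}. -/
open Set Filter Topology MeasureTheory

noncomputable section

variable {E F : Type*} [NormedAddCommGroup E] [NormedSpace ℝ E]
  [NormedAddCommGroup F] [NormedSpace ℝ F]

/-- A net of smooth functions on all of ℝ^d is *tempered moderate*. -/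
def TemperedModerate {E F : Type*} [NormedAddCommGroup E] [NormedSpace ℝ E]
    [NormedAddCommGroup F] [NormedSpace ℝ F] (v : ℝ → E → F) : Prop :=
  (∀ ε ∈ Set.Ioc (0:ℝ) 1, ContDiff ℝ (⊤:ℕ∞) (v ε)) ∧
  ∀ n : ℕ, ∃ N : ℕ, ∃ C : ℝ, ∃ ε₀ : ℝ, 0 < ε₀ ∧ ∀ ε : ℝ, 0 < ε → ε < ε₀ →
    ∀ x : E, ‖iteratedFDeriv ℝ n (v ε) x‖ ≤ C * ε ^ (-(N:ℤ)) * (1 + ‖x‖) ^ N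

def smulCLE (c : ℝ) (hc : c ≠ 0) : E ≃L[ℝ] E :=
  { LinearEquiv.smulOfNeZero ℝ E c hc with
    continuous_toFun := continuous_const_smul c
    continuous_invFun := continuous_const_smul c⁻¹ }

@[simp] lemma smulCLE_apply (c : ℝ) (hc : c ≠ 0) (x : E) : smulCLE c hc x = c • x := rfl

lemma smulCLE_norm_le (c : ℝ) (hc : c ≠ 0) :
    ‖((smulCLE c hc : E ≃L[ℝ] E) : E →L[ℝ] E)‖ ≤ |c| := by
  apply ContinuousLinearMap.opNorm_le_bound _ (abs_nonneg c)
  intro x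
  simp [norm_smul]

lemma scale_bound (f : E → F) {c : ℝ} (hc : c ≠ 0) {s : Set E} (hs : UniqueDiffOn ℝ s)
    (hpre : (fun z : E => c • z) ⁻¹' s = s) {x : E} (hx : c • x ∈ s) (j : ℕ) :
    ‖iteratedFDerivWithin ℝ j (fun z => f (c • z)) s x‖ ≤
      |c| ^ j * ‖iteratedFDerivWithin ℝ j f s (c • x)‖ := by
  have h := (smulCLE (E := E) c hc).iteratedFDerivWithin_comp_right f hs
    (x := x) (by simpa using hx) j
  have hps : (smulCLE (E := E) c hc) ⁻¹' s = s := hpre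
  rw [hps] at h
  have hfe : (f ∘ (smulCLE (E := E) c hc)) = fun z => f (c • z) := rfl
  rw [hfe] at h
  rw [h]
  calc ‖(iteratedFDerivWithin ℝ j f s ((smulCLE (E := E) c hc) x)).compContinuousLinearMap
        fun _ => ((smulCLE (E := E) c hc : E →L[ℝ] E))‖
      ≤ ‖iteratedFDerivWithin ℝ j f s ((smulCLE (E := E) c hc) x)‖ *
        ∏ _i : Fin j, ‖((smulCLE (E := E) c hc : E ≃L[ℝ] E) : E →L[ℝ] E)‖ :=
        ContinuousMultilinearMap.norm_compContinuousLinearMap_le _ _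
    _ ≤ |c| ^ j * ‖iteratedFDerivWithin ℝ j f s (c • x)‖ := by
        rw [Finset.prod_const]
        simp only [Finset.card_univ, Fintype.card_fin, smulCLE_apply]
        rw [mul_comm]
        exact mul_le_mul (pow_le_pow_left₀ (norm_nonneg _) (smulCLE_norm_le c hc) j)
          le_rfl (norm_nonneg _) (by positivity)

lemma scale_bound_univ (f : E → F) {c : ℝ} (hc : c ≠ 0) (x : E) (j : ℕ) :
    ‖iteratedFDeriv ℝ j (fun z => f (c • z)) x‖ ≤
      |c| ^ j * ‖iteratedFDeriv ℝ j f (c • x)‖ := by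
  have h := scale_bound (s := (Set.univ : Set E)) f hc uniqueDiffOn_univ (by simp)
    (Set.mem_univ (c • x)) j
  simpa [iteratedFDerivWithin_univ] using h

lemma iteratedFDeriv_eq_zero_of_eventuallyEq_zero {f : E → F} {x : E} {n : ℕ}
    (h : f =ᶠ[𝓝 x] (fun _ => 0)) : iteratedFDeriv ℝ n f x = 0 := by
  have h' : f =ᶠ[𝓝[Set.univ] x] (fun _ => 0) := by rwa [nhdsWithin_univ]
  have h2 := Filter.EventuallyEq.iteratedFDerivWithin_eq (𝕜 := ℝ) h'
    (by simpa using h.eq_of_nhds) n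
  simp only [iteratedFDerivWithin_univ] at h2
  rw [h2, iteratedFDeriv_zero_fun]
  rfl

lemma helper_rpow {c R α : ℝ} {P : ℕ} (hR : 1 ≤ R) (h1 : R⁻¹ ≤ c) (h2 : c ≤ R)
    (hα : |α| ≤ P) (hc : 0 < c) : c ^ α ≤ R ^ P := by
  have hR0 : 0 < R := lt_of_lt_of_le one_pos hR
  have key : c ^ α ≤ R ^ (|α|) := by
    rcases le_total 1 c with h | h
    · calc c ^ α ≤ c ^ |α| := Real.rpow_le_rpow_of_exponent_le h (le_abs_self α)
        _ ≤ R ^ |α| := Real.rpow_le_rpow (le_trans zero_le_one h) h2 (abs_nonneg α)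
    · calc c ^ α ≤ c ^ (-|α|) := Real.rpow_le_rpow_of_exponent_ge hc h (neg_abs_le α)
        _ = (c⁻¹) ^ |α| := by rw [Real.rpow_neg hc.le, ← Real.inv_rpow hc.le]
        _ ≤ R ^ |α| := by
            apply Real.rpow_le_rpow (by positivity) _ (abs_nonneg α)
            rw [← inv_inv R]
            exact inv_anti₀ (by positivity) h1
  calc c ^ α ≤ R ^ (|α|) := key
    _ ≤ R ^ (P : ℝ) := Real.rpow_le_rpow_of_exponent_le hR hα
    _ = R ^ P := by rw [Real.rpow_natCast]

set_option maxHeartbeats 2000000 in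
theorem statement_17_aux {EE : Type*} [NormedAddCommGroup EE] [InnerProductSpace ℝ EE]
    [FiniteDimensional ℝ EE] (α : ℝ)
    (u : ℝ → EE → ℂ)
    (hu : IsModerate ({0}ᶜ : Set EE) u)
    (hhom : ∀ lam : ℝ, 0 < lam →
      IsNegligible ({0}ᶜ : Set EE)
        (fun ε x => u ε (lam • x) - ((lam ^ α : ℝ) : ℂ) * u ε x)) :
    ∃ v : ℝ → EE → ℂ, TemperedModerate v ∧
      IsNegligible ({0}ᶜ : Set EE)
        (fun ε x => v ε x - u ε x) := by
  have hΩ : IsOpen ({0}ᶜ : Set EE) := isOpen_compl_singleton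
  have hUD : UniqueDiffOn ℝ ({0}ᶜ : Set EE) := hΩ.uniqueDiffOn
  set Ann : Set EE := Metric.closedBall 0 2 \ Metric.ball 0 1 with hAnn
  have hAnnC : IsCompact Ann := (isCompact_closedBall 0 2).diff Metric.isOpen_ball
  have hAnnm : ∀ x : EE, x ∈ Ann ↔ (1 ≤ ‖x‖ ∧ ‖x‖ ≤ 2) := by
    intro x
    simp only [hAnn, Set.mem_diff, Metric.mem_closedBall, Metric.mem_ball,
      dist_zero_right, not_lt]
    tauto
  have hAnnΩ : Ann ⊆ ({0}ᶜ : Set EE) := by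
    intro x hx
    have h1 := ((hAnnm x).1 hx).1
    simp only [Set.mem_compl_iff, Set.mem_singleton_iff]
    intro h0
    rw [h0, norm_zero] at h1; linarith
  -- Step 1 : moderateness constants on the annulus
  obtain ⟨N₀, C₀, η₀, hη₀, hbd₀⟩ :
      ∃ (N₀ : ℕ → ℕ) (C₀ η₀ : ℕ → ℝ), (∀ j, 0 < η₀ j) ∧
        ∀ j (ε : ℝ), 0 < ε → ε < η₀ j → ∀ x ∈ Ann,
          ‖iteratedFDerivWithin ℝ j (u ε) ({0}ᶜ : Set EE) x‖ ≤ C₀ j * ε ^ (-(N₀ j : ℤ)) := by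
    choose N₀ C₀ η₀ hη₀ h using fun j => hu.2 Ann hAnnC hAnnΩ j
    exact ⟨N₀, C₀, η₀, hη₀, h⟩
  -- Step 2 : homogeneity constants on the annulus, lam = 2^k
  obtain ⟨C₁, η₁, hη₁, hbd₁⟩ :
      ∃ (C₁ η₁ : ℤ → ℕ → ℝ), (∀ k j, 0 < η₁ k j) ∧
        ∀ (k : ℤ) (j : ℕ) (ε : ℝ), 0 < ε → ε < η₁ k j → ∀ x ∈ Ann,
          ‖iteratedFDerivWithin ℝ j
            (fun z => u ε (((2:ℝ)^k) • z) - (((((2:ℝ)^k)) ^ α : ℝ) : ℂ) * u ε z)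
            ({0}ᶜ : Set EE) x‖ ≤ C₁ k j := by
    have h := fun (k : ℤ) (j : ℕ) =>
      (hhom ((2:ℝ)^k) (zpow_pos two_pos k)).2 Ann hAnnC hAnnΩ j 0
    choose C₁ η₁ hη₁ h using h
    refine ⟨C₁, η₁, hη₁, fun k j ε hε hε' x hx => ?_⟩
    simpa using h k j ε hε hε' x hx
  -- Step 3 : the threshold sequence δ and the scale selector mfun
  classical
  set gfun : ℕ × ℤ → ℝ := fun p =>
    min (η₀ p.1) (min (η₁ p.2 p.1) (1 / (1 + |C₁ p.2 p.1|))) with hgfun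
  have hgpos : ∀ p, 0 < gfun p := by
    intro p
    refine lt_min (hη₀ _) (lt_min (hη₁ _ _) ?_)
    positivity
  have hprodne : ∀ m : ℕ, ((Finset.range (m+1)) ×ˢ
      (Finset.Icc (-(m:ℤ)-2) ((m:ℤ)+2))).Nonempty := by
    intro m
    refine ⟨(0, 0), Finset.mem_product.2 ⟨?_, ?_⟩⟩
    · simp
    · simp only [Finset.mem_Icc]; omega
  set δ : ℕ → ℝ := fun m =>
    min ((2:ℝ) ^ (-(m:ℤ)))
      (((Finset.range (m+1)) ×ˢ (Finset.Icc (-(m:ℤ)-2) ((m:ℤ)+2))).inf' (hprodne m) gfun)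
    with hδdef
  have hδpos : ∀ m, 0 < δ m := by
    intro m
    refine lt_min (by positivity) ?_
    rw [Finset.lt_inf'_iff]
    exact fun p _ => hgpos p
  have hδ2 : ∀ m, δ m ≤ (2:ℝ) ^ (-(m:ℤ)) := fun m => min_le_left _ _
  have hδg : ∀ (m j : ℕ) (k : ℤ), j ≤ m → -(m:ℤ)-2 ≤ k → k ≤ (m:ℤ)+2 →
      δ m ≤ gfun (j, k) := by
    intro m j k hj hk1 hk2
    refine (min_le_right _ _).trans (Finset.inf'_le _ ?_)
    refine Finset.mem_product.2 ⟨?_, ?_⟩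
    · simp only [Finset.mem_range]; omega
    · simp only [Finset.mem_Icc]; exact ⟨hk1, hk2⟩
  set S : ℝ → Set ℕ := fun ε => {m : ℕ | ∀ m' ≤ m, ε < δ m'} with hSdef
  set mfun : ℝ → ℕ := fun ε => sSup (S ε) with hmfun
  have hSbdd : ∀ {ε : ℝ}, 0 < ε → BddAbove (S ε) := by
    intro ε hε
    refine ⟨⌊ε⁻¹⌋₊, fun m hm => ?_⟩
    have h1 : ε < δ m := hm m le_rfl
    have h2 : δ m ≤ (2:ℝ) ^ (-(m:ℤ)) := hδ2 m
    have h3 : ((m:ℝ)+1) ≤ 2 ^ m := by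
      have := Nat.lt_two_pow_self (n := m)
      exact_mod_cast Nat.succ_le_of_lt this
    have h4 : (2:ℝ) ^ (-(m:ℤ)) = ((2:ℝ)^m)⁻¹ := by
      rw [zpow_neg, zpow_natCast]
    have h5 : ε < ((m:ℝ)+1)⁻¹ := by
      rw [h4] at h2
      calc ε < ((2:ℝ)^m)⁻¹ := lt_of_lt_of_le h1 h2
        _ ≤ ((m:ℝ)+1)⁻¹ := by
            apply inv_anti₀ (by positivity) h3
    have h6 : (m:ℝ) ≤ ε⁻¹ := by
      have h7 : (m:ℝ)+1 < ε⁻¹ := by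
        have := (inv_lt_inv₀ (by positivity) hε).mpr h5
        simpa using this
      linarith
    exact Nat.le_floor h6
  have Ffact1 : ∀ {ε : ℝ} {M : ℕ}, 0 < ε → (∀ m' ≤ M, ε < δ m') → M ≤ mfun ε := by
    intro ε M hε h
    exact le_csSup (hSbdd hε) h
  have Ffact2 : ∀ {ε : ℝ}, 0 < ε → ε < δ 0 → ∀ m' ≤ mfun ε, ε < δ m' := by
    intro ε hε h0
    have hne : (S ε).Nonempty := ⟨0, fun m' hm' => by
      have : m' = 0 := Nat.le_zero.mp hm'
      rw [this]; exact h0⟩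
    exact Nat.sSup_mem hne (hSbdd hε)
  -- Step 4 : bump function and cutoffs
  set b : ContDiffBump (0 : EE) := ⟨1, 2, one_pos, one_lt_two⟩ with hbdef
  obtain ⟨B, hB⟩ : ∃ B : ℕ → ℝ, ∀ p y, ‖iteratedFDeriv ℝ p (⇑b) y‖ ≤ B p := by
    have h : ∀ p : ℕ, ∃ Bp : ℝ, ∀ y, ‖iteratedFDeriv ℝ p (⇑b) y‖ ≤ Bp := by
      intro p
      have hc : Continuous (iteratedFDeriv ℝ p (⇑b)) :=
        (b.contDiff (n := (⊤:ℕ∞))).continuous_iteratedFDeriv (by exact_mod_cast le_top)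
      have hcs : HasCompactSupport (iteratedFDeriv ℝ p (⇑b)) :=
        (b.hasCompactSupport).iteratedFDeriv p
      exact hc.bounded_above_of_compact_support hcs
    choose B hB using h
    exact ⟨B, hB⟩
  have hBnn : ∀ p, 0 ≤ B p := fun p => (norm_nonneg _).trans (hB p 0)
  have hbsm : ∀ c : ℝ, ContDiff ℝ (⊤:ℕ∞) (fun y : EE => b (c • y)) := by
    intro c
    exact (b.contDiff).comp (contDiff_id.const_smul c)
  -- derivative bound for scaled bump
  have hsb : ∀ (c : ℝ), c ≠ 0 → ∀ (p : ℕ) (x : EE),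
      ‖iteratedFDeriv ℝ p (fun y : EE => b (c • y)) x‖ ≤ B p * |c| ^ p := by
    intro c hc p x
    calc ‖iteratedFDeriv ℝ p (fun y : EE => b (c • y)) x‖
        ≤ |c| ^ p * ‖iteratedFDeriv ℝ p (⇑b) (c • x)‖ := scale_bound_univ (⇑b) hc x p
      _ ≤ |c| ^ p * B p := by
          exact mul_le_mul_of_nonneg_left (hB p _) (by positivity)
      _ = B p * |c| ^ p := mul_comm _ _
  -- derivative bound for 1 - scaled bump
  have hι : ∀ (c : ℝ), c ≠ 0 → ∀ (p : ℕ) (x : EE),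
      ‖iteratedFDeriv ℝ p (fun y : EE => 1 - b (c • y)) x‖ ≤ (1 + B p) * |c| ^ p := by
    intro c hc p x
    match p with
    | 0 =>
      rw [norm_iteratedFDeriv_zero]
      have h1 : (0:ℝ) ≤ b (c • x) := b.nonneg
      have h2 : b (c • x) ≤ 1 := b.le_one
      rw [pow_zero, mul_one]
      rw [Real.norm_eq_abs, abs_le]
      constructor <;> [linarith [hBnn 0]; linarith [hBnn 0]]
    | (q+1) =>
      have hfe : (fun y : EE => 1 - b (c • y)) =
          (fun y : EE => -(b (c • y))) + (fun _ : EE => (1:ℝ)) := by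
        funext y; simp [sub_eq_neg_add]
      rw [hfe]
      rw [iteratedFDeriv_add_apply (i := q+1) ((hbsm c).neg.of_le (by exact_mod_cast le_top)).contDiffAt
        (contDiff_const.of_le le_top).contDiffAt]
      rw [iteratedFDeriv_const_of_ne (Nat.succ_ne_zero q)]
      simp only [Pi.zero_apply, add_zero]
      have hneg : (fun y : EE => -(b (c • y))) = -(fun y : EE => b (c • y)) := rfl
      rw [hneg, iteratedFDeriv_neg_apply, norm_neg]
      calc ‖iteratedFDeriv ℝ (q+1) (fun y : EE => b (c • y)) x‖
          ≤ B (q+1) * |c| ^ (q+1) := hsb c hc (q+1) x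
        _ ≤ (1 + B (q+1)) * |c| ^ (q+1) := by
            apply mul_le_mul_of_nonneg_right (by linarith) (by positivity)
  -- the cutoff
  set φ : ℕ → EE → ℝ := fun m x =>
    (1 - b ((2:ℝ)^(m:ℤ) • x)) * b ((2:ℝ)^(-(m:ℤ)) • x) with hφdef
  have hφsm : ∀ m, ContDiff ℝ (⊤:ℕ∞) (φ m) := by
    intro m
    exact (contDiff_const.sub (hbsm _)).mul (hbsm _)
  have hφ0 : ∀ (m : ℕ) (x : EE), ‖x‖ < (2:ℝ)^(-(m:ℤ)) → φ m x = 0 := by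
    intro m x hx
    have h1 : b ((2:ℝ)^(m:ℤ) • x) = 1 := by
      apply b.one_of_mem_closedBall
      rw [Metric.mem_closedBall, dist_zero_right, norm_smul, Real.norm_eq_abs,
        abs_of_pos (by positivity : (0:ℝ) < (2:ℝ)^(m:ℤ))]
      have : (2:ℝ)^(m:ℤ) * ‖x‖ < (2:ℝ)^(m:ℤ) * (2:ℝ)^(-(m:ℤ)) := by
        exact mul_lt_mul_of_pos_left hx (by positivity)
      rw [← zpow_add₀ (by norm_num : (2:ℝ) ≠ 0)] at this
      simpa using this.le
    show (1 - b ((2:ℝ)^(m:ℤ) • x)) * b ((2:ℝ)^(-(m:ℤ)) • x) = 0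
    rw [h1]; ring
  have hφfar : ∀ (m : ℕ) (x : EE), (2:ℝ)^((m:ℤ)+1) < ‖x‖ → φ m x = 0 := by
    intro m x hx
    have h1 : b ((2:ℝ)^(-(m:ℤ)) • x) = 0 := by
      apply b.zero_of_le_dist
      rw [dist_zero_right, norm_smul, Real.norm_eq_abs,
        abs_of_pos (by positivity : (0:ℝ) < (2:ℝ)^(-(m:ℤ)))]
      show (2:ℝ) ≤ _
      have : (2:ℝ)^(-(m:ℤ)) * (2:ℝ)^((m:ℤ)+1) ≤ (2:ℝ)^(-(m:ℤ)) * ‖x‖ :=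
        mul_le_mul_of_nonneg_left hx.le (by positivity)
      rw [← zpow_add₀ (by norm_num : (2:ℝ) ≠ 0)] at this
      simpa using this
    show (1 - b ((2:ℝ)^(m:ℤ) • x)) * b ((2:ℝ)^(-(m:ℤ)) • x) = 0
    rw [h1]; ring
  have hφ1 : ∀ (m : ℕ) (x : EE), (2:ℝ)^(1-(m:ℤ)) ≤ ‖x‖ → ‖x‖ ≤ (2:ℝ)^(m:ℤ) →
      φ m x = 1 := by
    intro m x hx1 hx2
    have h1 : b ((2:ℝ)^(m:ℤ) • x) = 0 := by
      apply b.zero_of_le_dist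
      rw [dist_zero_right, norm_smul, Real.norm_eq_abs,
        abs_of_pos (by positivity : (0:ℝ) < (2:ℝ)^(m:ℤ))]
      show (2:ℝ) ≤ _
      have : (2:ℝ)^(m:ℤ) * (2:ℝ)^(1-(m:ℤ)) ≤ (2:ℝ)^(m:ℤ) * ‖x‖ :=
        mul_le_mul_of_nonneg_left hx1 (by positivity)
      rw [← zpow_add₀ (by norm_num : (2:ℝ) ≠ 0)] at this
      simpa using this
    have h2 : b ((2:ℝ)^(-(m:ℤ)) • x) = 1 := by
      apply b.one_of_mem_closedBall
      rw [Metric.mem_closedBall, dist_zero_right, norm_smul, Real.norm_eq_abs,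
        abs_of_pos (by positivity : (0:ℝ) < (2:ℝ)^(-(m:ℤ)))]
      have : (2:ℝ)^(-(m:ℤ)) * ‖x‖ ≤ (2:ℝ)^(-(m:ℤ)) * (2:ℝ)^(m:ℤ) :=
        mul_le_mul_of_nonneg_left hx2 (by positivity)
      rw [← zpow_add₀ (by norm_num : (2:ℝ) ≠ 0)] at this
      simpa using this
    show (1 - b ((2:ℝ)^(m:ℤ) • x)) * b ((2:ℝ)^(-(m:ℤ)) • x) = 1
    rw [h1, h2]; norm_num
  have hφd : ∀ (m i : ℕ) (x : EE), ‖iteratedFDeriv ℝ i (φ m) x‖ ≤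
      (∑ p ∈ Finset.range (i+1), (i.choose p : ℝ) * ((1 + B p) * (1 + B (i - p)))) *
        ((2:ℝ)^(m:ℤ))^i := by
    intro m i x
    have h2p : (0:ℝ) < (2:ℝ)^(m:ℤ) := by positivity
    have h2n : (0:ℝ) < (2:ℝ)^(-(m:ℤ)) := by positivity
    have h21 : (1:ℝ) ≤ (2:ℝ)^(m:ℤ) := one_le_zpow₀ one_le_two (by positivity)
    have h2n1 : (2:ℝ)^(-(m:ℤ)) ≤ 1 := by
      rw [zpow_neg]
      exact inv_le_one_of_one_le₀ h21
    have hfeq : φ m = fun y => (1 - b ((2:ℝ)^(m:ℤ) • y)) • (b ((2:ℝ)^(-(m:ℤ)) • y)) := by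
      funext y; rw [smul_eq_mul]
    rw [hfeq]
    have hsmul := norm_iteratedFDeriv_smul_le (𝕜 := ℝ) (𝕜' := ℝ)
      (f := fun y : EE => 1 - b ((2:ℝ)^(m:ℤ) • y))
      (g := fun y : EE => b ((2:ℝ)^(-(m:ℤ)) • y))
      (N := ((i:ℕ∞) : WithTop ℕ∞))
      ((contDiff_const.sub (hbsm _)).of_le (by exact_mod_cast le_top))
      ((hbsm _).of_le (by exact_mod_cast le_top)) x (le_refl _)
    refine hsmul.trans ?_
    rw [Finset.sum_mul]
    apply Finset.sum_le_sum
    intro p hp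
    have hpi : p ≤ i := Nat.lt_succ_iff.mp (Finset.mem_range.mp hp)
    have e1 : ‖iteratedFDeriv ℝ p (fun y : EE => 1 - b ((2:ℝ)^(m:ℤ) • y)) x‖ ≤
        (1 + B p) * ((2:ℝ)^(m:ℤ))^i := by
      refine (hι _ (ne_of_gt h2p) p x).trans ?_
      rw [abs_of_pos h2p]
      exact mul_le_mul_of_nonneg_left (pow_le_pow_right₀ h21 hpi)
        (by linarith [hBnn p])
    have e2 : ‖iteratedFDeriv ℝ (i - p) (fun y : EE => b ((2:ℝ)^(-(m:ℤ)) • y)) x‖ ≤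
        (1 + B (i - p)) := by
      refine (hsb _ (ne_of_gt h2n) (i - p) x).trans ?_
      rw [abs_of_pos h2n]
      calc B (i-p) * ((2:ℝ)^(-(m:ℤ)))^(i-p) ≤ B (i-p) * 1 := by
            exact mul_le_mul_of_nonneg_left
              (pow_le_one₀ (le_of_lt h2n) h2n1) (hBnn _)
        _ ≤ 1 + B (i - p) := by linarith [hBnn (i-p)]
    calc (i.choose p : ℝ) *
          ‖iteratedFDeriv ℝ p (fun y : EE => 1 - b ((2:ℝ)^(m:ℤ) • y)) x‖ *
          ‖iteratedFDeriv ℝ (i - p) (fun y : EE => b ((2:ℝ)^(-(m:ℤ)) • y)) x‖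
        ≤ (i.choose p : ℝ) * ((1 + B p) * ((2:ℝ)^(m:ℤ))^i) * (1 + B (i - p)) := by
          apply mul_le_mul
          · exact mul_le_mul_of_nonneg_left e1 (by positivity)
          · exact e2
          · exact norm_nonneg _
          · exact mul_nonneg (Nat.cast_nonneg _)
              (mul_nonneg (by linarith [hBnn p]) (by positivity))
      _ = (i.choose p : ℝ) * ((1 + B p) * (1 + B (i - p))) * ((2:ℝ)^(m:ℤ))^i := by ring
  -- Step 5 : the key estimate for u on dyadic annuli in the active window
  set Pn : ℕ := ⌈|α|⌉₊ with hPndef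
  have hPα : |α| ≤ (Pn : ℝ) := Nat.le_ceil _
  have key_u : ∀ (j mm : ℕ) (ε : ℝ), 0 < ε → j ≤ mm → (∀ m' ≤ mm, ε < δ m') →
      ∀ x : EE, (2:ℝ)^(-(mm:ℤ)) ≤ ‖x‖ → ‖x‖ ≤ (2:ℝ)^((mm:ℤ)+1) →
      ‖iteratedFDerivWithin ℝ j (u ε) ({0}ᶜ : Set EE) x‖ ≤
        (1 + 2^Pn * (1 + |C₀ j|)) * (ε⁻¹)^(j+1+Pn+N₀ j) := by
    intro j mm ε hε hjm hδs x hxl hxu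
    have hε1 : ε < 1 := by
      have := lt_of_lt_of_le (hδs 0 (Nat.zero_le _)) (hδ2 0)
      simpa using this
    have hT1 : (1:ℝ) ≤ ε⁻¹ := by
      rw [le_inv_comm₀ one_pos hε]
      simpa using hε1.le
    have hεδm : ε < δ mm := hδs mm le_rfl
    have h2mT : (2:ℝ)^(mm:ℤ) ≤ ε⁻¹ := by
      have h : ε < (2:ℝ)^(-(mm:ℤ)) := lt_of_lt_of_le hεδm (hδ2 mm)
      rw [zpow_neg] at h
      have h2 : (0:ℝ) < (2:ℝ)^(mm:ℤ) := by positivity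
      have := inv_anti₀ hε h.le
      rwa [inv_inv] at this
    have hx0 : 0 < ‖x‖ := lt_of_lt_of_le (by positivity) hxl
    have hxΩ : x ∈ ({0}ᶜ : Set EE) := by
      simp only [Set.mem_compl_iff, Set.mem_singleton_iff]
      intro h0; rw [h0, norm_zero] at hx0; exact lt_irrefl _ hx0
    set k : ℤ := Int.log 2 ‖x‖ with hkdef
    have hk1 : (2:ℝ)^k ≤ ‖x‖ := by
      have h := Int.zpow_log_le_self (R := ℝ) (b := 2) one_lt_two hx0
      rw [← hkdef] at h
      exact_mod_cast h
    have hk2 : ‖x‖ < (2:ℝ)^(k+1) := by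
      have h := Int.lt_zpow_succ_log_self (R := ℝ) (b := 2) one_lt_two ‖x‖
      rw [← hkdef] at h
      exact_mod_cast h
    have hklb : -(mm:ℤ) ≤ k := by
      have h := lt_of_le_of_lt hxl hk2
      have := (zpow_lt_zpow_iff_right₀ (a := (2:ℝ)) one_lt_two).mp h
      omega
    have hkub : k ≤ (mm:ℤ)+1 := by
      have h := le_trans hk1 hxu
      exact (zpow_le_zpow_iff_right₀ (a := (2:ℝ)) one_lt_two).mp h
    set c : ℝ := (2:ℝ)^k with hcdef
    have hc : 0 < c := by positivity
    set y : EE := c⁻¹ • x with hydef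
    have hyn : ‖y‖ = c⁻¹ * ‖x‖ := by
      rw [hydef, norm_smul, Real.norm_eq_abs, abs_of_pos (inv_pos.2 hc)]
    have hy1 : 1 ≤ ‖y‖ := by
      rw [hyn]
      calc (1:ℝ) = c⁻¹ * c := (inv_mul_cancel₀ (ne_of_gt hc)).symm
        _ ≤ c⁻¹ * ‖x‖ := mul_le_mul_of_nonneg_left hk1 (by positivity)
    have hy2 : ‖y‖ ≤ 2 := by
      rw [hyn]
      have h2c : (2:ℝ)^(k+1) = c * 2 := by rw [hcdef, zpow_add_one₀ (by norm_num)]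
      calc c⁻¹ * ‖x‖ ≤ c⁻¹ * (c * 2) := by
            apply mul_le_mul_of_nonneg_left _ (by positivity)
            rw [← h2c]; exact hk2.le
        _ = 2 := by field_simp
    have hyA : y ∈ Ann := (hAnnm y).2 ⟨hy1, hy2⟩
    have hyΩ : y ∈ ({0}ᶜ : Set EE) := hAnnΩ hyA
    have hxy : c • y = x := smul_inv_smul₀ (ne_of_gt hc) x
    -- thresholds
    have hgb : δ mm ≤ gfun (j, k) := hδg mm j k hjm (by omega) (by omega)
    have hεη₀ : ε < η₀ j := lt_of_lt_of_le hεδm (hgb.trans (min_le_left _ _))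
    have hεη₁ : ε < η₁ k j :=
      lt_of_lt_of_le hεδm (hgb.trans ((min_le_right _ _).trans (min_le_left _ _)))
    have hC₁T : C₁ k j ≤ ε⁻¹ := by
      have h := lt_of_lt_of_le hεδm
        (hgb.trans ((min_le_right _ _).trans (min_le_right _ _)))
      rw [one_div] at h
      have h2 : 1 + |C₁ k j| ≤ ε⁻¹ := by
        have := inv_anti₀ hε h.le
        rw [inv_inv] at this
        exact this
      calc C₁ k j ≤ |C₁ k j| := le_abs_self _
        _ ≤ ε⁻¹ := by linarith
    -- smoothness
    have hu1 : ContDiffOn ℝ (⊤:ℕ∞) (u ε) ({0}ᶜ : Set EE) := hu.1 ε ⟨hε, hε1.le⟩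
    have hmaps : ∀ z : EE, z ∈ ({0}ᶜ : Set EE) → c • z ∈ ({0}ᶜ : Set EE) := by
      intro z hz
      simp only [Set.mem_compl_iff, Set.mem_singleton_iff] at hz ⊢
      simp [smul_eq_zero, ne_of_gt hc, hz]
    have hGsm : ContDiffOn ℝ (⊤:ℕ∞) (fun z : EE => u ε (c • z)) ({0}ᶜ : Set EE) :=
      ContDiffOn.comp hu1 ((contDiff_id.const_smul c).contDiffOn) hmaps
    -- homogeneity bound at y
    have hW := hbd₁ k j ε hε hεη₁ y hyA
    rw [← hcdef] at hW
    -- moderate bound at y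
    have hM := hbd₀ j ε hε hεη₀ y hyA
    -- decompose G = W + Cα * u
    have hadd : iteratedFDerivWithin ℝ j (fun z : EE => u ε (c • z)) ({0}ᶜ : Set EE) y =
        iteratedFDerivWithin ℝ j
          (fun z : EE => u ε (c • z) - ((c ^ α : ℝ) : ℂ) * u ε z) ({0}ᶜ : Set EE) y +
        ((c ^ α : ℝ) : ℂ) • iteratedFDerivWithin ℝ j (u ε) ({0}ᶜ : Set EE) y := by
      have hsplit : (fun z : EE => u ε (c • z)) =
          (fun z : EE => (fun z' : EE => u ε (c • z') - ((c ^ α : ℝ) : ℂ) * u ε z') z +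
            (fun z' : EE => ((c ^ α : ℝ) : ℂ) * u ε z') z) := by
        funext z; simp
      rw [hsplit]
      rw [iteratedFDerivWithin_add_apply' (i := j)
        (((hGsm.sub (contDiffOn_const.mul hu1)).of_le (by exact_mod_cast le_top)) y hyΩ)
        (((contDiffOn_const.mul hu1).of_le (by exact_mod_cast le_top)) y hyΩ) hUD hyΩ]
      congr 1
      have h1 : (fun z' : EE => ((c ^ α : ℝ) : ℂ) * u ε z') =
          ((c ^ α : ℝ) : ℂ) • (u ε) := by
        funext z; simp [Pi.smul_apply, smul_eq_mul]
      rw [h1]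
      exact iteratedFDerivWithin_const_smul_apply
        ((hu1.of_le (by exact_mod_cast le_top)) y hyΩ) hUD hyΩ
    have hCαnorm : ‖((c ^ α : ℝ) : ℂ)‖ = c ^ α := by
      rw [Complex.norm_real, Real.norm_eq_abs, abs_of_nonneg (Real.rpow_nonneg hc.le α)]
    have hGbd : ‖iteratedFDerivWithin ℝ j (fun z : EE => u ε (c • z)) ({0}ᶜ : Set EE) y‖ ≤
        C₁ k j + c ^ α * (C₀ j * ε ^ (-(N₀ j : ℤ))) := by
      rw [hadd]
      refine (norm_add_le _ _).trans ?_
      apply add_le_add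
      · simpa using hW
      · refine (norm_smul_le (((c ^ α : ℝ) : ℂ))
          (iteratedFDerivWithin ℝ j (u ε) ({0}ᶜ : Set EE) y)).trans ?_
        rw [hCαnorm]
        exact mul_le_mul_of_nonneg_left hM (Real.rpow_nonneg hc.le α)
    -- transfer from y to x
    have htrans : ‖iteratedFDerivWithin ℝ j (u ε) ({0}ᶜ : Set EE) x‖ ≤
        (c⁻¹)^j * ‖iteratedFDerivWithin ℝ j (fun z : EE => u ε (c • z)) ({0}ᶜ : Set EE) y‖ := by
      have hfeq : (u ε) = fun z : EE => (fun w : EE => u ε (c • w)) (c⁻¹ • z) := by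
        funext z
        simp only [smul_inv_smul₀ (ne_of_gt hc)]
      have hpre : (fun z : EE => c⁻¹ • z) ⁻¹' ({0}ᶜ : Set EE) = ({0}ᶜ : Set EE) := by
        ext z
        simp [smul_eq_zero, inv_ne_zero (ne_of_gt hc)]
      have hmem : c⁻¹ • x ∈ ({0}ᶜ : Set EE) := hyΩ
      have hsc := scale_bound (f := fun w : EE => u ε (c • w)) (c := c⁻¹)
        (inv_ne_zero (ne_of_gt hc)) hUD hpre hmem j
      rw [abs_of_pos (inv_pos.2 hc)] at hsc
      calc ‖iteratedFDerivWithin ℝ j (u ε) ({0}ᶜ : Set EE) x‖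
          = ‖iteratedFDerivWithin ℝ j
              (fun z : EE => (fun w : EE => u ε (c • w)) (c⁻¹ • z)) ({0}ᶜ : Set EE) x‖ := by
            rw [← hfeq]
        _ ≤ (c⁻¹)^j * ‖iteratedFDerivWithin ℝ j (fun w : EE => u ε (c • w))
              ({0}ᶜ : Set EE) (c⁻¹ • x)‖ := hsc
        _ = (c⁻¹)^j * ‖iteratedFDerivWithin ℝ j (fun w : EE => u ε (c • w))
              ({0}ᶜ : Set EE) y‖ := by rw [← hydef]
    -- numeric bounds
    have hcinvT : c⁻¹ ≤ ε⁻¹ := by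
      have h1 : (2:ℝ)^(-(mm:ℤ)) ≤ c := by
        rw [hcdef]
        exact zpow_le_zpow_right₀ one_le_two hklb
      have h2 : c⁻¹ ≤ ((2:ℝ)^(-(mm:ℤ)))⁻¹ := inv_anti₀ (by positivity) h1
      rw [zpow_neg, inv_inv] at h2
      exact h2.trans h2mT
    have hcα : c ^ α ≤ 2^Pn * (ε⁻¹)^Pn := by
      have hR : (1:ℝ) ≤ (2:ℝ)^((mm:ℤ)+1) := one_le_zpow₀ one_le_two (by omega)
      have hrp := helper_rpow (c := c) (R := (2:ℝ)^((mm:ℤ)+1)) (α := α) (P := Pn)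
        hR ?_ ?_ hPα hc
      · refine hrp.trans ?_
        have hbase : (2:ℝ)^((mm:ℤ)+1) ≤ 2 * ε⁻¹ := by
          rw [zpow_add_one₀ (by norm_num : (2:ℝ) ≠ 0)]
          calc (2:ℝ)^(mm:ℤ) * 2 ≤ ε⁻¹ * 2 := mul_le_mul_of_nonneg_right h2mT (by norm_num)
            _ = 2 * ε⁻¹ := mul_comm _ _
        calc ((2:ℝ)^((mm:ℤ)+1))^Pn ≤ (2 * ε⁻¹)^Pn :=
              pow_le_pow_left₀ (by positivity) hbase Pn
          _ = 2^Pn * (ε⁻¹)^Pn := mul_pow _ _ _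
      · rw [← zpow_neg, hcdef]
        exact zpow_le_zpow_right₀ one_le_two (by omega)
      · rw [hcdef]
        exact zpow_le_zpow_right₀ one_le_two hkub
    have hzpow : ε ^ (-(N₀ j : ℤ)) = (ε⁻¹)^(N₀ j) := by
      rw [zpow_neg, zpow_natCast, inv_pow]
    -- final assembly
    set T : ℝ := ε⁻¹ with hTdef
    have hTnn : (0:ℝ) ≤ T := by positivity
    have hA1 : T ≤ T^(1+Pn+N₀ j) := le_self_pow₀ hT1 (by omega)
    have hA2 : T^Pn * T^(N₀ j) ≤ T^(1+Pn+N₀ j) := by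
      rw [← pow_add]
      exact pow_le_pow_right₀ hT1 (by omega)
    have hC₀ : C₀ j ≤ 1 + |C₀ j| := by
      have := le_abs_self (C₀ j); linarith
    have hsum : C₁ k j + c ^ α * (C₀ j * ε ^ (-(N₀ j : ℤ))) ≤
        (1 + 2^Pn * (1 + |C₀ j|)) * T^(1+Pn+N₀ j) := by
      rw [hzpow]
      have e1 : c ^ α * (C₀ j * T^(N₀ j)) ≤
          (2^Pn * T^Pn) * ((1 + |C₀ j|) * T^(N₀ j)) := by
        calc c ^ α * (C₀ j * T^(N₀ j)) ≤ c ^ α * ((1 + |C₀ j|) * T^(N₀ j)) := by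
              apply mul_le_mul_of_nonneg_left _ (Real.rpow_nonneg hc.le α)
              exact mul_le_mul_of_nonneg_right hC₀ (by positivity)
          _ ≤ (2^Pn * T^Pn) * ((1 + |C₀ j|) * T^(N₀ j)) := by
              apply mul_le_mul_of_nonneg_right hcα
              have := abs_nonneg (C₀ j); positivity
      have e2 : (2^Pn * T^Pn) * ((1 + |C₀ j|) * T^(N₀ j)) =
          (2^Pn * (1 + |C₀ j|)) * (T^Pn * T^(N₀ j)) := by ring
      have e3 : (2^Pn * (1 + |C₀ j|)) * (T^Pn * T^(N₀ j)) ≤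
          (2^Pn * (1 + |C₀ j|)) * T^(1+Pn+N₀ j) := by
        apply mul_le_mul_of_nonneg_left hA2
        have := abs_nonneg (C₀ j); positivity
      have e4 : C₁ k j ≤ T^(1+Pn+N₀ j) := hC₁T.trans hA1
      calc C₁ k j + c ^ α * (C₀ j * T^(N₀ j))
          ≤ T^(1+Pn+N₀ j) + (2^Pn * (1 + |C₀ j|)) * T^(1+Pn+N₀ j) := by
            refine add_le_add e4 (e1.trans ?_)
            rw [e2]; exact e3
        _ = (1 + 2^Pn * (1 + |C₀ j|)) * T^(1+Pn+N₀ j) := by ring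
    have hfinal : (c⁻¹)^j * (C₁ k j + c ^ α * (C₀ j * ε ^ (-(N₀ j : ℤ)))) ≤
        (1 + 2^Pn * (1 + |C₀ j|)) * T^(j+1+Pn+N₀ j) := by
      have hpow : (c⁻¹)^j ≤ T^j := pow_le_pow_left₀ (by positivity) hcinvT j
      have hrhs_nn : (0:ℝ) ≤ (1 + 2^Pn * (1 + |C₀ j|)) * T^(1+Pn+N₀ j) := by
        have := abs_nonneg (C₀ j); positivity
      calc (c⁻¹)^j * (C₁ k j + c ^ α * (C₀ j * ε ^ (-(N₀ j : ℤ))))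
          ≤ (c⁻¹)^j * ((1 + 2^Pn * (1 + |C₀ j|)) * T^(1+Pn+N₀ j)) :=
            mul_le_mul_of_nonneg_left hsum (by positivity)
        _ ≤ T^j * ((1 + 2^Pn * (1 + |C₀ j|)) * T^(1+Pn+N₀ j)) :=
            mul_le_mul_of_nonneg_right hpow hrhs_nn
        _ = (1 + 2^Pn * (1 + |C₀ j|)) * (T^j * T^(1+Pn+N₀ j)) := by ring
        _ = (1 + 2^Pn * (1 + |C₀ j|)) * T^(j+1+Pn+N₀ j) := by
            rw [← pow_add, show j + (1+Pn+N₀ j) = j+1+Pn+N₀ j by omega]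
    calc ‖iteratedFDerivWithin ℝ j (u ε) ({0}ᶜ : Set EE) x‖
        ≤ (c⁻¹)^j * ‖iteratedFDerivWithin ℝ j (fun z : EE => u ε (c • z))
            ({0}ᶜ : Set EE) y‖ := htrans
      _ ≤ (c⁻¹)^j * (C₁ k j + c ^ α * (C₀ j * ε ^ (-(N₀ j : ℤ)))) :=
          mul_le_mul_of_nonneg_left hGbd (by positivity)
      _ ≤ (1 + 2^Pn * (1 + |C₀ j|)) * (ε⁻¹)^(j+1+Pn+N₀ j) := hfinal
  -- Step 6 : definition of v and conclusion
  set v : ℝ → EE → ℂ := fun ε x => φ (mfun ε) x • u ε x with hvdef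
  have hvsm : ∀ ε ∈ Set.Ioc (0:ℝ) 1, ContDiff ℝ (⊤:ℕ∞) (v ε) := by
    intro ε hεI
    rw [contDiff_iff_contDiffAt]
    intro x
    by_cases hx : ‖x‖ < (2:ℝ)^(-(mfun ε : ℤ))
    · have hopen : IsOpen {y : EE | ‖y‖ < (2:ℝ)^(-(mfun ε:ℤ))} :=
        isOpen_lt continuous_norm continuous_const
      have hev : v ε =ᶠ[𝓝 x] (fun _ => (0:ℂ)) := by
        filter_upwards [hopen.mem_nhds hx] with y hy
        show φ (mfun ε) y • u ε y = 0
        rw [hφ0 (mfun ε) y hy, zero_smul]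
      exact (contDiffAt_const (c := (0:ℂ))).congr_of_eventuallyEq hev
    · push_neg at hx
      have hx0 : x ∈ ({0}ᶜ : Set EE) := by
        simp only [Set.mem_compl_iff, Set.mem_singleton_iff]
        intro h0
        rw [h0, norm_zero] at hx
        exact absurd hx (not_le.2 (by positivity))
      have hux : ContDiffAt ℝ (⊤:ℕ∞) (u ε) x :=
        (hu.1 ε hεI).contDiffAt (hΩ.mem_nhds hx0)
      exact ((hφsm (mfun ε)).contDiffAt).smul hux
  -- auxiliary positivity
  set Φ : ℕ → ℝ := fun i =>
    ∑ p ∈ Finset.range (i+1), (i.choose p : ℝ) * ((1 + B p) * (1 + B (i - p))) with hΦdef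
  have hΦnn : ∀ i, 0 ≤ Φ i := by
    intro i
    apply Finset.sum_nonneg
    intro p _
    have h1 := hBnn p; have h2 := hBnn (i-p)
    positivity
  set U : ℕ → ℝ := fun j => 1 + 2^Pn * (1 + |C₀ j|) with hUdef
  have hUnn : ∀ j, 0 ≤ U j := by
    intro j
    have := abs_nonneg (C₀ j)
    positivity
  refine ⟨v, ⟨hvsm, ?_⟩, ?_, ?_⟩
  · -- tempered moderateness estimates
    intro n
    set NN : ℕ := n + 1 + Pn + ((Finset.range (n+1)).sup N₀) with hNNdef
    set CC : ℝ := ∑ i ∈ Finset.range (n+1), (n.choose i : ℝ) * Φ i * U (n-i) with hCCdef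
    have hCCnn : 0 ≤ CC := by
      apply Finset.sum_nonneg
      intro i _
      have h1 := hΦnn i; have h2 := hUnn (n-i)
      positivity
    have hε₀ne : (Finset.range (n+1)).Nonempty := ⟨0, by simp⟩
    refine ⟨NN, CC, (Finset.range (n+1)).inf' hε₀ne δ, ?_, ?_⟩
    · rw [Finset.lt_inf'_iff]
      exact fun i _ => hδpos i
    intro ε hε hεε₀ x
    have hδn : ∀ m' ≤ n, ε < δ m' := by
      intro m' hm'
      exact lt_of_lt_of_le hεε₀ (Finset.inf'_le δ (Finset.mem_range.2 (by omega)))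
    have hδ0 : ε < δ 0 := hδn 0 (Nat.zero_le _)
    have hnm : n ≤ mfun ε := Ffact1 hε hδn
    have hδs : ∀ m' ≤ mfun ε, ε < δ m' := Ffact2 hε hδ0
    have hε1 : ε < 1 := by
      have := lt_of_lt_of_le hδ0 (hδ2 0); simpa using this
    have hT1 : (1:ℝ) ≤ ε⁻¹ := by
      rw [le_inv_comm₀ one_pos hε]; simpa using hε1.le
    have h2mT : (2:ℝ)^((mfun ε):ℤ) ≤ ε⁻¹ := by
      have h : ε < (2:ℝ)^(-((mfun ε):ℤ)) := lt_of_lt_of_le (hδs _ le_rfl) (hδ2 _)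
      rw [zpow_neg] at h
      have := inv_anti₀ hε h.le
      rwa [inv_inv] at this
    have hεz : ε ^ (-(NN:ℤ)) = (ε⁻¹)^NN := by
      rw [zpow_neg, zpow_natCast, inv_pow]
    have hmain : ‖iteratedFDeriv ℝ n (v ε) x‖ ≤ CC * (ε⁻¹)^NN := by
      by_cases hxA : ‖x‖ < (2:ℝ)^(-((mfun ε):ℤ))
      · have hopen : IsOpen {y : EE | ‖y‖ < (2:ℝ)^(-((mfun ε):ℤ))} :=
          isOpen_lt continuous_norm continuous_const
        have hev : v ε =ᶠ[𝓝 x] (fun _ => (0:ℂ)) := by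
          filter_upwards [hopen.mem_nhds hxA] with y hy
          show φ (mfun ε) y • u ε y = 0
          rw [hφ0 (mfun ε) y hy, zero_smul]
        rw [iteratedFDeriv_eq_zero_of_eventuallyEq_zero hev, norm_zero]
        exact mul_nonneg hCCnn (by positivity)
      by_cases hxB : (2:ℝ)^(((mfun ε):ℤ)+1) < ‖x‖
      · have hopen : IsOpen {y : EE | (2:ℝ)^(((mfun ε):ℤ)+1) < ‖y‖} :=
          isOpen_lt continuous_const continuous_norm
        have hev : v ε =ᶠ[𝓝 x] (fun _ => (0:ℂ)) := by
          filter_upwards [hopen.mem_nhds hxB] with y hy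
          show φ (mfun ε) y • u ε y = 0
          rw [hφfar (mfun ε) y hy, zero_smul]
        rw [iteratedFDeriv_eq_zero_of_eventuallyEq_zero hev, norm_zero]
        exact mul_nonneg hCCnn (by positivity)
      push_neg at hxA hxB
      have hx0 : 0 < ‖x‖ := lt_of_lt_of_le (by positivity) hxA
      have hxΩ : x ∈ ({0}ᶜ : Set EE) := by
        simp only [Set.mem_compl_iff, Set.mem_singleton_iff]
        intro h0; rw [h0, norm_zero] at hx0; exact lt_irrefl _ hx0
      rw [← iteratedFDerivWithin_of_isOpen (f := v ε) n hΩ hxΩ]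
      have hu1 : ContDiffOn ℝ (⊤:ℕ∞) (u ε) ({0}ᶜ : Set EE) := hu.1 ε ⟨hε, hε1.le⟩
      have hveq : v ε = fun y : EE => φ (mfun ε) y • u ε y := rfl
      rw [hveq]
      have hsmul := norm_iteratedFDerivWithin_smul_le (𝕜 := ℝ) (𝕜' := ℝ)
        (f := φ (mfun ε)) (g := u ε) (N := ((n:ℕ∞) : WithTop ℕ∞))
        ((hφsm (mfun ε)).of_le (by exact_mod_cast le_top)).contDiffOn
        (hu1.of_le (by exact_mod_cast le_top)) hUD hxΩ (le_refl _)
      refine hsmul.trans ?_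
      rw [hCCdef, Finset.sum_mul]
      apply Finset.sum_le_sum
      intro i hi
      have hin : i ≤ n := Nat.lt_succ_iff.mp (Finset.mem_range.mp hi)
      have eφ : ‖iteratedFDerivWithin ℝ i (φ (mfun ε)) ({0}ᶜ : Set EE) x‖ ≤
          Φ i * (ε⁻¹)^i := by
        rw [iteratedFDerivWithin_of_isOpen (f := φ (mfun ε)) i hΩ hxΩ]
        refine (hφd (mfun ε) i x).trans ?_
        apply mul_le_mul_of_nonneg_left _ (hΦnn i)
        exact pow_le_pow_left₀ (by positivity) h2mT i
      have eu : ‖iteratedFDerivWithin ℝ (n-i) (u ε) ({0}ᶜ : Set EE) x‖ ≤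
          U (n-i) * (ε⁻¹)^((n-i)+1+Pn+N₀ (n-i)) :=
        key_u (n-i) (mfun ε) ε hε (by omega) hδs x hxA hxB
      have hexp : i + (((n-i)+1+Pn+N₀ (n-i))) ≤ NN := by
        have hmem : (n-i) ∈ Finset.range (n+1) := Finset.mem_range.2 (by omega)
        have := Finset.le_sup (f := N₀) hmem
        omega
      calc (n.choose i : ℝ) * ‖iteratedFDerivWithin ℝ i (φ (mfun ε)) ({0}ᶜ : Set EE) x‖ *
            ‖iteratedFDerivWithin ℝ (n-i) (u ε) ({0}ᶜ : Set EE) x‖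
          ≤ (n.choose i : ℝ) * (Φ i * (ε⁻¹)^i) *
            (U (n-i) * (ε⁻¹)^((n-i)+1+Pn+N₀ (n-i))) := by
            apply mul_le_mul
            · exact mul_le_mul_of_nonneg_left eφ (by positivity)
            · exact eu
            · exact norm_nonneg _
            · have h1 := hΦnn i
              positivity
        _ = (n.choose i : ℝ) * Φ i * U (n-i) *
              ((ε⁻¹)^i * (ε⁻¹)^((n-i)+1+Pn+N₀ (n-i))) := by ring
        _ ≤ (n.choose i : ℝ) * Φ i * U (n-i) * (ε⁻¹)^NN := by
            apply mul_le_mul_of_nonneg_left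
            · rw [← pow_add]
              exact pow_le_pow_right₀ hT1 hexp
            · have h1 := hΦnn i; have h2 := hUnn (n-i)
              positivity
    calc ‖iteratedFDeriv ℝ n (v ε) x‖ ≤ CC * (ε⁻¹)^NN := hmain
      _ = CC * ε ^ (-(NN:ℤ)) * 1 := by rw [hεz, mul_one]
      _ ≤ CC * ε ^ (-(NN:ℤ)) * (1 + ‖x‖)^NN := by
          apply mul_le_mul_of_nonneg_left
          · exact one_le_pow₀ (by linarith [norm_nonneg x])
          · exact mul_nonneg hCCnn (by positivity)
  · -- the difference is smooth on the complement of the origin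
    intro ε hεI
    exact ((hvsm ε hεI).contDiffOn).sub (hu.1 ε hεI)
  · -- negligibility of the difference
    intro K hK hKΩ n m
    by_cases hKne : K.Nonempty
    · obtain ⟨z, hzK, hzmin⟩ := hK.exists_isMinOn hKne continuous_norm.continuousOn
      obtain ⟨w, hwK, hwmax⟩ := hK.exists_isMaxOn hKne continuous_norm.continuousOn
      have hz0 : z ∈ ({0}ᶜ : Set EE) := hKΩ hzK
      have hr : 0 < ‖z‖ := by
        rw [norm_pos_iff]
        simpa using hz0
      obtain ⟨M₁, hM₁⟩ := pow_unbounded_of_one_lt (‖z‖)⁻¹ (one_lt_two (α := ℝ))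
      obtain ⟨M₂, hM₂⟩ := pow_unbounded_of_one_lt (‖w‖) (one_lt_two (α := ℝ))
      set M : ℕ := M₁ + M₂ + 1 with hMdef
      have hε₀ne : (Finset.range (M+1)).Nonempty := ⟨0, by simp⟩
      refine ⟨1, (Finset.range (M+1)).inf' hε₀ne δ, ?_, ?_⟩
      · rw [Finset.lt_inf'_iff]
        exact fun i _ => hδpos i
      intro ε hε hεε₀ x hxK
      have hδM : ∀ m' ≤ M, ε < δ m' := by
        intro m' hm'
        exact lt_of_lt_of_le hεε₀ (Finset.inf'_le δ (Finset.mem_range.2 (by omega)))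
      have hMm : M ≤ mfun ε := Ffact1 hε hδM
      have hxΩ : x ∈ ({0}ᶜ : Set EE) := hKΩ hxK
      -- x is in the region where the cutoff is 1
      have hx1 : (2:ℝ)^(1-((mfun ε):ℤ)) < ‖x‖ := by
        have e1 : (2:ℝ)^(1-((mfun ε):ℤ)) ≤ (2:ℝ)^(-(M₁:ℤ)) :=
          zpow_le_zpow_right₀ one_le_two (by omega)
        have e2 : (2:ℝ)^(-(M₁:ℤ)) < ‖z‖ := by
          rw [zpow_neg, zpow_natCast]
          rw [inv_lt_comm₀ (by positivity) hr]
          exact hM₁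
        have e3 : ‖z‖ ≤ ‖x‖ := hzmin hxK
        linarith
      have hx2 : ‖x‖ < (2:ℝ)^((mfun ε):ℤ) := by
        have e1 : ‖x‖ ≤ ‖w‖ := hwmax hxK
        have e2 : (‖w‖:ℝ) < 2^M₂ := hM₂
        have e3 : ((2:ℝ))^(M₂:ℕ) ≤ (2:ℝ)^((mfun ε):ℤ) := by
          rw [← zpow_natCast (2:ℝ) M₂]
          exact zpow_le_zpow_right₀ one_le_two (by omega)
        linarith
      have hopen : IsOpen {y : EE | (2:ℝ)^(1-((mfun ε):ℤ)) < ‖y‖ ∧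
          ‖y‖ < (2:ℝ)^((mfun ε):ℤ)} :=
        (isOpen_lt continuous_const continuous_norm).inter
          (isOpen_lt continuous_norm continuous_const)
      have hev : (fun y : EE => v ε y - u ε y) =ᶠ[𝓝 x] (fun _ => (0:ℂ)) := by
        filter_upwards [hopen.mem_nhds ⟨hx1, hx2⟩] with y hy
        show φ (mfun ε) y • u ε y - u ε y = 0
        rw [hφ1 (mfun ε) y hy.1.le hy.2.le, one_smul, sub_self]
      rw [iteratedFDerivWithin_of_isOpen (f := fun y : EE => v ε y - u ε y) n hΩ hxΩ]
      rw [iteratedFDeriv_eq_zero_of_eventuallyEq_zero hev, norm_zero]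
      positivity
    · refine ⟨1, 1, one_pos, fun ε hε hε1 x hx => absurd ⟨x, hx⟩ hKne⟩


/-- a generalized function on ℝ^d∖{0} homogeneous of degree `α` agrees on
ℝ^d∖{0} with (the class of) a tempered moderate net on ℝ^d. -/
theorem statement_17
    (d : ℕ) (α : ℝ)
    (u : ℝ → EuclideanSpace ℝ (Fin d) → ℂ)
    (hu : IsModerate ({0}ᶜ : Set (EuclideanSpace ℝ (Fin d))) u)
    (hhom : ∀ lam : ℝ, 0 < lam →
      IsNegligible ({0}ᶜ : Set (EuclideanSpace ℝ (Fin d)))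
        (fun ε x => u ε (lam • x) - ((lam ^ α : ℝ) : ℂ) * u ε x)) :
    ∃ v : ℝ → EuclideanSpace ℝ (Fin d) → ℂ, TemperedModerate v ∧
      IsNegligible ({0}ᶜ : Set (EuclideanSpace ℝ (Fin d)))
        (fun ε x => v ε x - u ε x) := by
  exact statement_17_aux α u hu hhom
end
end
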